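/- arXiv:1601.04162 — 6 statements merged into one kernel-verified Lean document; each statement's English description precedes it below -/
import Mathlib

section
/- If T is a tree with at least one edge, then pc(T) = χ'(T) = Δ(T), i.e., the proper connection number of a nontrivial tree equals its maximum degree, which also equals its edge-chromatic number. -/
open SimpleGraph

variable {V : Type*}

/-- A walk is proper w.r.t. an edge-coloring if consecutive edges get distinct colors. -/
def IsProperWalk {α : Type*} {G : SimpleGraph V} (c : Sym2 V → α) {u v : V} (p : G.Walk u v) : Prop :=
  p.edges.Chain' (fun e f => c e ≠ c f)

/-- An edge-coloring is a proper-path coloring if every pair of vertices is joined by a proper path. -/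
def IsProperConnColoring {α : Type*} (G : SimpleGraph V) (c : Sym2 V → α) : Prop :=
  ∀ u v : V, ∃ p : G.Walk u v, p.IsPath ∧ IsProperWalk c p

/-- The proper connection number. -/
noncomputable def pc (G : SimpleGraph V) : ℕ :=
  sInf {k | ∃ c : Sym2 V → Fin k, IsProperConnColoring G c}

/-- Strong property of an edge-coloring. -/
def HasStrongProp {α : Type*} (G : SimpleGraph V) (c : Sym2 V → α) : Prop :=
  IsProperConnColoring G c ∧
  ∀ u v : V, u ≠ v → ∃ p₁ p₂ : G.Walk u v, p₁.IsPath ∧ p₂.IsPath ∧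
    IsProperWalk c p₁ ∧ IsProperWalk c p₂ ∧
    p₁.edges.head?.map c ≠ p₂.edges.head?.map c ∧
    p₁.edges.getLast?.map c ≠ p₂.edges.getLast?.map c

/-- k-connectedness. -/
def KConnected (k : ℕ) (G : SimpleGraph V) [Fintype V] : Prop :=
  k < Fintype.card V ∧ ∀ S : Finset V, S.card < k → (G.induce ((↑S : Set V)ᶜ)).Connected

/-- edge chromatic number -/
noncomputable def edgeChromatic (G : SimpleGraph V) : ℕ :=
  sInf {k | ∃ c : Sym2 V → Fin k, ∀ e ∈ G.edgeSet, ∀ f ∈ G.edgeSet, e ≠ f →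
    (∃ x, x ∈ e ∧ x ∈ f) → c e ≠ c f}

/-- rainbow connection number -/
noncomputable def rc (G : SimpleGraph V) : ℕ :=
  sInf {k | ∃ c : Sym2 V → Fin k, ∀ u v : V, ∃ p : G.Walk u v, p.IsPath ∧ (p.edges.map c).Nodup}




section AuxLemmas

variable {T : SimpleGraph V}

private lemma exists_parent' (hconn : T.Connected) {r v : V} (hv : v ≠ r) :
    ∃ u, T.Adj v u ∧ T.dist r u + 1 = T.dist r v := by
  obtain ⟨p, hp, hl⟩ := hconn.exists_path_of_dist v r
  cases p with
  | nil => exact absurd rfl hv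
  | @cons _ u _ h q =>
    refine ⟨u, h, ?_⟩
    have h1 : T.dist r u ≤ q.length := by rw [T.dist_comm]; exact SimpleGraph.dist_le _
    have h2 : T.dist u v ≤ 1 := by
      have := SimpleGraph.dist_le h.symm.toWalk
      simpa using this
    have h3 : T.dist r v ≤ T.dist r u + 1 :=
      le_trans (hconn.dist_triangle (v := u)) (by omega)
    have h4 : q.length + 1 = T.dist r v := by
      rw [T.dist_comm]; simpa using hl
    omega

private lemma not_in_support' (hconn : T.Connected) {r u v : V}
    (hd : T.dist r u + 1 = T.dist r v) {p : T.Walk u r} (hl : p.length = T.dist u r) :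
    v ∉ p.support := by
  classical
  intro hmem
  have h1 : T.dist v r ≤ (p.dropUntil v hmem).length := SimpleGraph.dist_le _
  have h2 := SimpleGraph.Walk.length_dropUntil_le p hmem
  have h3 : T.dist v r = T.dist r v := T.dist_comm ..
  have h4 : T.dist u r = T.dist r u := T.dist_comm ..
  omega

private lemma parent_unique' (hconn : T.Connected) (hacyc : T.IsAcyclic) {r v u w : V}
    (hu : T.Adj v u) (hw : T.Adj v w) (hdu : T.dist r u + 1 = T.dist r v)
    (hdw : T.dist r w + 1 = T.dist r v) : u = w := by
  obtain ⟨p, hp, hpl⟩ := hconn.exists_path_of_dist u r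
  obtain ⟨q, hq, hql⟩ := hconn.exists_path_of_dist w r
  have hvp : v ∉ p.support := not_in_support' hconn hdu hpl
  have hvq : v ∉ q.support := not_in_support' hconn hdw hql
  have h1 : (SimpleGraph.Walk.cons hu p).IsPath := hp.cons hvp
  have h2 : (SimpleGraph.Walk.cons hw q).IsPath := hq.cons hvq
  have heq := hacyc.path_unique ⟨_, h1⟩ ⟨_, h2⟩
  have := congrArg (fun P : T.Path v r => P.1.getVert 1) heq
  simpa [SimpleGraph.Walk.getVert_cons_succ] using this

private lemma adj_dist_ne' (hconn : T.Connected) (hacyc : T.IsAcyclic) {r a b : V}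
    (hab : T.Adj a b) : T.dist r a ≠ T.dist r b := by
  classical
  intro hd
  by_cases hrb : r = b
  · subst hrb
    have h0 : T.dist r a = 0 := by simpa [SimpleGraph.dist_self] using hd
    have : r = a := (hconn.dist_eq_zero_iff).mp h0
    exact hab.ne this.symm
  obtain ⟨p, hp, hpl⟩ := hconn.exists_path_of_dist b r
  have hna : a ∉ p.support := by
    intro hmem
    have h1 : T.dist a r ≤ (p.dropUntil a hmem).length := SimpleGraph.dist_le _
    have h2 : T.dist b a ≤ (p.takeUntil a hmem).length := SimpleGraph.dist_le _
    have h3 : (p.takeUntil a hmem).length + (p.dropUntil a hmem).length = p.length := by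
      rw [← SimpleGraph.Walk.length_append, SimpleGraph.Walk.take_spec]
    have h4 : 1 ≤ T.dist b a := hconn.pos_dist_of_ne (fun h => hab.ne h.symm)
    have h5 : 1 ≤ T.dist r b := hconn.pos_dist_of_ne hrb
    have h6 : T.dist a r = T.dist r a := T.dist_comm ..
    have h7 : T.dist b r = T.dist r b := T.dist_comm ..
    omega
  obtain ⟨p', hp', hpl'⟩ := hconn.exists_path_of_dist a r
  have heq := hacyc.path_unique ⟨SimpleGraph.Walk.cons hab p, hp.cons hna⟩ ⟨p', hp'⟩
  have hlen := congrArg (fun P : T.Path a r => P.1.length) heq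
  simp only [SimpleGraph.Walk.length_cons] at hlen
  have h6 : T.dist a r = T.dist r a := T.dist_comm ..
  have h7 : T.dist b r = T.dist r b := T.dist_comm ..
  omega

private lemma adj_dist_cases' (hconn : T.Connected) (hacyc : T.IsAcyclic) {r x a : V}
    (h : T.Adj x a) : T.dist r a = T.dist r x + 1 ∨ T.dist r x = T.dist r a + 1 := by
  have hne := adj_dist_ne' hconn hacyc (r := r) h
  have h1 : T.dist r a ≤ T.dist r x + 1 := by
    have hxa : T.dist x a ≤ 1 := by simpa using SimpleGraph.dist_le h.toWalk
    have := hconn.dist_triangle (u := r) (v := x) (w := a)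
    omega
  have h2 : T.dist r x ≤ T.dist r a + 1 := by
    have hax : T.dist a x ≤ 1 := by simpa using SimpleGraph.dist_le h.symm.toWalk
    have := hconn.dist_triangle (u := r) (v := a) (w := x)
    omega
  omega

open scoped Classical in
private noncomputable def colAux {d : ℕ} (parent : V → V) (g : V → V → Fin d) (r : V) :
    ℕ → V → Fin d
  | 0, v => g v v
  | (n+1), v =>
      if parent v = r then g (parent v) v
      else if g (parent v) v = colAux parent g r n (parent v) then
        g (parent v) (parent (parent v))
      else g (parent v) v

private lemma exists_proper_edge_coloring [Fintype V] (T : SimpleGraph V) [DecidableRel T.Adj]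
    (hconn : T.Connected) (hacyc : T.IsAcyclic) (hnt : T.edgeSet.Nonempty) :
    ∃ c : Sym2 V → Fin T.maxDegree, ∀ e ∈ T.edgeSet, ∀ f ∈ T.edgeSet, e ≠ f →
      (∃ x, x ∈ e ∧ x ∈ f) → c e ≠ c f := by
  classical
  obtain ⟨a0, b0, h0⟩ : ∃ a b, T.Adj a b := by
    obtain ⟨e, he⟩ := hnt
    induction e using Sym2.ind with
    | _ a b => exact ⟨a, b, he⟩
  set Δ := T.maxDegree with hΔdef
  have hΔ : 0 < Δ := by
    have h1 : 0 < T.degree a0 := T.degree_pos_iff_exists_adj a0 |>.mpr ⟨b0, h0⟩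
    exact lt_of_lt_of_le h1 (T.degree_le_maxDegree a0)
  set r := a0 with hrdef
  have hpar : ∀ v, v ≠ r → ∃ u, T.Adj v u ∧ T.dist r u + 1 = T.dist r v :=
    fun v hv => exists_parent' hconn hv
  set parent : V → V := fun v => if h : v = r then r else (hpar v h).choose with hparent
  have hpadj : ∀ v, v ≠ r → T.Adj v (parent v) := by
    intro v h
    simp only [hparent, dif_neg h]
    exact (hpar v h).choose_spec.1
  have hpdist : ∀ v, v ≠ r → T.dist r (parent v) + 1 = T.dist r v := by
    intro v h
    simp only [hparent, dif_neg h]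
    exact (hpar v h).choose_spec.2
  -- injective local colorings
  have hg : ∀ p : V, ∃ g : V → Fin Δ, ∀ x y, T.Adj p x → T.Adj p y → g x = g y → x = y := by
    intro p
    have hcard : Fintype.card (T.neighborSet p) ≤ Fintype.card (Fin Δ) := by
      rw [Fintype.card_fin, T.card_neighborSet_eq_degree]
      exact T.degree_le_maxDegree p
    obtain ⟨emb⟩ := Function.Embedding.nonempty_of_card_le hcard
    refine ⟨fun v => if h : v ∈ T.neighborSet p then emb ⟨v, h⟩ else ⟨0, hΔ⟩, ?_⟩
    intro x y hx hy hxy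
    dsimp only at hxy
    rw [dif_pos (by exact hx), dif_pos (by exact hy)] at hxy
    simpa using congrArg Subtype.val (emb.injective hxy)
  choose g hginj using hg
  set col : V → Fin Δ := fun v => colAux parent g r (T.dist r v) v with hcoldef
  have hcol : ∀ v, v ≠ r → col v =
      if parent v = r then g (parent v) v
      else if g (parent v) v = col (parent v) then g (parent v) (parent (parent v))
      else g (parent v) v := by
    intro v hv
    have hd := hpdist v hv
    show colAux parent g r (T.dist r v) v = _
    rw [← hd]
    simp only [colAux]
    rfl
  -- basic facts
  have hdist_pos : ∀ v, v ≠ r → 0 < T.dist r v := fun v hv =>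
    hconn.pos_dist_of_ne (Ne.symm hv)
  have hpp_ne : ∀ v w, v ≠ r → w ≠ r → parent v = parent w → parent v ≠ r →
      parent (parent v) ≠ w := by
    intro v w hv hw hpvw hpvr hcontra
    have h1 := hpdist v hv
    have h2 := hpdist w hw
    have h3 := hpdist (parent v) hpvr
    rw [← hpvw] at h2
    rw [hcontra] at h3
    omega
  -- (B): child color differs from parent edge color
  have hcolB : ∀ v, v ≠ r → parent v ≠ r → col v ≠ col (parent v) := by
    intro v hv hpv
    rw [hcol v hv, if_neg hpv]
    by_cases hcase : g (parent v) v = col (parent v)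
    · rw [if_pos hcase]
      intro hcontra
      have hadj1 : T.Adj (parent v) (parent (parent v)) := hpadj (parent v) hpv
      have hadj2 : T.Adj (parent v) v := (hpadj v hv).symm
      have : parent (parent v) = v :=
        hginj (parent v) _ _ hadj1 hadj2 (hcontra.trans hcase.symm)
      have h1 := hpdist v hv
      have h3 := hpdist (parent v) hpv
      rw [this] at h3
      omega
    · rw [if_neg hcase]; exact hcase
  -- (A): sibling colors differ
  have hcolA : ∀ v w, v ≠ r → w ≠ r → v ≠ w → parent v = parent w → col v ≠ col w := by
    intro v w hv hw hvw hpvw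
    have hadjv : T.Adj (parent v) v := (hpadj v hv).symm
    have hadjw : T.Adj (parent v) w := by rw [hpvw]; exact (hpadj w hw).symm
    rw [hcol v hv, hcol w hw, ← hpvw]
    by_cases hpr : parent v = r
    · rw [if_pos hpr, if_pos hpr]
      intro h
      exact hvw (hginj (parent v) v w hadjv hadjw h)
    · rw [if_neg hpr, if_neg hpr]
      have hadjpp : T.Adj (parent v) (parent (parent v)) := hpadj (parent v) hpr
      have hppv : parent (parent v) ≠ v := hpp_ne v v hv hv rfl hpr
      have hppw : parent (parent v) ≠ w := hpp_ne v w hv hw hpvw hpr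
      by_cases h1 : g (parent v) v = col (parent v) <;>
        by_cases h2 : g (parent v) w = col (parent v)
      · exact absurd (hginj (parent v) v w hadjv hadjw (h1.trans h2.symm)) hvw
      · rw [if_pos h1, if_neg h2]
        intro h
        exact hppw (hginj (parent v) _ _ hadjpp hadjw h)
      · rw [if_neg h1, if_pos h2]
        intro h
        exact hppv (hginj (parent v) _ _ hadjv hadjpp h).symm
      · rw [if_neg h1, if_neg h2]
        intro h
        exact hvw (hginj (parent v) v w hadjv hadjw h)
  -- the edge coloring
  set f : V → V → Fin Δ := fun a b =>
    if T.dist r a < T.dist r b then col b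
    else if T.dist r b < T.dist r a then col a else ⟨0, hΔ⟩ with hfdef
  have hfsymm : ∀ a b, f a b = f b a := by
    intro a b
    simp only [hfdef]
    rcases lt_trichotomy (T.dist r a) (T.dist r b) with h | h | h
    · rw [if_pos h, if_neg (lt_asymm h), if_pos h]
    · rw [if_neg (by omega), if_neg (by omega), if_neg (by omega), if_neg (by omega)]
    · rw [if_neg (lt_asymm h), if_pos h, if_pos h]
  set c : Sym2 V → Fin Δ := Sym2.lift ⟨f, hfsymm⟩ with hcdef
  have hc_down : ∀ x a, T.dist r x < T.dist r a → c s(x, a) = col a := by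
    intro x a h
    show f x a = col a
    simp only [hfdef]
    rw [if_pos h]
  have hc_up : ∀ x b, T.dist r b < T.dist r x → c s(x, b) = col x := by
    intro x b h
    show f x b = col x
    simp only [hfdef]
    rw [if_neg (lt_asymm h), if_pos h]
  -- parent characterization
  have hpar_eq : ∀ x a, T.Adj x a → T.dist r a = T.dist r x + 1 → a ≠ r ∧ parent a = x := by
    intro x a hadj hd
    have har : a ≠ r := by
      intro h; rw [h] at hd
      simp [SimpleGraph.dist_self] at hd
    refine ⟨har, parent_unique' hconn hacyc (hpadj a har) hadj.symm (hpdist a har) ?_⟩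
    omega
  refine ⟨c, ?_⟩
  rintro e he f' hf' hef ⟨x, hxe, hxf⟩
  have ha := Sym2.other_spec hxe
  have hb := Sym2.other_spec hxf
  set a := Sym2.Mem.other hxe with hadef
  set b := Sym2.Mem.other hxf with hbdef
  have hadja : T.Adj x a := by rw [← ha] at he; exact he
  have hadjb : T.Adj x b := by rw [← hb] at hf'; exact hf'
  have hab : a ≠ b := by
    intro h; apply hef; rw [← ha, ← hb, h]
  rw [← ha, ← hb]
  rcases adj_dist_cases' hconn hacyc (r := r) hadja with hda | hda <;>
    rcases adj_dist_cases' hconn hacyc (r := r) hadjb with hdb | hdb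
  · -- both down
    obtain ⟨har, hpa⟩ := hpar_eq x a hadja hda
    obtain ⟨hbr, hpb⟩ := hpar_eq x b hadjb hdb
    rw [hc_down x a (by omega), hc_down x b (by omega)]
    exact hcolA a b har hbr hab (hpa.trans hpb.symm)
  · -- a down, b up
    obtain ⟨har, hpa⟩ := hpar_eq x a hadja hda
    have hxr : x ≠ r := by
      intro h; rw [h] at hdb
      simp [SimpleGraph.dist_self] at hdb
    rw [hc_down x a (by omega), hc_up x b (by omega)]
    have := hcolB a har (by rw [hpa]; exact hxr)
    rwa [hpa] at this
  · -- a up, b down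
    obtain ⟨hbr, hpb⟩ := hpar_eq x b hadjb hdb
    have hxr : x ≠ r := by
      intro h; rw [h] at hda
      simp [SimpleGraph.dist_self] at hda
    rw [hc_up x a (by omega), hc_down x b (by omega)]
    have := hcolB b hbr (by rw [hpb]; exact hxr)
    rw [hpb] at this
    exact this.symm
  · -- both up: impossible
    exact absurd (parent_unique' hconn hacyc (r := r) hadja hadjb hda.symm hdb.symm) hab


private lemma properWalk_of_coloring {α : Type*} {G : SimpleGraph V} (c : Sym2 V → α)
    (hc : ∀ e ∈ G.edgeSet, ∀ f ∈ G.edgeSet, e ≠ f → (∃ x, x ∈ e ∧ x ∈ f) → c e ≠ c f)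
    {u v : V} (p : G.Walk u v) (hnd : p.edges.Nodup) : IsProperWalk c p := by
  induction p with
  | nil => simp [IsProperWalk, List.Chain']
  | @cons u w v h q ih =>
    cases q with
    | nil => simp [IsProperWalk, List.Chain']
    | @cons w' x v' h' q' =>
      rw [SimpleGraph.Walk.edges_cons] at hnd
      have hhead : s(u, w) ∉ (SimpleGraph.Walk.cons h' q').edges := (List.nodup_cons.mp hnd).1
      have hnd' := (List.nodup_cons.mp hnd).2
      show List.Chain' _ _
      rw [SimpleGraph.Walk.edges_cons, SimpleGraph.Walk.edges_cons, List.Chain', List.isChain_cons_cons]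
      constructor
      · apply hc _ (G.mem_edgeSet.mpr h) _ (G.mem_edgeSet.mpr h')
        · intro heq
          apply hhead
          rw [heq, SimpleGraph.Walk.edges_cons]
          exact List.mem_cons_self
        · exact ⟨w, Sym2.mem_mk_right u w, Sym2.mem_mk_left w x⟩
      · have := ih hnd'
        rw [IsProperWalk, SimpleGraph.Walk.edges_cons] at this
        exact this

private lemma edge_coloring_of_properConn {α : Type*} {T : SimpleGraph V}
    (hacyc : T.IsAcyclic) (c : Sym2 V → α) (hc : IsProperConnColoring T c) :
    ∀ e ∈ T.edgeSet, ∀ f ∈ T.edgeSet, e ≠ f → (∃ x, x ∈ e ∧ x ∈ f) → c e ≠ c f := by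
  rintro e he f hf hef ⟨x, hxe, hxf⟩
  have ha := Sym2.other_spec hxe
  have hb := Sym2.other_spec hxf
  set a := Sym2.Mem.other hxe with hadef
  set b := Sym2.Mem.other hxf with hbdef
  have hadja : T.Adj x a := by rw [← ha] at he; exact he
  have hadjb : T.Adj x b := by rw [← hb] at hf; exact hf
  have hab : a ≠ b := by
    intro h; apply hef; rw [← ha, ← hb, h]
  set p0 : T.Walk a b := SimpleGraph.Walk.cons hadja.symm (SimpleGraph.Walk.cons hadjb SimpleGraph.Walk.nil) with hp0def
  have hp0 : p0.IsPath := by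
    rw [SimpleGraph.Walk.isPath_def]
    simp [hp0def]
    exact ⟨⟨hadja.ne', hab⟩, hadjb.ne⟩
  obtain ⟨q, hq, hqprop⟩ := hc a b
  have heq := hacyc.path_unique ⟨q, hq⟩ ⟨p0, hp0⟩
  have heq' : q = p0 := congrArg Subtype.val heq
  rw [heq'] at hqprop
  rw [IsProperWalk, hp0def] at hqprop
  simp only [SimpleGraph.Walk.edges_cons, SimpleGraph.Walk.edges_nil, List.Chain', List.isChain_cons_cons,
    List.isChain_singleton, and_true] at hqprop
  intro hcontra
  apply hqprop
  rw [show s(a, x) = e by rw [← ha, Sym2.eq_swap], show s(x, b) = f from hb, hcontra]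

theorem stmt_3 [Fintype V] (T : SimpleGraph V) [DecidableRel T.Adj]
    (hconn : T.Connected) (hacyc : T.IsAcyclic) (hnt : T.edgeSet.Nonempty) :
    pc T = edgeChromatic T ∧ edgeChromatic T = T.maxDegree := by
  classical
  obtain ⟨a0, b0, h0⟩ : ∃ a b, T.Adj a b := by
    obtain ⟨e, he⟩ := hnt
    induction e using Sym2.ind with
    | _ a b => exact ⟨a, b, he⟩
  haveI : Nonempty V := ⟨a0⟩
  have hsets : {k : ℕ | ∃ c : Sym2 V → Fin k, IsProperConnColoring T c} =
      {k : ℕ | ∃ c : Sym2 V → Fin k, ∀ e ∈ T.edgeSet, ∀ f ∈ T.edgeSet, e ≠ f →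
        (∃ x, x ∈ e ∧ x ∈ f) → c e ≠ c f} := by
    ext k
    constructor
    · rintro ⟨c, hc⟩
      exact ⟨c, edge_coloring_of_properConn hacyc c hc⟩
    · rintro ⟨c, hc⟩
      refine ⟨c, fun u v => ?_⟩
      obtain ⟨w⟩ := hconn u v
      exact ⟨w.bypass, w.bypass_isPath,
        properWalk_of_coloring c hc _
          (SimpleGraph.Walk.edges_nodup_of_support_nodup w.bypass_isPath.support_nodup)⟩
  have hmem : T.maxDegree ∈ {k : ℕ | ∃ c : Sym2 V → Fin k, ∀ e ∈ T.edgeSet, ∀ f ∈ T.edgeSet,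
      e ≠ f → (∃ x, x ∈ e ∧ x ∈ f) → c e ≠ c f} :=
    exists_proper_edge_coloring T hconn hacyc hnt
  have hlb : ∀ k ∈ {k : ℕ | ∃ c : Sym2 V → Fin k, ∀ e ∈ T.edgeSet, ∀ f ∈ T.edgeSet,
      e ≠ f → (∃ x, x ∈ e ∧ x ∈ f) → c e ≠ c f}, T.maxDegree ≤ k := by
    rintro k ⟨c, hc⟩
    obtain ⟨v, hv⟩ := T.exists_maximal_degree_vertex
    rw [hv, ← SimpleGraph.card_neighborFinset_eq_degree]
    have hle : (T.neighborFinset v).card ≤ (Finset.univ : Finset (Fin k)).card := by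
      apply Finset.card_le_card_of_injOn (fun a => c s(v, a)) (fun a _ => Finset.mem_univ _)
      intro a ha b hb hcab
      by_contra hne
      have haa : T.Adj v a := by simpa using ha
      have hbb : T.Adj v b := by simpa using hb
      have hsa : s(v, a) ≠ s(v, b) := fun h => hne (Sym2.congr_right.mp h)
      exact hc _ (T.mem_edgeSet.mpr haa) _ (T.mem_edgeSet.mpr hbb) hsa
        ⟨v, Sym2.mem_mk_left v a, Sym2.mem_mk_left v b⟩ hcab
    simpa using hle
  have h2 : edgeChromatic T = T.maxDegree :=
    le_antisymm (Nat.sInf_le hmem) (le_csInf ⟨_, hmem⟩ hlb)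
  constructor
  · unfold pc edgeChromatic
    rw [hsets]
  · exact h2

end AuxLemmas
end

section
/- Let G be a connected graph with pc(G) = 2 and let v be a vertex not in G. If v is joined to G by at least two edges, then the resulting graph G ∪ {v} satisfies pc(G ∪ {v}) = 2. -/
open SimpleGraph

variable {V : Type*}

/- ===== Auxiliary material for `stmt_4` ===== -/

lemma isProperWalk_iff_colors {α : Type*} {G : SimpleGraph V} (c : Sym2 V → α) {a b : V}
    (p : G.Walk a b) : IsProperWalk c p ↔ (p.edges.map c).Chain' (· ≠ ·) :=
  (List.isChain_map c).symm

lemma chain'_ne_reverse {α : Type*} {l : List α} (h : l.Chain' (· ≠ ·)) :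
    l.reverse.Chain' (· ≠ ·) :=
  (List.isChain_reverse).mpr (h.imp fun _ _ hab => Ne.symm hab)

lemma walk_edges_ne_nil {G : SimpleGraph V} {a b : V} (p : G.Walk a b) (h : a ≠ b) :
    p.edges ≠ [] := by
  cases p with
  | nil => exact absurd rfl h
  | cons h p => simp [SimpleGraph.Walk.edges_cons]

lemma fin2_sub_ne (a : Fin 2) : 1 - a ≠ a := by fin_cases a <;> decide

lemma exists_getLast?_of_ne_nil {α : Type*} {l : List α} (h : l ≠ []) :
    ∃ a, l.getLast? = some a := by
  cases hl : l.getLast? with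
  | none => exact absurd (List.getLast?_eq_none_iff.mp hl) h
  | some a => exact ⟨a, rfl⟩

lemma exists_head?_of_ne_nil {α : Type*} {l : List α} (h : l ≠ []) :
    ∃ a, l.head? = some a := by
  cases l with
  | nil => exact absurd rfl h
  | cons a l => exact ⟨a, rfl⟩

lemma properWalk_length_le_one {W' : Type*} {K : SimpleGraph W'} {α : Type*} [Subsingleton α]
    (c : Sym2 W' → α) {a b : W'} (p : K.Walk a b) (h : IsProperWalk c p) : p.length ≤ 1 := by
  cases p with
  | nil => simp
  | cons h1 q =>
    cases q with
    | nil => simp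
    | cons h2 r =>
      exfalso
      unfold IsProperWalk at h
      rw [SimpleGraph.Walk.edges_cons, SimpleGraph.Walk.edges_cons, List.Chain', List.isChain_cons_cons] at h
      exact h.1 (Subsingleton.elim _ _)

/-- extension of a coloring to `Option V` -/
def extCol (c : Sym2 V → Fin 2) (g : V → Fin 2) : Option V → Option V → Fin 2
  | some a, some b => c s(a, b)
  | some a, none => g a
  | none, some b => g b
  | none, none => 0

lemma extCol_symm (c : Sym2 V → Fin 2) (g : V → Fin 2) :
    ∀ a b, extCol c g a b = extCol c g b a := by
  rintro (_ | a) (_ | b) <;> simp only [extCol]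
  rw [Sym2.eq_swap]

/-- symmetric extension -/
def extColS (c : Sym2 V → Fin 2) (g : V → Fin 2) : Sym2 (Option V) → Fin 2 :=
  Sym2.lift ⟨extCol c g, extCol_symm c g⟩

lemma extColS_ss (c : Sym2 V → Fin 2) (g : V → Fin 2) (a b : V) :
    extColS c g s(some a, some b) = c s(a, b) := rfl

lemma extColS_sn (c : Sym2 V → Fin 2) (g : V → Fin 2) (a : V) :
    extColS c g s(some a, none) = g a := rfl

/-- The key junction lemma. -/
private lemma junction [DecidableEq V] {G : SimpleGraph V} (c : Sym2 V → Fin 2)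
    {x y : V} (W : G.Walk y x) (hWp : W.IsPath)
    (hWc : (W.edges.map c).Chain' (· ≠ ·))
    {wy wx : Fin 2} (hwy : (W.edges.map c).head? = some wy)
    (hwx : (W.edges.map c).getLast? = some wx) :
    ∀ {u : V} (P : G.Walk u x), P.IsPath → (P.edges.map c).Chain' (· ≠ ·) → u ∉ W.support →
      (∃ q : G.Walk u x, q.IsPath ∧ (q.edges.map c).Chain' (· ≠ ·) ∧
        (q.edges.map c).getLast? = some wx ∧ (q.edges.map c).head? = (P.edges.map c).head? ∧
        ∀ z ∈ q.support, z ∈ P.support ∨ z ∈ W.support) ∨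
      (∃ q : G.Walk u y, q.IsPath ∧ (q.edges.map c).Chain' (· ≠ ·) ∧
        (q.edges.map c).getLast? = some wy ∧ (q.edges.map c).head? = (P.edges.map c).head? ∧
        ∀ z ∈ q.support, z ∈ P.support ∨ z ∈ W.support) := by
  intro u P
  induction P with
  | nil =>
    intro _ _ hu
    exact absurd W.end_mem_support hu
  | @cons u u' x h P' ih =>
    intro hP hPc hu
    have hWne : W.edges.map c ≠ [] := by
      intro hemp
      rw [hemp] at hwy; simp at hwy
    have hP' : P'.IsPath := hP.of_cons
    have huP' : u ∉ P'.support := ((SimpleGraph.Walk.cons_isPath_iff h P').mp hP).2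
    rw [SimpleGraph.Walk.edges_cons, List.map_cons] at hPc
    have hhead : ∀ b ∈ (P'.edges.map c).head?, c s(u, u') ≠ b := (List.isChain_cons.mp hPc).1
    have hPc' : (P'.edges.map c).Chain' (· ≠ ·) := (List.isChain_cons.mp hPc).2
    by_cases hu' : u' ∈ W.support
    · by_cases hux : u' = x
      · subst hux
        have hP'nil : P' = SimpleGraph.Walk.nil := SimpleGraph.Walk.isPath_iff_eq_nil.mp hP'
        subst hP'nil
        by_cases hγ : c s(u, u') = wx
        · left
          refine ⟨SimpleGraph.Walk.cons h SimpleGraph.Walk.nil, hP, ?_, ?_, rfl, ?_⟩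
          · simp [SimpleGraph.Walk.edges_cons, List.Chain', List.isChain_singleton]
          · simp [SimpleGraph.Walk.edges_cons, hγ]
          · intro z hz; left; exact hz
        · right
          have huW : u ∉ W.reverse.support := by
            rwa [SimpleGraph.Walk.support_reverse, List.mem_reverse]
          refine ⟨SimpleGraph.Walk.cons h W.reverse, hWp.reverse.cons huW, ?_, ?_, ?_, ?_⟩
          · rw [SimpleGraph.Walk.edges_cons, List.map_cons, List.Chain', List.isChain_cons]
            constructor
            · intro b hb
              rw [SimpleGraph.Walk.edges_reverse, List.map_reverse, List.head?_reverse,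
                hwx, Option.mem_some_iff] at hb
              exact fun hcb => hγ (hcb.trans hb.symm)
            · rw [SimpleGraph.Walk.edges_reverse, List.map_reverse]
              exact chain'_ne_reverse hWc
          · rw [SimpleGraph.Walk.edges_cons, List.map_cons,
              show (c s(u, u') :: (W.reverse.edges.map c)) =
                [c s(u, u')] ++ W.reverse.edges.map c from rfl,
              List.getLast?_append_of_ne_nil]
            · rw [SimpleGraph.Walk.edges_reverse, List.map_reverse, List.getLast?_reverse]
              exact hwy
            · rw [SimpleGraph.Walk.edges_reverse, List.map_reverse]
              simpa using hWne
          · simp [SimpleGraph.Walk.edges_cons]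
          · intro z hz
            rw [SimpleGraph.Walk.support_cons, List.mem_cons] at hz
            rcases hz with rfl | hz
            · left; exact SimpleGraph.Walk.start_mem_support _
            · right; rwa [SimpleGraph.Walk.support_reverse, List.mem_reverse] at hz
      · by_cases huy : u' = y
        · subst huy
          by_cases hγ : c s(u, u') = wy
          · right
            refine ⟨SimpleGraph.Walk.cons h SimpleGraph.Walk.nil, ?_, ?_, ?_, ?_, ?_⟩
            · refine SimpleGraph.Walk.IsPath.cons SimpleGraph.Walk.IsPath.nil ?_
              simp only [SimpleGraph.Walk.support_nil, List.mem_singleton]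
              intro hueq; rw [hueq] at hu; exact hu hu'
            · simp [SimpleGraph.Walk.edges_cons, List.Chain', List.isChain_singleton]
            · simp [SimpleGraph.Walk.edges_cons, hγ]
            · simp [SimpleGraph.Walk.edges_cons]
            · intro z hz
              rw [SimpleGraph.Walk.support_cons, List.mem_cons] at hz
              rcases hz with rfl | hz
              · left; exact SimpleGraph.Walk.start_mem_support _
              · right
                simp only [SimpleGraph.Walk.support_nil, List.mem_singleton] at hz
                rw [hz]; exact hu'
          · left
            refine ⟨SimpleGraph.Walk.cons h W, hWp.cons hu, ?_, ?_, ?_, ?_⟩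
            · rw [SimpleGraph.Walk.edges_cons, List.map_cons, List.Chain', List.isChain_cons]
              refine ⟨?_, hWc⟩
              intro b hb
              rw [hwy, Option.mem_some_iff] at hb
              exact fun hcb => hγ (hcb.trans hb.symm)
            · rw [SimpleGraph.Walk.edges_cons, List.map_cons,
                show (c s(u, u') :: (W.edges.map c)) = [c s(u, u')] ++ W.edges.map c from rfl,
                List.getLast?_append_of_ne_nil _ hWne]
              exact hwx
            · simp [SimpleGraph.Walk.edges_cons]
            · intro z hz
              rw [SimpleGraph.Walk.support_cons, List.mem_cons] at hz
              rcases hz with rfl | hz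
              · left; exact SimpleGraph.Walk.start_mem_support _
              · right; exact hz
        · -- u' is an interior vertex of W
          have hspec : (W.takeUntil u' hu').append (W.dropUntil u' hu') = W :=
            W.take_spec hu'
          have hedges : W.edges.map c =
              (W.takeUntil u' hu').edges.map c ++ (W.dropUntil u' hu').edges.map c := by
            conv_lhs => rw [← hspec]
            rw [SimpleGraph.Walk.edges_append, List.map_append]
          have hW1p : (W.takeUntil u' hu').IsPath := hWp.takeUntil hu'
          have hW2p : (W.dropUntil u' hu').IsPath := hWp.dropUntil hu'
          have hW1ne : (W.takeUntil u' hu').edges.map c ≠ [] := by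
            simpa using walk_edges_ne_nil (W.takeUntil u' hu') (fun hyu => huy hyu.symm)
          have hW2ne : (W.dropUntil u' hu').edges.map c ≠ [] := by
            simpa using walk_edges_ne_nil _ hux
          obtain ⟨α, hα⟩ := exists_getLast?_of_ne_nil hW1ne
          obtain ⟨β, hβ⟩ := exists_head?_of_ne_nil hW2ne
          have hWc' := hWc
          rw [hedges] at hWc'
          have hαβ : α ≠ β := (List.isChain_append.mp hWc').2.2 α hα β hβ
          have hchain1 : ((W.takeUntil u' hu').edges.map c).Chain' (· ≠ ·) :=
            (List.isChain_append.mp hWc').1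
          have hchain2 : ((W.dropUntil u' hu').edges.map c).Chain' (· ≠ ·) :=
            (List.isChain_append.mp hWc').2.1
          have hwx2 : ((W.dropUntil u' hu').edges.map c).getLast? = some wx := by
            rw [hedges, List.getLast?_append_of_ne_nil _ hW2ne] at hwx
            exact hwx
          have hwy1 : ((W.takeUntil u' hu').edges.map c).head? = some wy := by
            rw [hedges, List.head?_append_of_ne_nil _ hW1ne] at hwy
            exact hwy
          by_cases hγβ : c s(u, u') = β
          · right
            have huW1 : u ∉ (W.takeUntil u' hu').reverse.support := by
              rw [SimpleGraph.Walk.support_reverse, List.mem_reverse]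
              exact fun hmem => hu (SimpleGraph.Walk.support_takeUntil_subset W hu' hmem)
            refine ⟨SimpleGraph.Walk.cons h (W.takeUntil u' hu').reverse,
              hW1p.reverse.cons huW1, ?_, ?_, ?_, ?_⟩
            · rw [SimpleGraph.Walk.edges_cons, List.map_cons, List.Chain', List.isChain_cons]
              constructor
              · intro b hb
                rw [SimpleGraph.Walk.edges_reverse, List.map_reverse, List.head?_reverse,
                  hα, Option.mem_some_iff] at hb
                intro hcb
                exact hαβ (hb.trans (hcb.symm.trans hγβ))
              · rw [SimpleGraph.Walk.edges_reverse, List.map_reverse]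
                exact chain'_ne_reverse hchain1
            · rw [SimpleGraph.Walk.edges_cons, List.map_cons,
                show (c s(u, u') :: ((W.takeUntil u' hu').reverse.edges.map c)) =
                  [c s(u, u')] ++ (W.takeUntil u' hu').reverse.edges.map c from rfl,
                List.getLast?_append_of_ne_nil]
              · rw [SimpleGraph.Walk.edges_reverse, List.map_reverse, List.getLast?_reverse]
                exact hwy1
              · rw [SimpleGraph.Walk.edges_reverse, List.map_reverse]
                simpa using hW1ne
            · simp [SimpleGraph.Walk.edges_cons]
            · intro z hz
              rw [SimpleGraph.Walk.support_cons, List.mem_cons] at hz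
              rcases hz with rfl | hz
              · left; exact SimpleGraph.Walk.start_mem_support _
              · right
                rw [SimpleGraph.Walk.support_reverse, List.mem_reverse] at hz
                exact SimpleGraph.Walk.support_takeUntil_subset W hu' hz
          · left
            have huW2 : u ∉ (W.dropUntil u' hu').support :=
              fun hmem => hu (SimpleGraph.Walk.support_dropUntil_subset W hu' hmem)
            refine ⟨SimpleGraph.Walk.cons h (W.dropUntil u' hu'), hW2p.cons huW2, ?_, ?_, ?_, ?_⟩
            · rw [SimpleGraph.Walk.edges_cons, List.map_cons, List.Chain', List.isChain_cons]
              refine ⟨?_, hchain2⟩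
              intro b hb
              rw [hβ, Option.mem_some_iff] at hb
              exact fun hcb => hγβ (hcb.trans hb.symm)
            · rw [SimpleGraph.Walk.edges_cons, List.map_cons,
                show (c s(u, u') :: ((W.dropUntil u' hu').edges.map c)) =
                  [c s(u, u')] ++ (W.dropUntil u' hu').edges.map c from rfl,
                List.getLast?_append_of_ne_nil _ hW2ne]
              exact hwx2
            · simp [SimpleGraph.Walk.edges_cons]
            · intro z hz
              rw [SimpleGraph.Walk.support_cons, List.mem_cons] at hz
              rcases hz with rfl | hz
              · left; exact SimpleGraph.Walk.start_mem_support _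
              · right; exact SimpleGraph.Walk.support_dropUntil_subset W hu' hz
    · rcases ih W hWp hWc hwy hwx hP' hPc' hu' with
        ⟨q', hq'p, hq'c, hq'l, hq'h, hq's⟩ | ⟨q', hq'p, hq'c, hq'l, hq'h, hq's⟩
      all_goals {
        have huq' : u ∉ q'.support := by
          intro hmem
          rcases hq's u hmem with h1 | h2
          · exact huP' h1
          · exact hu h2
        have hq'ne : q'.edges.map c ≠ [] := by
          intro hemp; rw [hemp] at hq'l; simp at hq'l
        first
        | (left; refine ⟨SimpleGraph.Walk.cons h q', hq'p.cons huq', ?_, ?_, ?_, ?_⟩)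
        | (right; refine ⟨SimpleGraph.Walk.cons h q', hq'p.cons huq', ?_, ?_, ?_, ?_⟩)
        · rw [SimpleGraph.Walk.edges_cons, List.map_cons, List.Chain', List.isChain_cons]
          refine ⟨?_, hq'c⟩
          intro b hb
          rw [hq'h] at hb
          exact hhead b hb
        · rw [SimpleGraph.Walk.edges_cons, List.map_cons,
            show (c s(u, u') :: (q'.edges.map c)) = [c s(u, u')] ++ q'.edges.map c from rfl,
            List.getLast?_append_of_ne_nil _ hq'ne]
          exact hq'l
        · simp [SimpleGraph.Walk.edges_cons]
        · intro z hz
          rw [SimpleGraph.Walk.support_cons, List.mem_cons] at hz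
          rcases hz with rfl | hz
          · left; exact SimpleGraph.Walk.start_mem_support _
          · rcases hq's z hz with h1 | h2
            · left; rw [SimpleGraph.Walk.support_cons]; exact List.mem_cons_of_mem _ h1
            · right; exact h2
      }

theorem stmt_4 (G : SimpleGraph V) (hG : G.Connected) (hpc : pc G = 2)
    (H : SimpleGraph (Option V))
    (hH : ∀ a b : V, H.Adj (some a) (some b) ↔ G.Adj a b)
    (hdeg : 2 ≤ (H.neighborSet none).ncard) :
    pc H = 2 := by
  classical
  -- extract a proper-connection 2-coloring of G
  have hSne : {k | ∃ c : Sym2 V → Fin k, IsProperConnColoring G c}.Nonempty := by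
    by_contra hemp
    rw [Set.not_nonempty_iff_eq_empty] at hemp
    unfold pc at hpc
    rw [hemp, Nat.sInf_empty] at hpc
    omega
  have h2G : 2 ∈ {k | ∃ c : Sym2 V → Fin k, IsProperConnColoring G c} := by
    have hmem := Nat.sInf_mem hSne
    unfold pc at hpc
    rwa [hpc] at hmem
  obtain ⟨c, hc⟩ := h2G
  -- extract two distinct neighbors of `none`
  have hfin : (H.neighborSet none).Finite := by
    by_contra hinf
    have hinf' : (H.neighborSet none).Infinite := hinf
    rw [hinf'.ncard] at hdeg
    omega
  obtain ⟨x', hx', y', hy', hxy'⟩ := (Set.one_lt_ncard hfin).mp (by omega)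
  rw [SimpleGraph.mem_neighborSet] at hx' hy'
  obtain ⟨x, rfl⟩ : ∃ x, x' = some x := by
    cases x' with
    | none => exact absurd hx' (H.irrefl)
    | some x => exact ⟨x, rfl⟩
  obtain ⟨y, rfl⟩ : ∃ y, y' = some y := by
    cases y' with
    | none => exact absurd hy' (H.irrefl)
    | some y => exact ⟨y, rfl⟩
  have hxy : x ≠ y := fun hxx => hxy' (by rw [hxx])
  -- a proper path W from y to x
  obtain ⟨W, hWp, hWc0⟩ := hc y x
  rw [isProperWalk_iff_colors] at hWc0
  have hWne : W.edges.map c ≠ [] := by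
    simpa using walk_edges_ne_nil W (Ne.symm hxy)
  obtain ⟨wy, hwy⟩ := exists_head?_of_ne_nil hWne
  obtain ⟨wx, hwx⟩ := exists_getLast?_of_ne_nil hWne
  -- the coloring of H
  set g : V → Fin 2 := fun z => if z = x then 1 - wx else if z = y then 1 - wy else 0 with hg
  have hgx : g x = 1 - wx := by simp [hg]
  have hgy : g y = 1 - wy := by simp [hg, Ne.symm hxy]
  set f : G →g H := ⟨some, fun {a b} hab => (hH a b).mpr hab⟩ with hf
  have hkey : ∀ e : Sym2 V, extColS c g (Sym2.map (⇑f) e) = c e := by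
    intro e
    induction e using Sym2.ind with
    | _ a b =>
      rw [Sym2.map_pair_eq]
      exact extColS_ss c g a b
  have hmapcolors : ∀ {a b : V} (p : G.Walk a b),
      ((p.map f).edges.map (extColS c g)) = p.edges.map c := by
    intro a b p
    rw [SimpleGraph.Walk.edges_map, List.map_map]
    exact List.map_congr_left fun e _ => hkey e
  have hvx : extColS c g s(some x, none) = 1 - wx := by rw [extColS_sn, hgx]
  have hvy : extColS c g s(some y, none) = 1 - wy := by rw [extColS_sn, hgy]
  -- attaching a suitable path to the new vertex
  have hattach : ∀ {a t : V} (q : G.Walk a t), q.IsPath →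
      (q.edges.map c).Chain' (· ≠ ·) → ∀ (w0 : Fin 2),
      (q.edges.map c).getLast? = some w0 →
      ∀ (hadj : H.Adj (some t) none), extColS c g s(some t, none) = 1 - w0 →
      ∃ p : H.Walk (some a) none, p.IsPath ∧ IsProperWalk (extColS c g) p := by
    intro a t q hqp hqc w0 hql hadj hcol
    refine ⟨(q.map f).concat hadj, ?_, ?_⟩
    · rw [SimpleGraph.Walk.isPath_def, SimpleGraph.Walk.support_concat,
        List.nodup_append]
      refine ⟨(SimpleGraph.Walk.map_isPath_of_injective
        (Option.some_injective V) hqp).support_nodup, List.nodup_singleton _, ?_⟩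
      intro z hz b hz1 hzb
      rw [List.mem_singleton] at hz1
      subst hz1 hzb
      rw [SimpleGraph.Walk.support_map, List.mem_map] at hz
      obtain ⟨a', -, ha'⟩ := hz
      exact Option.some_ne_none a' ha'
    · rw [isProperWalk_iff_colors, SimpleGraph.Walk.edges_concat, List.concat_eq_append,
        List.map_append, hmapcolors]
      refine List.IsChain.append hqc (List.isChain_singleton _) ?_
      intro a' ha' b' hb'
      rw [hql, Option.mem_some_iff] at ha'
      simp only [List.map_cons, List.map_nil, List.head?_cons, Option.mem_some_iff] at hb'
      subst ha'
      subst hb'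
      show w0 ≠ extColS c g s(some t, none)
      rw [hcol]
      exact (fin2_sub_ne w0).symm
  -- every original vertex reaches the new vertex properly
  have hto : ∀ u : V, ∃ p : H.Walk (some u) none, p.IsPath ∧ IsProperWalk (extColS c g) p := by
    intro u
    by_cases hux : u = x
    · subst hux
      refine ⟨SimpleGraph.Walk.cons hx'.symm SimpleGraph.Walk.nil, ?_, ?_⟩
      · rw [SimpleGraph.Walk.cons_isPath_iff]
        refine ⟨SimpleGraph.Walk.IsPath.nil, ?_⟩
        simp
      · unfold IsProperWalk
        simp [List.Chain', List.isChain_singleton]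
    · by_cases huy : u = y
      · subst huy
        refine ⟨SimpleGraph.Walk.cons hy'.symm SimpleGraph.Walk.nil, ?_, ?_⟩
        · rw [SimpleGraph.Walk.cons_isPath_iff]
          refine ⟨SimpleGraph.Walk.IsPath.nil, ?_⟩
          simp
        · unfold IsProperWalk
          simp [List.Chain', List.isChain_singleton]
      · by_cases hmem : u ∈ W.support
        · have hqp := hWp.dropUntil hmem
          have hedge : W.edges.map c =
              (W.takeUntil u hmem).edges.map c ++ (W.dropUntil u hmem).edges.map c := by
            conv_lhs => rw [← W.take_spec hmem]
            rw [SimpleGraph.Walk.edges_append, List.map_append]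
          have hWc' := hWc0
          rw [hedge] at hWc'
          have hqc : ((W.dropUntil u hmem).edges.map c).Chain' (· ≠ ·) :=
            (List.isChain_append.mp hWc').2.1
          have hqne : (W.dropUntil u hmem).edges.map c ≠ [] := by
            simpa using walk_edges_ne_nil _ hux
          have hql : ((W.dropUntil u hmem).edges.map c).getLast? = some wx := by
            rw [hedge, List.getLast?_append_of_ne_nil _ hqne] at hwx
            exact hwx
          exact hattach _ hqp hqc wx hql hx'.symm hvx
        · obtain ⟨P, hPp, hPc⟩ := hc u x
          rw [isProperWalk_iff_colors] at hPc
          rcases junction c W hWp hWc0 hwy hwx P hPp hPc hmem with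
            ⟨q, hqp, hqc, hql, -, -⟩ | ⟨q, hqp, hqc, hql, -, -⟩
          · exact hattach q hqp hqc wx hql hx'.symm hvx
          · exact hattach q hqp hqc wy hql hy'.symm hvy
  -- H admits a proper-connection 2-coloring
  have hPCH : IsProperConnColoring H (extColS c g) := by
    intro a b
    match a, b with
    | none, none =>
      refine ⟨SimpleGraph.Walk.nil, SimpleGraph.Walk.IsPath.nil, ?_⟩
      unfold IsProperWalk; simp [List.Chain', List.isChain_singleton, List.isChain_nil]
    | some s, none => exact hto s
    | none, some t =>
      obtain ⟨p, hp, hpr⟩ := hto t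
      refine ⟨p.reverse, hp.reverse, ?_⟩
      rw [isProperWalk_iff_colors] at hpr ⊢
      rw [SimpleGraph.Walk.edges_reverse, List.map_reverse]
      exact chain'_ne_reverse hpr
    | some s, some t =>
      obtain ⟨p, hp, hpr⟩ := hc s t
      refine ⟨p.map f, SimpleGraph.Walk.map_isPath_of_injective (Option.some_injective V) hp, ?_⟩
      rw [isProperWalk_iff_colors] at hpr ⊢
      rw [hmapcolors]
      exact hpr
  have h2H : 2 ∈ {k | ∃ c0 : Sym2 (Option V) → Fin k, IsProperConnColoring H c0} :=
    ⟨extColS c g, hPCH⟩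
  -- lower bound
  have hge : ∀ k ∈ {k | ∃ c0 : Sym2 (Option V) → Fin k, IsProperConnColoring H c0}, 2 ≤ k := by
    intro k hk
    by_contra hlt
    push_neg at hlt
    interval_cases k
    · obtain ⟨c0, -⟩ := hk
      exact (c0 s(none, none)).elim0
    · obtain ⟨c1, hc1⟩ := hk
      have h1G : 1 ∈ {k | ∃ cg : Sym2 V → Fin k, IsProperConnColoring G cg} := by
        refine ⟨fun _ => 0, ?_⟩
        intro s t
        obtain ⟨p, hp, hpr⟩ := hc1 (some s) (some t)
        have hl := properWalk_length_le_one c1 p hpr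
        rcases Nat.le_one_iff_eq_zero_or_eq_one.mp hl with h0 | h1
        · obtain rfl : s = t :=
            Option.some_injective _ (SimpleGraph.Walk.eq_of_length_eq_zero h0)
          refine ⟨SimpleGraph.Walk.nil, SimpleGraph.Walk.IsPath.nil, ?_⟩
          unfold IsProperWalk; simp [List.Chain', List.isChain_singleton, List.isChain_nil]
        · have hadj := (hH s t).mp (SimpleGraph.Walk.adj_of_length_eq_one h1)
          refine ⟨SimpleGraph.Walk.cons hadj SimpleGraph.Walk.nil, ?_, ?_⟩
          · rw [SimpleGraph.Walk.cons_isPath_iff]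
            refine ⟨SimpleGraph.Walk.IsPath.nil, ?_⟩
            simp [hadj.ne]
          · unfold IsProperWalk; simp [List.Chain', List.isChain_singleton, List.isChain_nil]
      have hle : pc G ≤ 1 := Nat.sInf_le h1G
      omega
  unfold pc
  exact le_antisymm (Nat.sInf_le h2H) (le_csInf ⟨2, h2H⟩ hge)
end

section
/- If G is a bipartite 2-connected graph, then pc(G) = 2, and moreover there exists a 2-edge-coloring c of G such that G has the strong property under c. -/
open SimpleGraph

variable {V : Type*}

/-! ### Auxiliary material for the proof -/

namespace StrongAux

open SimpleGraph Walk

attribute [local instance] Classical.propDecidable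

variable {G : SimpleGraph V}

/-- The edge coloring induced by a vertex 2-coloring `β` and an (asymmetric) orientation `R`:
an edge oriented from `x` to `y` gets the color of its tail `x`. -/
noncomputable def col (β : V → Fin 2) (R : V → V → Prop) (hA : ∀ x y, R x y → ¬ R y x) :
    Sym2 V → Fin 2 :=
  Sym2.lift ⟨fun x y => if R x y then β x else if R y x then β y else 0, by
    intro x y
    by_cases h1 : R x y
    · simp [h1, hA x y h1]
    · by_cases h2 : R y x <;> simp [h1, h2]⟩

lemma col_eq_fwd {β : V → Fin 2} {R : V → V → Prop} (hA : ∀ x y, R x y → ¬ R y x)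
    {x y : V} (h : R x y) : col β R hA s(x, y) = β x := by
  simp [col, h]

/-- From reflexive-transitive closure of an orientation we get a walk all of whose darts
follow the orientation. -/
lemma exists_walk_of_rtg {R : V → V → Prop} (hadj : ∀ x y, R x y → G.Adj x y)
    {u v : V} (h : Relation.ReflTransGen R u v) :
    ∃ p : G.Walk u v, ∀ d ∈ p.darts, R d.fst d.snd := by
  induction h with
  | refl => exact ⟨Walk.nil, by simp⟩
  | @tail b c hab hr ih =>
    obtain ⟨p, hp⟩ := ih
    refine ⟨p.append (Walk.cons (hadj _ _ hr) Walk.nil), ?_⟩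
    intro d hd
    rw [Walk.darts_append] at hd
    rcases List.mem_append.mp hd with h | h
    · exact hp d h
    · simp only [Walk.darts_cons, Walk.darts_nil, List.mem_singleton] at h
      subst h
      exact hr

lemma edges_ne_nil_of_ne {u v : V} (p : G.Walk u v) (h : u ≠ v) : p.edges ≠ [] := by
  cases p with
  | nil => exact absurd rfl h
  | cons h q => simp

lemma eq_of_edges_nil {u v : V} (p : G.Walk u v) (h : p.edges = []) : u = v := by
  cases p with
  | nil => rfl
  | cons h q => simp at h

lemma fwd_proper {β : V → Fin 2} {R : V → V → Prop} (hA : ∀ x y, R x y → ¬ R y x)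
    (hβ : ∀ x y, G.Adj x y → β x ≠ β y)
    {u v : V} (p : G.Walk u v) (hp : ∀ d ∈ p.darts, R d.fst d.snd) :
    IsProperWalk (col β R hA) p := by
  induction p with
  | nil => simp [IsProperWalk, List.Chain']
  | @cons u m v h q ih =>
    have hq : ∀ d ∈ q.darts, R d.fst d.snd := fun d hd => hp d (by simp [hd])
    have ih' := ih hq
    cases q with
    | nil => simp [IsProperWalk, List.Chain']
    | @cons m w v h2 q2 =>
      unfold IsProperWalk at ih' ⊢
      rw [Walk.edges_cons] at ih' ⊢
      rw [Walk.edges_cons]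
      refine List.isChain_cons_cons.mpr ⟨?_, ih'⟩
      have h1 : R u m := hp ⟨(u, m), h⟩ (by simp)
      have h2' : R m w := hp ⟨(m, w), h2⟩ (by simp)
      rw [col_eq_fwd hA h1, col_eq_fwd hA h2']
      exact hβ u m h

lemma fwd_head {β : V → Fin 2} {R : V → V → Prop} (hA : ∀ x y, R x y → ¬ R y x)
    {u v : V} (p : G.Walk u v) (hne : u ≠ v)
    (hp : ∀ d ∈ p.darts, R d.fst d.snd) :
    p.edges.head?.map (col β R hA) = some (β u) := by
  cases p with
  | nil => exact absurd rfl hne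
  | @cons u m v h q =>
    have h1 : R u m := hp ⟨(u, m), h⟩ (by simp)
    simp [Walk.edges_cons, col_eq_fwd hA h1]

lemma fwd_last {R : V → V → Prop} :
    ∀ {u v : V} (p : G.Walk u v), p.edges ≠ [] →
    (∀ d ∈ p.darts, R d.fst d.snd) →
    ∃ w, R w v ∧ p.edges.getLast? = some s(w, v) := by
  intro u v p
  induction p with
  | nil => intro h; exact absurd rfl h
  | @cons u m v h q ih =>
    intro _ hp
    have hq : ∀ d ∈ q.darts, R d.fst d.snd := fun d hd => hp d (by simp [hd])
    cases q with
    | nil =>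
      refine ⟨u, hp ⟨(u, m), h⟩ (by simp), ?_⟩
      simp
    | @cons m w v h2 q2 =>
      obtain ⟨w', hw', heq⟩ := ih (by simp) hq
      refine ⟨w', hw', ?_⟩
      simp only [Walk.edges_cons] at heq ⊢
      rw [List.getLast?_cons_cons]
      exact heq

/-! ### Building a strongly connected orientation (Robbins' theorem) -/

/-- `Good R T` : `R` is an asymmetric orientation of some edges of `G`, supported on `T`,
which strongly connects all the vertices of `T`. -/
def Good (G : SimpleGraph V) (R : V → V → Prop) (T : Set V) : Prop :=
  (∀ x y, R x y → G.Adj x y) ∧ (∀ x y, R x y → ¬ R y x) ∧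
  (∀ x y, R x y → x ∈ T ∧ y ∈ T) ∧
  (∀ x ∈ T, ∀ y ∈ T, Relation.ReflTransGen R x y)

lemma exists_boundary_edge {T : Set V} {a b : V} (w : G.Walk a b) :
    a ∈ T → b ∉ T → ∃ x ∈ T, ∃ y, y ∉ T ∧ G.Adj x y := by
  induction w with
  | nil => intro h1 h2; exact absurd h1 h2
  | @cons a m b h w' ih =>
    intro ha hb
    by_cases hm : m ∈ T
    · exact ih hm hb
    · exact ⟨a, ha, m, hm, h⟩

lemma exists_first_hit {T : Set V} {a b : V} (w : G.Walk a b) :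
    a ∉ T → b ∈ T →
    ∃ z ∈ T, ∃ q : G.Walk a z, q.IsPath ∧ (∀ v ∈ q.support, v ∉ T ∨ v = z) ∧
      q.support ⊆ w.support := by
  induction w with
  | nil => intro h1 h2; exact absurd h2 h1
  | @cons a m b h w' ih =>
    intro ha hb
    by_cases hm : m ∈ T
    · refine ⟨m, hm, Walk.cons h Walk.nil, ?_, ?_, ?_⟩
      · simp [Walk.cons_isPath_iff, h.ne]
      · intro v hv
        simp only [Walk.support_cons, Walk.support_nil, List.mem_cons,
          List.not_mem_nil, or_false] at hv
        rcases hv with rfl | rfl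
        · exact Or.inl ha
        · exact Or.inr rfl
      · intro v hv
        simp only [Walk.support_cons, Walk.support_nil, List.mem_cons,
          List.not_mem_nil, or_false] at hv
        rcases hv with rfl | rfl
        · simp [Walk.support_cons]
        · simp [Walk.support_cons, Walk.start_mem_support]
    · obtain ⟨z, hz, q, hq1, hq2, hq3⟩ := ih hm hb
      refine ⟨z, hz, (Walk.cons h q).bypass, (Walk.cons h q).bypass_isPath, ?_, ?_⟩
      · intro v hv
        have hv' : v ∈ (Walk.cons h q).support := (Walk.cons h q).support_bypass_subset hv
        rw [Walk.support_cons, List.mem_cons] at hv'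
        rcases hv' with rfl | hv'
        · exact Or.inl ha
        · exact hq2 v hv'
      · intro v hv
        have hv' : v ∈ (Walk.cons h q).support := (Walk.cons h q).support_bypass_subset hv
        rw [Walk.support_cons, List.mem_cons] at hv'
        rw [Walk.support_cons, List.mem_cons]
        rcases hv' with rfl | hv'
        · exact Or.inl rfl
        · exact Or.inr (hq3 hv')

lemma dart_fst_ne_end {u v : V} {p : G.Walk u v} (hp : p.IsPath) :
    ∀ d ∈ p.darts, d.fst ≠ v := by
  induction p with
  | nil => intro d hd; simp at hd
  | @cons u m v h q ih =>
    intro d hd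
    rw [Walk.darts_cons, List.mem_cons] at hd
    rcases hd with rfl | hd
    · intro hc
      exact (Walk.cons_isPath_iff h q).mp hp |>.2 (hc ▸ q.end_mem_support)
    · exact ih ((Walk.cons_isPath_iff h q).mp hp).1 d hd

lemma no_reversed_pair {u v : V} {p : G.Walk u v} (hp : p.IsPath) :
    ∀ d ∈ p.darts, d.symm ∉ p.darts := by
  induction p with
  | nil => intro d hd; simp at hd
  | @cons u m v h q ih =>
    intro d hd hds
    obtain ⟨hq, hu⟩ := (Walk.cons_isPath_iff h q).mp hp
    rw [Walk.darts_cons, List.mem_cons] at hd hds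
    rcases hd with rfl | hd
    · rcases hds with h' | h'
      · have hmu : m = u := congrArg (fun d => d.toProd.1) h'
        exact h.ne hmu.symm
      · exact hu (q.dart_snd_mem_support_of_mem_darts h')
    · rcases hds with h' | h'
      · have hdd : d = (⟨(u, m), h⟩ : G.Dart).symm := by rw [← h', Dart.symm_symm]
        rw [hdd] at hd
        exact hu (q.dart_snd_mem_support_of_mem_darts hd)
      · exact ih hq d hd h'

lemma dart_start_eq {u v : V} {p : G.Walk u v} (hp : p.IsPath) {d : G.Dart}
    (hd : d ∈ p.darts) (hfst : d.fst = u) (hsnd : d.snd = v) : p.length = 1 := by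
  cases p with
  | nil => simp at hd
  | @cons u m v h q =>
    obtain ⟨hq, hu⟩ := (Walk.cons_isPath_iff h q).mp hp
    rw [Walk.darts_cons, List.mem_cons] at hd
    rcases hd with rfl | hd
    · have hm : m = v := hsnd
      subst hm
      have : q = Walk.nil := Walk.isPath_iff_eq_nil.mp hq
      subst this
      simp
    · exfalso
      apply hu
      have : d.fst ∈ q.support := q.dart_fst_mem_support_of_mem_darts hd
      rwa [hfst] at this

/-- The relation given by the darts of a walk. -/
def dartRel {u v : V} (w : G.Walk u v) : V → V → Prop :=
  fun a b => ∃ d ∈ w.darts, d.fst = a ∧ d.snd = b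

lemma rtg_darts {u v : V} (w : G.Walk u v) :
    ∀ a ∈ w.support, Relation.ReflTransGen (dartRel w) u a ∧
      Relation.ReflTransGen (dartRel w) a v := by
  induction w with
  | nil =>
    intro a ha
    rw [Walk.support_nil, List.mem_singleton] at ha
    subst ha
    exact ⟨Relation.ReflTransGen.refl, Relation.ReflTransGen.refl⟩
  | @cons u m v h w' ih =>
    intro a ha
    have hmono : ∀ x y, dartRel w' x y → dartRel (Walk.cons h w') x y := by
      intro x y ⟨d, hd, h1, h2⟩
      exact ⟨d, by simp [hd], h1, h2⟩
    have hstep : dartRel (Walk.cons h w') u m := ⟨⟨(u, m), h⟩, by simp, rfl, rfl⟩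
    rw [Walk.support_cons, List.mem_cons] at ha
    rcases ha with rfl | ha
    · refine ⟨Relation.ReflTransGen.refl, ?_⟩
      have := (ih m w'.start_mem_support).2
      exact Relation.ReflTransGen.head hstep (Relation.ReflTransGen.mono hmono _ _ this)
    · obtain ⟨h1, h2⟩ := ih a ha
      exact ⟨Relation.ReflTransGen.head hstep (Relation.ReflTransGen.mono hmono _ _ h1), Relation.ReflTransGen.mono hmono _ _ h2⟩

/-- The key extension step: a good partial orientation on a proper subset can be extended. -/
lemma step_lemma [Fintype V] (hcard : 3 ≤ Fintype.card V) (hG : G.Connected)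
    (h2 : ∀ x : V, (G.induce ({x}ᶜ : Set V)).Connected)
    {R : V → V → Prop} {T : Set V} (hg : Good G R T) (hne : T.Nonempty)
    (hproper : T ≠ Set.univ) :
    ∃ R' T', Good G R' T' ∧ T ⊆ T' ∧ ∃ y ∈ T', y ∉ T := by
  obtain ⟨hadj, hasym, hmem, hstr⟩ := hg
  obtain ⟨s, hs⟩ := (Set.ne_univ_iff_exists_notMem T).mp hproper
  obtain ⟨t, ht⟩ := hne
  obtain ⟨x, hx, y, hy, hxy⟩ := exists_boundary_edge ((hG.preconnected t s).some) ht hs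
  have hyx : y ≠ x := fun h => hy (h ▸ hx)
  obtain ⟨z, hz, q, hq1, hq2, hcase⟩ :
      ∃ z ∈ T, ∃ q : G.Walk y z, q.IsPath ∧ (∀ v ∈ q.support, v ∉ T ∨ v = z) ∧
        (x ∉ q.support ∨ (z = x ∧ 2 ≤ q.length)) := by
    by_cases hT : ∃ t' ∈ T, t' ≠ x
    · obtain ⟨t', ht', htx⟩ := hT
      have hyc : y ∈ ({x}ᶜ : Set V) := by simp [hyx]
      have htc : t' ∈ ({x}ᶜ : Set V) := by simp [htx]
      have pw := (((h2 x).preconnected) ⟨y, hyc⟩ ⟨t', htc⟩).some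
      set pg := pw.map (SimpleGraph.Embedding.induce ({x}ᶜ : Set V)).toHom with hpg
      have hxsup : x ∉ pg.support := by
        intro hmem'
        rw [hpg, Walk.support_map] at hmem'
        obtain ⟨a, _, ha2⟩ := List.mem_map.mp hmem'
        exact a.2 ha2
      obtain ⟨z, hz, q, hq1, hq2, hq3⟩ := exists_first_hit (a := y) (b := t') pg hy ht'
      exact ⟨z, hz, q, hq1, hq2, Or.inl (fun hc => hxsup (hq3 hc))⟩
    · push_neg at hT
      have hex : ∃ w : V, w ≠ x ∧ w ≠ y := by
        by_contra hcon
        push_neg at hcon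
        have hsub : (Finset.univ : Finset V) ⊆ {x, y} := by
          intro a _
          by_cases hax : a = x
          · simp [hax]
          · simp [hcon a hax]
        have h1 := Finset.card_le_card hsub
        have h2' : ({x, y} : Finset V).card ≤ 2 :=
          (Finset.card_insert_le _ _).trans (by simp)
        rw [Finset.card_univ] at h1
        omega
      obtain ⟨w, hwx, hwy⟩ := hex
      have pw := (((h2 x).preconnected) ⟨y, by simp [hyx]⟩ ⟨w, by simp [hwx]⟩).some
      have hnbr : ∃ m : V, G.Adj y m ∧ m ≠ x := by
        cases pw with
        | nil => exact absurd rfl hwy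
        | @cons _ b _ h' pw' =>
          exact ⟨(b : V), h', b.2⟩
      obtain ⟨m, hym, hmx⟩ := hnbr
      have hmy : m ≠ y := fun h => G.irrefl (h ▸ hym)
      have hxny : x ≠ y := hyx.symm
      have pw2 := (((h2 y).preconnected) ⟨m, by simp [hmy]⟩ ⟨x, by simp [hxny]⟩).some
      set pg2 := pw2.map (SimpleGraph.Embedding.induce ({y}ᶜ : Set V)).toHom with hpg2
      have hysup : y ∉ pg2.bypass.support := by
        intro hmem'
        have hmem2 := pg2.support_bypass_subset hmem'
        rw [hpg2, Walk.support_map] at hmem2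
        obtain ⟨a, _, ha2⟩ := List.mem_map.mp hmem2
        exact a.2 ha2
      refine ⟨x, hx, Walk.cons hym pg2.bypass, ?_, ?_, ?_⟩
      · exact (Walk.cons_isPath_iff hym pg2.bypass).mpr ⟨pg2.bypass_isPath, hysup⟩
      · intro v _
        by_cases hvT : v ∈ T
        · exact Or.inr (hT v hvT)
        · exact Or.inl hvT
      · refine Or.inr ⟨rfl, ?_⟩
        have hlen : pg2.bypass.length ≠ 0 := fun h => hmx (Walk.eq_of_length_eq_zero h)
        exact Nat.succ_le_succ (Nat.one_le_iff_ne_zero.mpr hlen)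
  -- the ear walk from x to z
  set w : G.Walk x z := Walk.cons hxy q with hw
  set R' : V → V → Prop := fun a b => R a b ∨ ∃ d ∈ w.darts, d.fst = a ∧ d.snd = b with hR'
  set T' : Set V := T ∪ {v | v ∈ w.support} with hT'
  have hdart_not : ∀ d ∈ w.darts, d.fst ∉ T ∨ d.snd ∉ T := by
    intro d hd
    rw [hw, Walk.darts_cons, List.mem_cons] at hd
    rcases hd with rfl | hd
    · exact Or.inr hy
    · left
      have hfz : d.fst ≠ z := dart_fst_ne_end hq1 d hd
      have hfs : d.fst ∈ q.support := q.dart_fst_mem_support_of_mem_darts hd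
      rcases hq2 d.fst hfs with h' | h'
      · exact h'
      · exact absurd h' hfz
  have hrev : ∀ d ∈ w.darts, d.symm ∉ w.darts := by
    intro d hd hds
    rw [hw, Walk.darts_cons, List.mem_cons] at hd hds
    rcases hd with rfl | hd
    · rcases hds with h' | h'
      · have hyx' : y = x := congrArg (fun d => d.toProd.1) h'
        exact hyx hyx'
      · -- dart (y, x) ∈ q.darts
        rcases hcase with hxs | ⟨hzx, hlen⟩
        · exact hxs (q.dart_snd_mem_support_of_mem_darts h')
        · have hl1 : q.length = 1 := dart_start_eq hq1 h' rfl hzx.symm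
          omega
    · rcases hds with h' | h'
      · have hdd : d = (⟨(x, y), hxy⟩ : G.Dart).symm := by rw [← h', Dart.symm_symm]
        rw [hdd] at hd
        rcases hcase with hxs | ⟨hzx, hlen⟩
        · exact hxs (q.dart_snd_mem_support_of_mem_darts hd)
        · have hl1 : q.length = 1 := dart_start_eq hq1 hd rfl hzx.symm
          omega
      · exact no_reversed_pair hq1 d hd h'
  refine ⟨R', T', ⟨?_, ?_, ?_, ?_⟩, ?_, ⟨y, ?_, hy⟩⟩
  · rintro a b (hab | ⟨d, hd, rfl, rfl⟩)
    · exact hadj _ _ hab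
    · exact d.adj
  · rintro a b (hab | ⟨d, hd, rfl, rfl⟩)
    · rintro (hba | ⟨d, hd, h1, h2⟩)
      · exact hasym _ _ hab hba
      · obtain ⟨haT, hbT⟩ := hmem _ _ hab
        rcases hdart_not d hd with h' | h'
        · exact h' (h1 ▸ hbT)
        · exact h' (h2 ▸ haT)
    · rintro (hba | ⟨d', hd', h1, h2⟩)
      · obtain ⟨hbT, haT⟩ := hmem _ _ hba
        rcases hdart_not d hd with h' | h'
        · exact h' haT
        · exact h' hbT
      · have hdd : d' = d.symm := by
          apply Dart.ext
          rw [Dart.symm_toProd]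
          exact Prod.ext h1 h2
        exact hrev d hd (hdd ▸ hd')
  · rintro a b (hab | ⟨d, hd, rfl, rfl⟩)
    · obtain ⟨h1, h2⟩ := hmem _ _ hab
      exact ⟨Or.inl h1, Or.inl h2⟩
    · exact ⟨Or.inr (w.dart_fst_mem_support_of_mem_darts hd),
        Or.inr (w.dart_snd_mem_support_of_mem_darts hd)⟩
  · have hDmono : ∀ a b, dartRel w a b → R' a b := fun a b h => Or.inr h
    have hRmono : ∀ a b, R a b → R' a b := fun a b h => Or.inl h
    have hreach1 : ∀ a ∈ w.support, Relation.ReflTransGen R' x a :=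
      fun a ha => Relation.ReflTransGen.mono hDmono _ _ ((rtg_darts w a ha).1)
    have hreach2 : ∀ a ∈ w.support, Relation.ReflTransGen R' a z :=
      fun a ha => Relation.ReflTransGen.mono hDmono _ _ ((rtg_darts w a ha).2)
    have hold : ∀ a ∈ T, ∀ b ∈ T, Relation.ReflTransGen R' a b :=
      fun a ha b hb => Relation.ReflTransGen.mono hRmono _ _ (hstr a ha b hb)
    intro a ha b hb
    rcases ha with ha | ha <;> rcases hb with hb | hb
    · exact hold a ha b hb
    · exact (hold a ha x hx).trans (hreach1 b hb)
    · exact (hreach2 a ha).trans (hold z hz b hb)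
    · exact ((hreach2 a ha).trans (hold z hz x hx)).trans (hreach1 b hb)
  · exact fun a ha => Or.inl ha
  · refine Or.inr ?_
    show y ∈ w.support
    rw [hw, Walk.support_cons]
    exact List.mem_cons_of_mem _ q.start_mem_support

/-- Robbins' theorem (weak form): a suitably connected graph has a strongly connected
orientation of (some of) its edges. -/
lemma robbins [Fintype V] (hcard : 3 ≤ Fintype.card V) (hG : G.Connected)
    (h2 : ∀ x : V, (G.induce ({x}ᶜ : Set V)).Connected) :
    ∃ R : V → V → Prop, (∀ x y, R x y → G.Adj x y) ∧ (∀ x y, R x y → ¬ R y x) ∧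
      ∀ u v : V, Relation.ReflTransGen R u v := by
  have hne : Nonempty V := Fintype.card_pos_iff.mp (by omega)
  obtain ⟨v₀⟩ := hne
  have key : ∀ n : ℕ, ∀ T : Set V, ∀ R : V → V → Prop, Good G R T → T.Nonempty →
      Tᶜ.ncard ≤ n → ∃ R', Good G R' Set.univ := by
    intro n
    induction n with
    | zero =>
      intro T R hg hneT h0
      have hc0 : Tᶜ.ncard = 0 := Nat.le_zero.mp h0
      have hce : Tᶜ = ∅ := (Set.ncard_eq_zero (Set.toFinite _)).mp hc0
      have hT : T = Set.univ := by
        rw [← Set.compl_empty]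
        rw [← hce, compl_compl]
      exact ⟨R, hT ▸ hg⟩
    | succ n ih =>
      intro T R hg hneT hc
      by_cases hT : T = Set.univ
      · exact ⟨R, hT ▸ hg⟩
      · obtain ⟨R', T', hg', hsub, y, hyT', hyT⟩ := step_lemma hcard hG h2 hg hneT hT
        apply ih T' R' hg' (hneT.mono hsub)
        have hssub : T'ᶜ ⊂ Tᶜ := by
          refine ⟨Set.compl_subset_compl.mpr hsub, ?_⟩
          intro hcon
          exact (hcon hyT : y ∈ T'ᶜ) hyT'
        have := Set.ncard_lt_ncard hssub (Set.toFinite _)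
        omega
  have hgood0 : Good G (fun _ _ => False) ({v₀} : Set V) := by
    refine ⟨fun _ _ h => h.elim, fun _ _ h => h.elim, fun _ _ h => h.elim, ?_⟩
    intro a ha b hb
    rw [Set.mem_singleton_iff] at ha hb
    rw [ha, hb]
  obtain ⟨R, hg⟩ := key (Fintype.card V) {v₀} (fun _ _ => False) hgood0 ⟨v₀, rfl⟩
    (le_trans (Set.ncard_le_ncard (Set.subset_univ _) (Set.toFinite _))
      (by rw [Set.ncard_univ, Nat.card_eq_fintype_card]))
  exact ⟨R, hg.1, hg.2.1, fun u v => hg.2.2.2 u trivial v trivial⟩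

end StrongAux

theorem stmt_6 [Fintype V] (G : SimpleGraph V) (hbip : G.Colorable 2)
    (h2c : KConnected 2 G) :
    pc G = 2 ∧ ∃ c : Sym2 V → Fin 2, HasStrongProp G c := by
  classical
  obtain ⟨hcard2, hS⟩ := h2c
  have hcard : 3 ≤ Fintype.card V := hcard2
  have hG : G.Connected := by
    have h := hS ∅ (by simp)
    have he : ((↑(∅ : Finset V) : Set V))ᶜ = Set.univ := by simp
    rw [he] at h
    exact (induceUnivIso G).connected_iff.mp h
  have h2 : ∀ x : V, (G.induce ({x}ᶜ : Set V)).Connected := by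
    intro x
    have h := hS {x} (by simp)
    have he : ((↑({x} : Finset V) : Set V)) = ({x} : Set V) := by simp
    rw [he] at h
    exact h
  obtain ⟨C⟩ := hbip
  set β : V → Fin 2 := fun v => C v with hβdef
  have hβ : ∀ x y : V, G.Adj x y → β x ≠ β y := fun x y h => C.valid h
  obtain ⟨R, hadj, hasym, hstrng⟩ := StrongAux.robbins hcard hG h2
  set c := StrongAux.col β R hasym with hcdef
  have hpcc : IsProperConnColoring G c := by
    intro u v
    obtain ⟨p, hp⟩ := StrongAux.exists_walk_of_rtg hadj (hstrng u v)
    exact ⟨p.bypass, p.bypass_isPath,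
      StrongAux.fwd_proper hasym hβ p.bypass (fun d hd => hp d (p.darts_bypass_subset hd))⟩
  have hstrong : HasStrongProp G c := by
    refine ⟨hpcc, ?_⟩
    intro u v huv
    obtain ⟨p, hp⟩ := StrongAux.exists_walk_of_rtg hadj (hstrng u v)
    obtain ⟨p', hp'⟩ := StrongAux.exists_walk_of_rtg hadj (hstrng v u)
    set p₁ := p.bypass with hp₁def
    have hp₁d : ∀ d ∈ p₁.darts, R d.fst d.snd := fun d hd => hp d (p.darts_bypass_subset hd)
    set p₂ := p'.bypass.reverse with hp₂def
    have hp₂path : p₂.IsPath := p'.bypass_isPath.reverse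
    have hpbd : ∀ d ∈ p'.bypass.darts, R d.fst d.snd :=
      fun d hd => hp' d (p'.darts_bypass_subset hd)
    have hp₂prop : IsProperWalk c p₂ := by
      have h1 : IsProperWalk c p'.bypass := StrongAux.fwd_proper hasym hβ _ hpbd
      unfold IsProperWalk List.Chain' at h1 ⊢
      rw [hp₂def, Walk.edges_reverse, List.isChain_reverse]
      exact h1.imp fun _ _ h hc => h hc.symm
    have hh1 : p₁.edges.head?.map c = some (β u) := StrongAux.fwd_head hasym p₁ huv hp₁d
    obtain ⟨w1, hw1, hl1⟩ :=
      StrongAux.fwd_last p₁ (StrongAux.edges_ne_nil_of_ne p₁ huv) hp₁d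
    obtain ⟨w2, hw2, hl2⟩ :=
      StrongAux.fwd_last p'.bypass (StrongAux.edges_ne_nil_of_ne _ huv.symm) hpbd
    have hh2' : p'.bypass.edges.head?.map c = some (β v) :=
      StrongAux.fwd_head hasym p'.bypass huv.symm hpbd
    have e2 : p₂.edges = p'.bypass.edges.reverse := Walk.edges_reverse _
    have hh2 : p₂.edges.head?.map c = some (c s(w2, u)) := by
      rw [e2, List.head?_reverse, hl2, Option.map_some]
    have hl2' : p₂.edges.getLast?.map c = some (β v) := by
      rw [e2, List.getLast?_reverse]
      exact hh2'
    refine ⟨p₁, p₂, p.bypass_isPath, hp₂path,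
      StrongAux.fwd_proper hasym hβ _ hp₁d, hp₂prop, ?_, ?_⟩
    · rw [hh1, hh2, hcdef, StrongAux.col_eq_fwd hasym hw2]
      intro hcon
      exact (hβ w2 u (hadj _ _ hw2)) (Option.some_inj.mp hcon).symm
    · rw [hl2', hl1, Option.map_some, hcdef, StrongAux.col_eq_fwd hasym hw1]
      intro hcon
      exact (hβ w1 v (hadj _ _ hw1)) (Option.some_inj.mp hcon)
  have hmem2 : 2 ∈ {k | ∃ c' : Sym2 V → Fin k, IsProperConnColoring G c'} := ⟨c, hpcc⟩
  refine ⟨le_antisymm (Nat.sInf_le hmem2) ?_, ⟨c, hstrong⟩⟩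
  refine le_csInf ⟨2, hmem2⟩ ?_
  rintro k ⟨ck, hck⟩
  by_contra hk
  push_neg at hk
  interval_cases k
  · have hpos : 0 < Fintype.card V := by omega
    have : Nonempty V := Fintype.card_pos_iff.mp hpos
    obtain ⟨v₀⟩ := this
    exact (ck s(v₀, v₀)).elim0
  · have hadjall : ∀ a b : V, a ≠ b → G.Adj a b := by
      intro a b hab
      obtain ⟨p, hppath, hpr⟩ := hck a b
      cases p with
      | nil => exact absurd rfl hab
      | @cons a m b h q =>
        rcases hq : q.edges with _ | ⟨f, rest⟩
        · have hmb : m = b := StrongAux.eq_of_edges_nil q hq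
          exact hmb ▸ h
        · exfalso
          unfold IsProperWalk at hpr
          rw [Walk.edges_cons, hq] at hpr
          exact (List.isChain_cons_cons.mp hpr).1 (Subsingleton.elim _ _)
    obtain ⟨a, b, hab⟩ := Fintype.exists_pair_of_one_lt_card (α := V) (by omega)
    have hex : ∃ d : V, d ≠ a ∧ d ≠ b := by
      by_contra hcon
      push_neg at hcon
      have hsub : (Finset.univ : Finset V) ⊆ {a, b} := by
        intro x _
        by_cases hax : x = a
        · simp [hax]
        · simp [hcon x hax]
      have h1 := Finset.card_le_card hsub
      have h2' : ({a, b} : Finset V).card ≤ 2 :=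
        (Finset.card_insert_le _ _).trans (by simp)
      rw [Finset.card_univ] at h1
      omega
    obtain ⟨d, hda, hdb⟩ := hex
    have h1 := hβ a b (hadjall a b hab)
    have h2' := hβ a d (hadjall a d (Ne.symm hda))
    have h3 := hβ b d (hadjall b d (Ne.symm hdb))
    have hfin : ∀ x y z : Fin 2, x ≠ y → x ≠ z → y ≠ z → False := by decide
    exact hfin _ _ _ h1 h2' h3
end

section
/- If G is a 3-connected noncomplete graph, then pc(G) = 2 and there exists a 2-edge-coloring c of G such that G has the strong property under c. -/
open SimpleGraph

variable {V : Type*}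

namespace PCaux
open Finset

attribute [local instance] Classical.propDecidable

variable {V : Type*}

def crossP (S : Finset V) (e : Sym2 V) : Prop :=
  Sym2.lift ⟨fun a b => (a ∈ S ∧ b ∉ S) ∨ (b ∈ S ∧ a ∉ S), by
    intro a b; apply propext; tauto⟩ e

@[simp] lemma crossP_mk {S : Finset V} {a b : V} :
    crossP S s(a, b) ↔ (a ∈ S ∧ b ∉ S) ∨ (b ∈ S ∧ a ∉ S) := by
  simp [crossP]

lemma crossP_elim {C : Finset V} {e : Sym2 V} (h : crossP C e) :
    ∃ x y, e = s(x, y) ∧ x ∈ C ∧ y ∉ C := by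
  induction e with
  | _ a b =>
    rw [crossP_mk] at h
    rcases h with ⟨h1, h2⟩ | ⟨h1, h2⟩
    · exact ⟨a, b, rfl, h1, h2⟩
    · exact ⟨b, a, Sym2.eq_swap, h1, h2⟩

lemma exists_cross_adj {W : Type*} {H : SimpleGraph W} {C : Set W} :
    ∀ {a b : W} (_ : H.Walk a b), a ∈ C → b ∉ C →
      ∃ x y, H.Adj x y ∧ x ∈ C ∧ y ∉ C := by
  intro a b p
  induction p with
  | nil => intro ha hb; exact absurd ha hb
  | @cons a m b h q ih =>
    intro ha hb
    by_cases hm : m ∈ C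
    · exact ih hm hb
    · exact ⟨a, m, h, ha, hm⟩

lemma no_small_cover [Fintype V] {G : SimpleGraph V} (h3c : KConnected 3 G)
    {C S : Finset V} {a b : V} (hcard : S.card < 3)
    (ha : a ∈ C) (haS : a ∉ S) (hb : b ∉ C) (hbS : b ∉ S)
    (cover : ∀ e ∈ G.edgeFinset.filter (crossP C), ∃ w ∈ S, w ∈ e) : False := by
  have hconn := h3c.2 S hcard
  have haS' : a ∈ ((↑S : Set V)ᶜ) := by simpa using haS
  have hbS' : b ∈ ((↑S : Set V)ᶜ) := by simpa using hbS
  obtain ⟨p⟩ := hconn ⟨a, haS'⟩ ⟨b, hbS'⟩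
  obtain ⟨x, y, hadj, hx, hy⟩ :=
    exists_cross_adj (C := ({w | (w : V) ∈ C} : Set ↥((↑S : Set V)ᶜ))) p (by exact ha) (by exact hb)
  have hGadj : G.Adj (x : V) (y : V) := hadj
  have hmem : s((x : V), (y : V)) ∈ G.edgeFinset.filter (crossP C) := by
    rw [mem_filter, mem_edgeFinset]
    exact ⟨hGadj, crossP_mk.mpr (Or.inl ⟨hx, hy⟩)⟩
  obtain ⟨w, hwS, hwe⟩ := cover _ hmem
  rw [Sym2.mem_iff] at hwe
  rcases hwe with rfl | rfl
  · exact x.2 hwS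
  · exact y.2 hwS

lemma exists_not_mem_of_ne_univ {C : Finset V} [Fintype V] (h : C ≠ univ) :
    ∃ b, b ∉ C := by
  by_contra hc
  push_neg at hc
  exact h (eq_univ_iff_forall.mpr hc)

lemma three_cut [Fintype V] {G : SimpleGraph V} (h3c : KConnected 3 G)
    {C : Finset V} (hC : C.Nonempty) (hCu : C ≠ univ) :
    2 < (G.edgeFinset.filter (crossP C)).card := by
  by_contra hle
  push_neg at hle
  set s := G.edgeFinset.filter (crossP C) with hs
  have hcard4 : 3 < Fintype.card V := h3c.1
  rcases s.eq_empty_or_nonempty with hse | ⟨e1, he1⟩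
  · obtain ⟨a, ha⟩ := hC
    obtain ⟨b, hb⟩ := exists_not_mem_of_ne_univ hCu
    exact no_small_cover h3c (S := ∅) (by norm_num) ha (notMem_empty a) hb
      (notMem_empty b) (fun e he => by rw [← hs, hse] at he; exact absurd he (notMem_empty e))
  · have he1' := he1
    rw [hs, mem_filter] at he1'
    obtain ⟨x1, y1, he1eq, hx1, hy1⟩ := crossP_elim he1'.2
    by_cases h2 : ∃ e2 ∈ s, e2 ≠ e1
    · obtain ⟨e2, he2, hne⟩ := h2
      have he2' := he2
      rw [hs, mem_filter] at he2'
      obtain ⟨x2, y2, he2eq, hx2, hy2⟩ := crossP_elim he2'.2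
      have hcover12 : ∀ e ∈ s, e = e1 ∨ e = e2 := by
        intro e he
        have hsub : {e1, e2} ⊆ s := by
          intro f hf; rcases mem_insert.mp hf with rfl | hf
          · exact he1
          · rw [mem_singleton.mp hf]; exact he2
        have : s = {e1, e2} := by
          apply (eq_of_subset_of_card_le hsub ?_).symm
          · rw [card_insert_of_notMem (by simp [hne.symm]), card_singleton]
            exact hle
        rw [this, mem_insert, mem_singleton] at he
        exact he
      by_cases hA : ∃ a ∈ C, a ≠ x1 ∧ a ≠ x2
      · obtain ⟨a, haC, ha1, ha2⟩ := hA
        obtain ⟨b, hb⟩ := exists_not_mem_of_ne_univ hCu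
        refine no_small_cover h3c (S := {x1, x2}) ?_ haC (by simp [ha1, ha2]) hb ?_ ?_
        · exact lt_of_le_of_lt (card_insert_le _ _) (by norm_num)
        · simp only [mem_insert, mem_singleton]
          push_neg
          exact ⟨fun h => hb (h ▸ hx1), fun h => hb (h ▸ hx2)⟩
        · intro e he
          rcases hcover12 e he with rfl | rfl
          · exact ⟨x1, by simp, by rw [he1eq]; simp⟩
          · exact ⟨x2, by simp, by rw [he2eq]; simp⟩
      · by_cases hB : ∃ b, b ∉ C ∧ b ≠ y1 ∧ b ≠ y2
        · obtain ⟨b, hbC, hb1, hb2⟩ := hB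
          obtain ⟨a, haC⟩ := hC
          refine no_small_cover h3c (S := {y1, y2}) ?_ haC ?_ hbC (by simp [hb1, hb2]) ?_
          · exact lt_of_le_of_lt (card_insert_le _ _) (by norm_num)
          · simp only [mem_insert, mem_singleton]
            push_neg
            exact ⟨fun h => hy1 (h ▸ haC), fun h => hy2 (h ▸ haC)⟩
          · intro e he
            rcases hcover12 e he with rfl | rfl
            · exact ⟨y1, by simp, by rw [he1eq]; simp⟩
            · exact ⟨y2, by simp, by rw [he2eq]; simp⟩
        · push_neg at hA hB
          have hCsub : C ⊆ {x1, x2} := by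
            intro a haC
            rcases eq_or_ne a x1 with rfl | h1
            · simp
            · simp [hA a haC h1]
          have hCcsub : Cᶜ ⊆ {y1, y2} := by
            intro b hbC
            rw [mem_compl] at hbC
            rcases eq_or_ne b y1 with rfl | h1
            · simp
            · simp [hB b hbC h1]
          have hcards : C.card + Cᶜ.card = Fintype.card V := by
            rw [Finset.card_add_card_compl]
          have hC2 : C.card ≤ 2 := le_trans (card_le_card hCsub) (by
            exact le_trans (card_insert_le _ _) (by norm_num))
          have hCc2 : Cᶜ.card ≤ 2 := le_trans (card_le_card hCcsub) (by
            exact le_trans (card_insert_le _ _) (by norm_num))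
          have hx12 : x1 ≠ x2 := by
            rintro rfl
            have : C.card ≤ 1 := by
              refine le_trans (card_le_card ?_) (card_singleton x1).le
              intro a haC; simpa using hCsub haC
            omega
          have hy12 : y1 ≠ y2 := by
            rintro rfl
            have : Cᶜ.card ≤ 1 := by
              refine le_trans (card_le_card ?_) (card_singleton y1).le
              intro a haC; simpa using hCcsub haC
            omega
          refine no_small_cover h3c (S := {x1, y2}) ?_ hx2 ?_ hy1 ?_ ?_
          · exact lt_of_le_of_lt (card_insert_le _ _) (by norm_num)
          · simp only [mem_insert, mem_singleton]
            push_neg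
            exact ⟨hx12.symm, fun h => hy2 (h ▸ hx2)⟩
          · simp only [mem_insert, mem_singleton]
            push_neg
            exact ⟨fun h => hy1 (h ▸ hx1), hy12⟩
          · intro e he
            rcases hcover12 e he with rfl | rfl
            · exact ⟨x1, by simp, by rw [he1eq]; simp⟩
            · exact ⟨y2, by simp, by rw [he2eq]; simp⟩
    · push_neg at h2
      by_cases hA : ∃ a ∈ C, a ≠ x1
      · obtain ⟨a, haC, ha1⟩ := hA
        obtain ⟨b, hb⟩ := exists_not_mem_of_ne_univ hCu
        refine no_small_cover h3c (S := {x1}) (by norm_num) haC (by simp [ha1]) hb ?_ ?_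
        · simp only [mem_singleton]
          exact fun h => hb (h ▸ hx1)
        · intro e he
          rw [h2 e he, he1eq]
          exact ⟨x1, by simp, by simp⟩
      · push_neg at hA
        -- C = {x1}
        have hbig : ((C ∪ {y1})ᶜ : Finset V).Nonempty := by
          rw [← card_pos, card_compl]
          have : (C ∪ {y1}).card ≤ 2 := le_trans (card_union_le _ _) (by
            have : C.card ≤ 1 := by
              obtain ⟨a, haC⟩ := hC
              refine le_trans (card_le_card (fun w hw => ?_)) (card_singleton x1).le
              simp [hA w hw]
            simp; omega)
          omega
        obtain ⟨b, hbmem⟩ := hbig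
        rw [mem_compl, mem_union, mem_singleton] at hbmem
        push_neg at hbmem
        refine no_small_cover h3c (S := {y1}) (by norm_num) hx1 ?_ hbmem.1 ?_ ?_
        · simp only [mem_singleton]
          exact fun h => hy1 (h ▸ hx1)
        · simp [hbmem.2]
        · intro e he
          rw [h2 e he, he1eq]
          exact ⟨y1, by simp, by simp⟩



lemma maxcut_cut_ge_two [Fintype V] {G : SimpleGraph V} (h3c : KConnected 3 G)
    {A : Finset V}
    (hmax : ∀ A' : Finset V, (G.edgeFinset.filter (crossP A')).card ≤
      (G.edgeFinset.filter (crossP A)).card)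
    {C : Finset V} (hC : C.Nonempty) (hCu : C ≠ univ) :
    2 ≤ (G.edgeFinset.filter (fun e => crossP A e ∧ crossP C e)).card := by
  have htot := three_cut h3c hC hCu
  set E := G.edgeFinset
  set A' : Finset V := (A \ C) ∪ (C \ A) with hA'
  have hxor : ∀ e ∈ E, crossP A' e ↔ (crossP A e ↔ ¬ crossP C e) := by
    intro e _
    induction e with
    | _ a b =>
      simp only [crossP_mk, hA', mem_union, mem_sdiff]
      by_cases haA : a ∈ A <;> by_cases haC : a ∈ C <;>
        by_cases hbA : b ∈ A <;> by_cases hbC : b ∈ C <;>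
        simp [haA, haC, hbA, hbC]
  have key : ∀ (P : Sym2 V → Prop), (E.filter P).card =
      (E.filter (fun e => P e ∧ crossP C e)).card +
      (E.filter (fun e => P e ∧ ¬ crossP C e)).card := by
    intro P
    rw [← filter_filter, ← filter_filter, card_filter_add_card_filter_not]
  have h1 : (E.filter (crossP A')).card =
      (E.filter (fun e => ¬ crossP A e ∧ crossP C e)).card +
      (E.filter (fun e => crossP A e ∧ ¬ crossP C e)).card := by
    refine (key (crossP A')).trans ?_
    congr 1
    · refine congrArg card (filter_congr (fun e he => ?_))
      have := hxor e he; tauto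
    · refine congrArg card (filter_congr (fun e he => ?_))
      have := hxor e he; tauto
  have h2 : (E.filter (crossP A)).card =
      (E.filter (fun e => crossP A e ∧ crossP C e)).card +
      (E.filter (fun e => crossP A e ∧ ¬ crossP C e)).card := key (crossP A)
  have h3 : (E.filter (crossP C)).card =
      (E.filter (fun e => crossP A e ∧ crossP C e)).card +
      (E.filter (fun e => ¬ crossP A e ∧ crossP C e)).card := by
    rw [← filter_filter, ← filter_filter]
    conv_lhs => rw [← card_filter_add_card_filter_not (p := crossP A) (s := E.filter (crossP C))]
    congr 1 <;> rw [filter_comm]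
  have hle := hmax A'
  omega

lemma connected_of_cuts [Fintype V] [Nonempty V] {H : SimpleGraph V}
    (hcut : ∀ C : Finset V, C.Nonempty → C ≠ univ → ∃ x y, H.Adj x y ∧ x ∈ C ∧ y ∉ C) :
    H.Connected := by
  rw [connected_iff]
  refine ⟨fun u v => ?_, inferInstance⟩
  by_contra hne
  set C : Finset V := univ.filter (fun w => H.Reachable u w) with hCdef
  have hu : u ∈ C := by
    simp only [hCdef, mem_filter, mem_univ, true_and]
    exact Reachable.refl u
  have hv : v ∉ C := by simp [hCdef]; exact hne
  obtain ⟨x, y, hadj, hx, hy⟩ := hcut C ⟨u, hu⟩ (fun h => hv (h ▸ mem_univ v))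
  rw [hCdef, mem_filter] at hx
  exact hy (by simp [hCdef]; exact hx.2.trans hadj.reachable)

lemma darts_toProd_transfer {G : SimpleGraph V} {H : SimpleGraph V} :
    ∀ {u v : V} (p : G.Walk u v) (hp : ∀ e ∈ p.edges, e ∈ H.edgeSet),
      (p.transfer H hp).darts.map SimpleGraph.Dart.toProd = p.darts.map SimpleGraph.Dart.toProd := by
  intro u v p
  induction p with
  | nil => intro hp; rfl
  | cons h q ih => intro hp; simp [Walk.transfer, Walk.darts_cons, ih]; exact congrArg (List.cons _) (ih _)

lemma truncate_walk {H : SimpleGraph V} {W : Finset V} :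
    ∀ {y x : V} (q : H.Walk y x), q.IsPath → x ∈ W → y ∉ W →
      ∃ z, ∃ r : H.Walk y z, r.IsPath ∧ z ∈ W ∧ r.support ⊆ q.support ∧
        (∀ d ∈ r.darts, d.fst ∉ W) := by
  intro y x q
  induction q with
  | nil => intro _ hx hy; exact absurd hx hy
  | @cons y m x h q' ih =>
    intro hp hx hy
    by_cases hm : m ∈ W
    · refine ⟨m, Walk.cons h Walk.nil, ?_, hm, ?_, ?_⟩
      · rw [Walk.cons_isPath_iff]
        refine ⟨Walk.IsPath.nil, ?_⟩
        simp only [Walk.support_nil, List.mem_singleton]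
        intro hh; exact hy (hh ▸ hm)
      · intro w hw
        simp only [Walk.support_cons, Walk.support_nil, List.mem_cons,
          List.mem_singleton, List.not_mem_nil, or_false] at hw
        simp only [Walk.support_cons, List.mem_cons]
        rcases hw with rfl | rfl
        · exact Or.inl rfl
        · exact Or.inr (Walk.start_mem_support q')
      · intro d hd
        simp only [Walk.darts_cons, Walk.darts_nil, List.mem_singleton] at hd
        subst hd; exact hy
    · obtain ⟨z, r, hr, hz, hsub, hdarts⟩ := ih hp.of_cons hx hm
      refine ⟨z, Walk.cons h r, ?_, hz, ?_, ?_⟩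
      · rw [Walk.cons_isPath_iff]
        refine ⟨hr, fun hmem => ?_⟩
        exact (Walk.cons_isPath_iff h q').mp hp |>.2 (hsub hmem)
      · simp only [Walk.support_cons]
        exact List.cons_subset_cons y hsub
      · intro d hd
        simp only [Walk.darts_cons, List.mem_cons] at hd
        rcases hd with rfl | hd
        · exact hy
        · exact hdarts d hd

lemma reach_of_fwd_walk (D : V → V → Prop) {B : SimpleGraph V} :
    ∀ {a b : V} (w : B.Walk a b), (∀ d ∈ w.darts, D d.fst d.snd) →
      ∀ m ∈ w.support, Relation.ReflTransGen D a m ∧ Relation.ReflTransGen D m b := by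
  intro a b w
  induction w with
  | nil =>
    intro _ m hm
    rw [Walk.support_nil, List.mem_singleton] at hm
    subst hm; exact ⟨.refl, .refl⟩
  | @cons a c b h q ih =>
    intro hfwd m hm
    have hstep : D a c := hfwd ⟨(a, c), h⟩ (by simp [Walk.darts_cons])
    have hfwd' : ∀ d ∈ q.darts, D d.fst d.snd := fun d hd => hfwd d (by simp [Walk.darts_cons, hd])
    rw [Walk.support_cons, List.mem_cons] at hm
    rcases hm with rfl | hm
    · refine ⟨.refl, ?_⟩
      exact (Relation.ReflTransGen.single hstep).trans
        (ih hfwd' c (Walk.start_mem_support q)).2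
    · obtain ⟨h1, h2⟩ := ih hfwd' m hm
      exact ⟨(Relation.ReflTransGen.single hstep).trans h1, h2⟩

def Inv (B : SimpleGraph V) (W : Finset V) (D : V → V → Prop) : Prop :=
  (∀ a b, D a b → B.Adj a b ∧ a ∈ W ∧ b ∈ W) ∧
  (∀ a b, D a b → ¬ D b a) ∧
  (∀ a ∈ W, ∀ b ∈ W, Relation.ReflTransGen D a b)

lemma extend_orient [Fintype V] {B : SimpleGraph V}
    (hcut : ∀ C : Finset V, C.Nonempty → C ≠ univ → ∀ e₀ : Sym2 V,
      ∃ x y, B.Adj x y ∧ x ∈ C ∧ y ∉ C ∧ s(x, y) ≠ e₀)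
    {W : Finset V} {D : V → V → Prop} (hW : W.Nonempty) (hWu : W ≠ univ)
    (hI : Inv B W D) : ∃ W' D', W ⊂ W' ∧ Inv B W' D' := by
  obtain ⟨v1, hv1⟩ := hW
  obtain ⟨x, y, hxy, hxW, hyW, -⟩ := hcut W ⟨v1, hv1⟩ hWu s(v1, v1)
  have hNe : Nonempty V := ⟨x⟩
  set e : Sym2 V := s(x, y) with hedef
  set H : SimpleGraph V := B.deleteEdges {e} with hHdef
  have hHconn : H.Connected := by
    apply connected_of_cuts
    intro C hC hCu
    obtain ⟨x', y', hadj, h1, h2, hne⟩ := hcut C hC hCu e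
    refine ⟨x', y', ?_, h1, h2⟩
    rw [hHdef, SimpleGraph.deleteEdges_adj]
    exact ⟨hadj, by simp [hne]⟩
  obtain ⟨p⟩ := hHconn.preconnected y x
  obtain ⟨z, r, hr, hz, -, hdartsW⟩ := truncate_walk p.bypass (Walk.bypass_isPath p) hxW hyW
  have hredge : ∀ f ∈ r.edges, f ∈ B.edgeSet := by
    intro f hf
    have := r.edges_subset_edgeSet hf
    rw [hHdef, SimpleGraph.edgeSet_deleteEdges] at this
    exact this.1
  set rB : B.Walk y z := r.transfer B hredge with hrBdef
  set w : B.Walk x z := Walk.cons hxy rB with hwdef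
  set W' : Finset V := W ∪ w.support.toFinset with hW'def
  set D' : V → V → Prop := fun a b => D a b ∨ ∃ d ∈ w.darts, d.toProd = (a, b) with hD'def
  have hrB_darts : ∀ d ∈ rB.darts, d.fst ∉ W := by
    intro d hd
    have hmem : d.toProd ∈ rB.darts.map SimpleGraph.Dart.toProd := List.mem_map_of_mem hd
    rw [hrBdef, darts_toProd_transfer r hredge] at hmem
    obtain ⟨d', hd', hdd⟩ := List.mem_map.mp hmem
    have : d'.fst = d.fst := congrArg Prod.fst hdd
    rw [← this]
    exact hdartsW d' hd'
  have hwtrail : w.IsTrail := by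
    rw [hwdef, Walk.isTrail_cons]
    refine ⟨(hr.transfer hredge).isTrail, ?_⟩
    intro hmem
    rw [hrBdef, Walk.edges_transfer] at hmem
    have := r.edges_subset_edgeSet hmem
    rw [hHdef, SimpleGraph.edgeSet_deleteEdges] at this
    exact this.2 rfl
  have hearW : ∀ d ∈ w.darts, d.fst ∉ W ∨ d.snd ∉ W := by
    intro d hd
    rw [hwdef, Walk.darts_cons, List.mem_cons] at hd
    rcases hd with rfl | hd
    · exact Or.inr hyW
    · exact Or.inl (hrB_darts d hd)
  have hsub : ∀ a b, D' a b → B.Adj a b ∧ a ∈ W' ∧ b ∈ W' := by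
    intro a b hab
    rcases hab with hab | ⟨d, hd, hdp⟩
    · obtain ⟨h1, h2, h3⟩ := hI.1 a b hab
      exact ⟨h1, mem_union_left _ h2, mem_union_left _ h3⟩
    · have hfst : d.fst = a := congrArg Prod.fst hdp
      have hsnd : d.snd = b := congrArg Prod.snd hdp
      refine ⟨?_, ?_, ?_⟩
      · have := d.adj; rwa [hfst, hsnd] at this
      · have := Walk.dart_fst_mem_support_of_mem_darts w hd
        rw [hfst] at this
        exact mem_union_right _ (List.mem_toFinset.mpr this)
      · have := Walk.dart_snd_mem_support_of_mem_darts w hd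
        rw [hsnd] at this
        exact mem_union_right _ (List.mem_toFinset.mpr this)
  have hasym : ∀ a b, D' a b → ¬ D' b a := by
    intro a b hab hba
    rcases hab with hab | ⟨d, hd, hdp⟩
    · rcases hba with hba | ⟨d, hd, hdp⟩
      · exact hI.2.1 a b hab hba
      · obtain ⟨-, haW, hbW⟩ := hI.1 a b hab
        rcases hearW d hd with h | h
        · exact h (by rw [congrArg Prod.fst hdp]; exact hbW)
        · exact h (by rw [congrArg Prod.snd hdp]; exact haW)
    · rcases hba with hba | ⟨d', hd', hdp'⟩
      · obtain ⟨-, hbW, haW⟩ := hI.1 b a hba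
        rcases hearW d hd with h | h
        · exact h (by rw [congrArg Prod.fst hdp]; exact haW)
        · exact h (by rw [congrArg Prod.snd hdp]; exact hbW)
      · have hne : d ≠ d' := by
          intro hdd
          have hpp : (a, b) = (b, a) := by rw [← hdp, hdd, hdp']
          have hab2 : a = b := congrArg Prod.fst hpp
          have hadj := d.adj
          rw [congrArg Prod.fst hdp, congrArg Prod.snd hdp] at hadj
          rw [hab2] at hadj
          exact B.loopless.irrefl b hadj
        have hedge : d.edge = d'.edge := by
          show s(d.toProd.1, d.toProd.2) = s(d'.toProd.1, d'.toProd.2)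
          rw [hdp, hdp']
          exact Sym2.eq_swap
        have hnodup : (w.darts.map SimpleGraph.Dart.edge).Nodup := hwtrail.edges_nodup
        exact hne (List.inj_on_of_nodup_map hnodup hd hd' hedge)
  have hfwd : ∀ d ∈ w.darts, D' d.fst d.snd := fun d hd => Or.inr ⟨d, hd, rfl⟩
  have hreach := reach_of_fwd_walk D' w hfwd
  have hmono : ∀ {a b : V}, Relation.ReflTransGen D a b → Relation.ReflTransGen D' a b :=
    fun h => by
      induction h with
      | refl => exact .refl
      | tail _ hbc ih => exact ih.tail (Or.inl hbc)
  have hxsup : x ∈ w.support := Walk.start_mem_support w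
  have hzsup : z ∈ w.support := Walk.end_mem_support w
  have hAz : ∀ a ∈ W', Relation.ReflTransGen D' a z := by
    intro a ha
    rw [hW'def, mem_union] at ha
    rcases ha with ha | ha
    · exact (hmono (hI.2.2 a ha x hxW)).trans (hreach z hzsup).1
    · rw [List.mem_toFinset] at ha
      exact (hreach a ha).2
  have hxB : ∀ b ∈ W', Relation.ReflTransGen D' x b := by
    intro b hb
    rw [hW'def, mem_union] at hb
    rcases hb with hb | hb
    · exact (hreach z hzsup).1.trans (hmono (hI.2.2 z hz b hb))
    · rw [List.mem_toFinset] at hb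
      exact (hreach b hb).1
  have hymem : y ∈ W' := by
    rw [hW'def, mem_union]
    right
    rw [List.mem_toFinset, hwdef, Walk.support_cons]
    right
    rw [hrBdef, Walk.support_transfer]
    exact Walk.start_mem_support r
  refine ⟨W', D', ?_, hsub, hasym, ?_⟩
  · rw [Finset.ssubset_def]
    exact ⟨subset_union_left, fun hss => hyW (hss hymem)⟩
  · intro a ha b hb
    have hzx : Relation.ReflTransGen D' z x := hmono (hI.2.2 z hz x hxW)
    exact (hAz a ha).trans (hzx.trans (hxB b hb))

lemma exists_strong_orientation [Fintype V] [Nonempty V] {B : SimpleGraph V}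
    (hcut : ∀ C : Finset V, C.Nonempty → C ≠ univ → ∀ e₀ : Sym2 V,
      ∃ x y, B.Adj x y ∧ x ∈ C ∧ y ∉ C ∧ s(x, y) ≠ e₀) :
    ∃ D : V → V → Prop, (∀ a b, D a b → B.Adj a b) ∧ (∀ a b, D a b → ¬ D b a) ∧
      ∀ a b, Relation.ReflTransGen D a b := by
  have key : ∀ n (W : Finset V) (D : V → V → Prop), W.Nonempty → Inv B W D →
      Fintype.card V ≤ W.card + n → ∃ D', Inv B univ D' := by
    intro n
    induction n with
    | zero =>
      intro W D hW hI hc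
      have hWu : W = univ := eq_of_subset_of_card_le (subset_univ W)
        (by rw [card_univ]; omega)
      exact hWu ▸ ⟨D, hI⟩
    | succ n ih =>
      intro W D hW hI hc
      by_cases hWu : W = univ
      · exact hWu ▸ ⟨D, hI⟩
      · obtain ⟨W', D', hss, hI'⟩ := extend_orient hcut hW hWu hI
        refine ih W' D' (hW.mono hss.subset) hI' ?_
        have := card_lt_card hss
        have := card_le_univ W'
        omega
  obtain ⟨v0⟩ := ‹Nonempty V›
  have base : Inv B {v0} (fun _ _ => False) := by
    refine ⟨fun a b h => h.elim, fun a b h => h.elim, ?_⟩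
    intro a ha b hb
    rw [mem_singleton] at ha hb
    subst ha; subst hb
    exact Relation.ReflTransGen.refl
  obtain ⟨D, hI⟩ := key (Fintype.card V) {v0} (fun _ _ => False) ⟨v0, mem_singleton_self v0⟩ base (by simp)
  exact ⟨D, fun a b h => (hI.1 a b h).1, hI.2.1,
    fun a b => hI.2.2 a (mem_univ a) b (mem_univ b)⟩

noncomputable def colr (A : Finset V) (D : V → V → Prop) : Sym2 V → Fin 2 :=
  Sym2.lift ⟨fun a b => if (a ∈ A ∧ D a b) ∨ (b ∈ A ∧ D b a) then 0 else 1, by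
    intro a b
    exact if_congr or_comm rfl rfl⟩

lemma colr_eq {A : Finset V} {D : V → V → Prop}
    (hasym : ∀ a b, D a b → ¬ D b a) {a b : V} (h : D a b) :
    colr A D s(a, b) = if a ∈ A then 0 else 1 := by
  by_cases ha : a ∈ A
  · rw [if_pos ha]
    exact if_pos (Or.inl ⟨ha, h⟩)
  · rw [if_neg ha]
    apply if_neg
    rintro (⟨h1, -⟩ | ⟨-, h2⟩)
    · exact ha h1
    · exact hasym a b h h2

section Coloring

variable {G : SimpleGraph V} {A : Finset V} {D : V → V → Prop}

lemma fwd_proper (hasym : ∀ a b, D a b → ¬ D b a)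
    (hDA : ∀ a b, D a b → (a ∈ A ↔ b ∉ A)) :
    ∀ {u v : V} (p : G.Walk u v), (∀ d ∈ p.darts, D d.fst d.snd) →
      p.edges.Chain' (fun e f => colr A D e ≠ colr A D f) := by
  intro u v p
  induction p with
  | nil => intro _; simp [Walk.edges_nil, List.Chain']
  | @cons u m v h q ih =>
    intro hfwd
    have hDum : D u m := hfwd ⟨(u, m), h⟩ (by simp [Walk.darts_cons])
    have hq : ∀ d ∈ q.darts, D d.fst d.snd := fun d hd =>
      hfwd d (by simp [Walk.darts_cons, hd])
    rw [Walk.edges_cons, List.Chain', List.isChain_cons]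
    refine ⟨?_, ih hq⟩
    intro f hf
    cases q with
    | nil => simp [Walk.edges_nil] at hf
    | @cons m m2 v h2 q2 =>
      rw [Walk.edges_cons, List.head?_cons, Option.mem_some_iff] at hf
      subst hf
      have hDm : D m m2 := hq ⟨(m, m2), h2⟩ (by simp [Walk.darts_cons])
      rw [colr_eq hasym hDum, colr_eq hasym hDm]
      have := hDA u m hDum
      by_cases hu : u ∈ A
      · have hm : m ∉ A := by tauto
        simp [hu, hm]
      · have hm : m ∈ A := by tauto
        simp [hu, hm]

lemma exists_fwd_path (hDG : ∀ a b, D a b → G.Adj a b) {u v : V}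
    (h : Relation.ReflTransGen D u v) :
    ∃ p : G.Walk u v, p.IsPath ∧ ∀ d ∈ p.darts, D d.fst d.snd := by
  have hwalk : ∃ p : G.Walk u v, ∀ d ∈ p.darts, D d.fst d.snd := by
    induction h with
    | refl => exact ⟨Walk.nil, by simp [Walk.darts_nil]⟩
    | @tail b c hub hbc ih =>
      obtain ⟨p, hp⟩ := ih
      refine ⟨p.append (Walk.cons (hDG b c hbc) Walk.nil), ?_⟩
      intro d hd
      rw [Walk.darts_append, List.mem_append] at hd
      rcases hd with hd | hd
      · exact hp d hd
      · simp only [Walk.darts_cons, Walk.darts_nil, List.mem_singleton] at hd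
        subst hd; exact hbc
  obtain ⟨p, hp⟩ := hwalk
  exact ⟨p.bypass, p.bypass_isPath, fun d hd => hp d (p.darts_bypass_subset hd)⟩

lemma color_head (hasym : ∀ a b, D a b → ¬ D b a) :
    ∀ {u v : V} (p : G.Walk u v), (∀ d ∈ p.darts, D d.fst d.snd) → ¬ p.Nil →
      p.edges.head?.map (colr A D) = some (if u ∈ A then 0 else 1) := by
  intro u v p
  cases p with
  | nil => intro _ hn; exact absurd Walk.nil_nil hn
  | @cons u m v h q =>
    intro hfwd _
    have hDum : D u m := hfwd ⟨(u, m), h⟩ (by simp [Walk.darts_cons])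
    rw [Walk.edges_cons, List.head?_cons, Option.map_some, colr_eq hasym hDum]

lemma color_last (hasym : ∀ a b, D a b → ¬ D b a)
    (hDA : ∀ a b, D a b → (a ∈ A ↔ b ∉ A)) :
    ∀ {u v : V} (p : G.Walk u v), (∀ d ∈ p.darts, D d.fst d.snd) → ¬ p.Nil →
      p.edges.getLast?.map (colr A D) = some (if v ∈ A then 1 else 0) := by
  intro u v p
  induction p with
  | nil => intro _ hn; exact absurd Walk.nil_nil hn
  | @cons u m v h q ih =>
    intro hfwd _
    have hDum : D u m := hfwd ⟨(u, m), h⟩ (by simp [Walk.darts_cons])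
    have hq : ∀ d ∈ q.darts, D d.fst d.snd := fun d hd =>
      hfwd d (by simp [Walk.darts_cons, hd])
    cases q with
    | nil =>
      rw [Walk.edges_cons, Walk.edges_nil]
      simp only [List.getLast?_singleton, Option.map_some]
      rw [colr_eq hasym hDum]
      have := hDA u m hDum
      by_cases hv : m ∈ A
      · have hu : u ∉ A := by tauto
        simp [hu, hv]
      · have hu : u ∈ A := by tauto
        simp [hu, hv]
    | @cons m m2 v h2 q2 =>
      rw [Walk.edges_cons, Walk.edges_cons, List.getLast?_cons_cons]
      rw [← Walk.edges_cons h2 q2]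
      exact ih hq Walk.not_nil_cons

end Coloring

def cutGraph (G : SimpleGraph V) (A : Finset V) : SimpleGraph V where
  Adj a b := G.Adj a b ∧ crossP A s(a, b)
  symm := ⟨by
    rintro a b ⟨h1, h2⟩
    exact ⟨h1.symm, by rwa [Sym2.eq_swap]⟩⟩
  loopless := ⟨fun a h => G.loopless.irrefl a h.1⟩

lemma cutGraph_cut [Fintype V] {G : SimpleGraph V} (h3c : KConnected 3 G) {A : Finset V}
    (hmax : ∀ A' : Finset V, (G.edgeFinset.filter (crossP A')).card ≤
      (G.edgeFinset.filter (crossP A)).card) :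
    ∀ C : Finset V, C.Nonempty → C ≠ univ → ∀ e₀ : Sym2 V,
      ∃ x y, (cutGraph G A).Adj x y ∧ x ∈ C ∧ y ∉ C ∧ s(x, y) ≠ e₀ := by
  intro C hC hCu e₀
  have h2 := maxcut_cut_ge_two h3c hmax hC hCu
  obtain ⟨f, hf, hfe⟩ := Finset.exists_mem_ne (lt_of_lt_of_le one_lt_two h2) e₀
  rw [mem_filter] at hf
  obtain ⟨x, y, rfl, hx, hy⟩ := crossP_elim hf.2.2
  have hGadj : G.Adj x y := by
    have := hf.1
    rwa [mem_edgeFinset, mem_edgeSet] at this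
  exact ⟨x, y, ⟨hGadj, hf.2.1⟩, hx, hy, hfe⟩

end PCaux

theorem stmt_7 [Fintype V] (G : SimpleGraph V) (h3c : KConnected 3 G) (hnc : G ≠ ⊤) :
    pc G = 2 ∧ ∃ c : Sym2 V → Fin 2, HasStrongProp G c := by
  classical
  have hcard := h3c.1
  have hNe : Nonempty V := Fintype.card_pos_iff.mp (by omega)
  obtain ⟨A, -, hmaxmem⟩ := Finset.exists_max_image (Finset.univ : Finset (Finset V))
      (fun A => (G.edgeFinset.filter (PCaux.crossP A)).card) ⟨∅, Finset.mem_univ ∅⟩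
  have hmax : ∀ A' : Finset V, (G.edgeFinset.filter (PCaux.crossP A')).card ≤
      (G.edgeFinset.filter (PCaux.crossP A)).card := fun A' => hmaxmem A' (Finset.mem_univ A')
  obtain ⟨D, hDB, hasym, hconn⟩ :=
    PCaux.exists_strong_orientation (B := PCaux.cutGraph G A) (PCaux.cutGraph_cut h3c hmax)
  have hDG : ∀ a b, D a b → G.Adj a b := fun a b h => (show G.Adj a b ∧ PCaux.crossP A s(a, b) from hDB a b h).1
  have hDA : ∀ a b, D a b → (a ∈ A ↔ b ∉ A) := by
    intro a b h
    have := (show G.Adj a b ∧ PCaux.crossP A s(a, b) from hDB a b h).2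
    rw [PCaux.crossP_mk] at this
    tauto
  set c : Sym2 V → Fin 2 := PCaux.colr A D with hcdef
  have hstrong : HasStrongProp G c := by
    constructor
    · intro u v
      rcases eq_or_ne u v with rfl | hne
      · exact ⟨Walk.nil, Walk.IsPath.nil, by simp [IsProperWalk, Walk.edges_nil, List.Chain']⟩
      · obtain ⟨p, hp, hfwd⟩ := PCaux.exists_fwd_path hDG (hconn u v)
        exact ⟨p, hp, PCaux.fwd_proper hasym hDA p hfwd⟩
    · intro u v hne
      obtain ⟨p₁, hp₁, hfwd₁⟩ := PCaux.exists_fwd_path hDG (hconn u v)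
      obtain ⟨r, hr, hfwdr⟩ := PCaux.exists_fwd_path hDG (hconn v u)
      have hn1 : ¬ p₁.Nil := Walk.not_nil_of_ne hne
      have hnr : ¬ r.Nil := Walk.not_nil_of_ne hne.symm
      refine ⟨p₁, r.reverse, hp₁, hr.reverse, PCaux.fwd_proper hasym hDA p₁ hfwd₁, ?_, ?_, ?_⟩
      · show (r.reverse.edges).Chain' _
        rw [Walk.edges_reverse, List.Chain', List.isChain_reverse]
        exact (PCaux.fwd_proper hasym hDA r hfwdr).imp (fun a b hab => Ne.symm hab)
      · rw [Walk.edges_reverse, List.head?_reverse,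
          PCaux.color_head hasym p₁ hfwd₁ hn1, PCaux.color_last hasym hDA r hfwdr hnr]
        by_cases hu : u ∈ A <;> simp [hu]
      · rw [Walk.edges_reverse, List.getLast?_reverse,
          PCaux.color_last hasym hDA p₁ hfwd₁ hn1, PCaux.color_head hasym r hfwdr hnr]
        by_cases hv : v ∈ A <;> simp [hv]
  refine ⟨?_, c, hstrong⟩
  have h2mem : 2 ∈ {k | ∃ c : Sym2 V → Fin k, IsProperConnColoring G c} := ⟨c, hstrong.1⟩
  have hSne : {k | ∃ c : Sym2 V → Fin k, IsProperConnColoring G c}.Nonempty := ⟨2, h2mem⟩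
  have hmem := Nat.sInf_mem hSne
  have hle : pc G ≤ 2 := Nat.sInf_le h2mem
  have h0 : (0 : ℕ) ∉ {k | ∃ c : Sym2 V → Fin k, IsProperConnColoring G c} := by
    rintro ⟨c0, -⟩
    obtain ⟨v0⟩ := hNe
    exact (c0 s(v0, v0)).elim0
  have h1 : (1 : ℕ) ∉ {k | ∃ c : Sym2 V → Fin k, IsProperConnColoring G c} := by
    rintro ⟨c1, hc1⟩
    obtain ⟨u, v, hne, hnadj⟩ : ∃ u v, u ≠ v ∧ ¬ G.Adj u v := by
      by_contra hcon
      push_neg at hcon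
      apply hnc
      ext a b
      rw [top_adj]
      exact ⟨fun h => G.ne_of_adj h, fun h => hcon a b h⟩
    obtain ⟨p, hp, hprop⟩ := hc1 u v
    cases p with
    | nil => exact hne rfl
    | @cons u m v h q =>
      cases q with
      | nil => exact hnadj h
      | @cons m m2 v h2 q2 =>
        have hchain : List.Chain' (fun e f => c1 e ≠ c1 f)
            (s(u, m) :: s(m, m2) :: q2.edges) := hprop
        exact (List.isChain_cons_cons.mp hchain).1 (Subsingleton.elim _ _)
  have hne0 : pc G ≠ 0 := fun h => h0 (h ▸ hmem)
  have hne1 : pc G ≠ 1 := fun h => h1 (h ▸ hmem)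
  omega
end

section
/- If G is a connected bridgeless bipartite graph, then pc(G) ≤ 2, and there exists a 2-edge-coloring c of G such that G has the strong property under c. -/
open SimpleGraph

variable {V : Type*}

section RobbinsProof

/-- A walk directed by a relation `r`. -/
def DirW {G : SimpleGraph V} (r : V → V → Prop) {u v : V} (p : G.Walk u v) : Prop :=
  ∀ d ∈ p.darts, r d.toProd.1 d.toProd.2

lemma DirW.reach {G : SimpleGraph V} {r : V → V → Prop} {u v : V} (p : G.Walk u v) :
    DirW r p → Relation.ReflTransGen r u v := by
  induction p with
  | nil => intro _; exact .refl
  | cons ha p ih =>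
    intro h
    exact Relation.ReflTransGen.head (h ⟨(_, _), ha⟩ (by simp)) (ih fun d hd => h d (by simp [hd]))

lemma DirW.mono {G : SimpleGraph V} {r r' : V → V → Prop} (hrr : ∀ a b, r a b → r' a b)
    {u v : V} {p : G.Walk u v} (h : DirW r p) : DirW r' p :=
  fun d hd => hrr _ _ (h d hd)

lemma exists_dirWalk {G : SimpleGraph V} {r : V → V → Prop} (hr : ∀ a b, r a b → G.Adj a b)
    {u v : V} (h : Relation.ReflTransGen r u v) : ∃ p : G.Walk u v, DirW r p := by
  induction h with
  | refl => exact ⟨.nil, by simp [DirW]⟩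
  | tail h₁ hab ih =>
    obtain ⟨p, hp⟩ := ih
    refine ⟨p.concat (hr _ _ hab), ?_⟩
    intro d hd
    rw [SimpleGraph.Walk.darts_concat, List.concat_eq_append, List.mem_append] at hd
    rcases hd with h | h
    · exact hp d h
    · simp only [List.mem_singleton] at h; subst h; exact hab

lemma DirW.support_reach {G : SimpleGraph V} {r : V → V → Prop} {b x : V} (p : G.Walk b x) :
    DirW r p → ∀ v ∈ p.support, Relation.ReflTransGen r b v ∧ Relation.ReflTransGen r v x := by
  induction p with
  | nil => intro _ v hv; simp only [SimpleGraph.Walk.support_nil, List.mem_singleton] at hv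
           subst hv; exact ⟨.refl, .refl⟩
  | cons ha p ih =>
    intro h v hv
    have hrbc := h ⟨(_, _), ha⟩ (by simp)
    have hp : DirW r p := fun d hd => h d (by simp [hd])
    rcases (by simpa using hv : v = _ ∨ v ∈ p.support) with rfl | hv
    · exact ⟨.refl, .head hrbc (DirW.reach p hp)⟩
    · obtain ⟨h1, h2⟩ := ih hp v hv
      exact ⟨.head hrbc h1, h2⟩

lemma exists_crossing {V : Type*} {G' : SimpleGraph V} {S : Set V} {b a : V} (p : G'.Walk b a) :
    b ∉ S → a ∈ S → ∃ x ∈ S, ∃ w : G'.Walk b x, ∀ v ∈ w.support, v = x ∨ v ∉ S := by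
  induction p with
  | nil => intro hb ha; exact absurd ha hb
  | @cons b c a h p ih =>
    intro hb ha
    by_cases hc : c ∈ S
    · refine ⟨c, hc, .cons h .nil, ?_⟩
      intro v hv
      rcases (by simpa using hv : v = b ∨ v = c) with rfl | rfl
      · exact .inr hb
      · exact .inl rfl
    · obtain ⟨x, hx, w, hw⟩ := ih hc ha
      refine ⟨x, hx, .cons h w, ?_⟩
      intro v hv
      rcases (by simpa using hv : v = b ∨ v ∈ w.support) with rfl | hv
      · exact .inr hb
      · exact hw v hv

lemma exists_exit {G : SimpleGraph V} {S : Set V} {u v : V} (p : G.Walk u v) :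
    u ∈ S → v ∉ S → ∃ a ∈ S, ∃ b, b ∉ S ∧ G.Adj a b := by
  induction p with
  | nil => intro h h'; exact absurd h h'
  | @cons u c v h p ih =>
    intro hu hv
    by_cases hc : c ∈ S
    · exact ih hc hv
    · exact ⟨u, hu, c, hc, h⟩

lemma restrict_reach {r : V → V → Prop} {u₀ p : V}
    (hp1 : Relation.ReflTransGen r u₀ p) (hp2 : Relation.ReflTransGen r p u₀) {q : V}
    (h : Relation.ReflTransGen r p q) :
    Relation.ReflTransGen r u₀ q → Relation.ReflTransGen r q u₀ →
    Relation.ReflTransGen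
      (fun a b => r a b ∧ (Relation.ReflTransGen r u₀ a ∧ Relation.ReflTransGen r a u₀)
        ∧ (Relation.ReflTransGen r u₀ b ∧ Relation.ReflTransGen r b u₀)) p q := by
  induction h with
  | refl => intro _ _; exact .refl
  | @tail w q h₁ step ih =>
    intro hq1 hq2
    have hw1 : Relation.ReflTransGen r u₀ w := hp1.trans h₁
    have hw2 : Relation.ReflTransGen r w u₀ := (Relation.ReflTransGen.single step).trans hq2
    exact (ih hw1 hw2).tail ⟨step, ⟨hw1, hw2⟩, ⟨hq1, hq2⟩⟩

lemma extend_step {G : SimpleGraph V} (hconn : G.Connected)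
    (hbridgeless : ∀ e ∈ G.edgeSet, ¬ G.IsBridge e) (u₀ : V)
    {r : V → V → Prop} (hrAdj : ∀ a b, r a b → G.Adj a b) (hrAsym : ∀ a b, r a b → ¬ r b a)
    (hne : {v | Relation.ReflTransGen r u₀ v ∧ Relation.ReflTransGen r v u₀} ≠ Set.univ) :
    ∃ r' : V → V → Prop, (∀ a b, r' a b → G.Adj a b) ∧ (∀ a b, r' a b → ¬ r' b a) ∧
      {v | Relation.ReflTransGen r u₀ v ∧ Relation.ReflTransGen r v u₀} ⊂
      {v | Relation.ReflTransGen r' u₀ v ∧ Relation.ReflTransGen r' v u₀} := by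
  classical
  set Sr := {v | Relation.ReflTransGen r u₀ v ∧ Relation.ReflTransGen r v u₀} with hSrdef
  have hu₀ : u₀ ∈ Sr := ⟨.refl, .refl⟩
  obtain ⟨v₀, hv₀⟩ : ∃ v, v ∉ Sr := by
    by_contra hc; push_neg at hc; exact hne (Set.eq_univ_of_forall hc)
  obtain ⟨a, ha, b, hb, hab⟩ := exists_exit ((hconn.preconnected u₀ v₀).some) hu₀ hv₀
  have hnb := hbridgeless s(a, b) (by rwa [SimpleGraph.mem_edgeSet])
  rw [SimpleGraph.isBridge_iff] at hnb
  push_neg at hnb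
  obtain ⟨p₀⟩ := hnb.symm
  obtain ⟨x, hx, w₀, hw₀⟩ := exists_crossing p₀ hb ha
  set p := w₀.bypass with hpdef
  have hpPath : p.IsPath := w₀.bypass_isPath
  have hpsupp : ∀ v ∈ p.support, v = x ∨ v ∉ Sr := fun v hv => hw₀ v (w₀.support_bypass_subset hv)
  have hdadj : ∀ d ∈ p.darts, G.Adj d.toProd.1 d.toProd.2 ∧ s(d.toProd.1, d.toProd.2) ≠ s(a, b) := by
    intro d hd
    have hadj := d.adj
    change (G \ SimpleGraph.fromEdgeSet {s(a, b)}).Adj _ _ at hadj; rw [SimpleGraph.sdiff_adj] at hadj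
    refine ⟨hadj.1, fun he => hadj.2 ((SimpleGraph.fromEdgeSet_adj _).mpr ⟨by simp [he], hadj.1.ne⟩)⟩
  have hdS : ∀ d ∈ p.darts, d.toProd.1 ∉ Sr ∨ d.toProd.2 ∉ Sr := by
    intro d hd
    rcases hpsupp _ (SimpleGraph.Walk.dart_fst_mem_support_of_mem_darts p hd) with h1 | h1
    · rcases hpsupp _ (SimpleGraph.Walk.dart_snd_mem_support_of_mem_darts p hd) with h2 | h2
      · exact absurd (h1.trans h2.symm) (hdadj d hd).1.ne
      · exact .inr h2
    · exact .inl h1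
  have hinj : ∀ d₁ ∈ p.darts, ∀ d₂ ∈ p.darts, d₁.edge = d₂.edge → d₁ = d₂ :=
    fun d₁ h₁ d₂ h₂ he => List.inj_on_of_nodup_map hpPath.edges_nodup h₁ h₂ he
  have hnotdart_ba : ∀ d ∈ p.darts, d.toProd ≠ (b, a) := by
    intro d hd he
    have h2 := (hdadj d hd).2
    rw [he] at h2
    exact h2 Sym2.eq_swap
  set r' : V → V → Prop := fun s t =>
    (r s t ∧ s ∈ Sr ∧ t ∈ Sr) ∨ (s = a ∧ t = b) ∨ (∃ d ∈ p.darts, d.toProd = (s, t)) with hr'def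
  have hr'Adj : ∀ s t, r' s t → G.Adj s t := by
    rintro s t (⟨h, _, _⟩ | ⟨rfl, rfl⟩ | ⟨d, hd, hdp⟩)
    · exact hrAdj _ _ h
    · exact hab
    · have := (hdadj d hd).1; rw [hdp] at this; exact this
  have hr'Asym : ∀ s t, r' s t → ¬ r' t s := by
    rintro s t h₁ h₂
    rcases h₁ with ⟨h, hs, ht⟩ | ⟨rfl, rfl⟩ | ⟨d, hd, hdp⟩
    · rcases h₂ with ⟨h', _, _⟩ | ⟨rfl, rfl⟩ | ⟨d, hd, hdp⟩
      · exact hrAsym _ _ h h'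
      · exact hb hs
      · rcases hdS d hd with h' | h' <;> rw [hdp] at h'
        · exact h' ht
        · exact h' hs
    · rcases h₂ with ⟨h', hs', ht'⟩ | ⟨h1, h2⟩ | ⟨d, hd, hdp⟩
      · exact hb hs'
      · exact hab.ne h2
      · exact hnotdart_ba d hd hdp
    · rcases h₂ with ⟨h', hs', ht'⟩ | ⟨h1, h2⟩ | ⟨d₂, hd₂, hdp₂⟩
      · rcases hdS d hd with h' | h' <;> rw [hdp] at h'
        · exact h' ht'
        · exact h' hs'
      · subst h1; subst h2; exact hnotdart_ba d hd hdp
      · have hedge : d.edge = d₂.edge := by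
          rw [SimpleGraph.Dart.edge, SimpleGraph.Dart.edge, hdp, hdp₂]
          exact Sym2.eq_swap
        have hdd := hinj d hd d₂ hd₂ hedge
        have hts : (t, s) = (s, t) := by rw [← hdp₂, ← hdp, hdd]
        have hst : s ≠ t := by
          have h3 := (hdadj d hd).1.ne; rw [hdp] at h3; exact h3
        exact hst (congrArg Prod.snd hts)
  have hrres : ∀ s t, (r s t ∧ (Relation.ReflTransGen r u₀ s ∧ Relation.ReflTransGen r s u₀)
      ∧ (Relation.ReflTransGen r u₀ t ∧ Relation.ReflTransGen r t u₀)) → r' s t :=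
    fun s t h => Or.inl ⟨h.1, h.2.1, h.2.2⟩
  have hSmem : ∀ v ∈ Sr, Relation.ReflTransGen r' u₀ v ∧ Relation.ReflTransGen r' v u₀ := by
    intro v hv
    constructor
    · exact Relation.ReflTransGen.mono (fun s t h => hrres s t h) _ _ (restrict_reach .refl .refl hv.1 hv.1 hv.2)
    · exact Relation.ReflTransGen.mono (fun s t h => hrres s t h) _ _ (restrict_reach hv.1 hv.2 hv.2 .refl .refl)
  have hr'ab : r' a b := Or.inr (Or.inl ⟨rfl, rfl⟩)
  have hdir : DirW r' p := fun d hd => Or.inr (Or.inr ⟨d, hd, rfl⟩)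
  have hbmem : Relation.ReflTransGen r' u₀ b ∧ Relation.ReflTransGen r' b u₀ :=
    ⟨(hSmem a ha).1.tail hr'ab, (DirW.reach p hdir).trans (hSmem x hx).2⟩
  refine ⟨r', hr'Adj, hr'Asym, ?_⟩
  exact (Set.ssubset_iff_of_subset fun v hv => hSmem v hv).mpr ⟨b, hbmem, hb⟩

lemma robbins [Fintype V] {G : SimpleGraph V} (hconn : G.Connected)
    (hbridgeless : ∀ e ∈ G.edgeSet, ¬ G.IsBridge e) :
    ∃ r : V → V → Prop, (∀ a b, r a b → G.Adj a b) ∧ (∀ a b, r a b → ¬ r b a) ∧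
      ∀ u v, Relation.ReflTransGen r u v := by
  obtain ⟨u₀⟩ := hconn.nonempty
  have key : ∀ k : ℕ, ∀ r : V → V → Prop, (∀ a b, r a b → G.Adj a b) → (∀ a b, r a b → ¬ r b a) →
      Fintype.card V ≤ k + {v | Relation.ReflTransGen r u₀ v ∧ Relation.ReflTransGen r v u₀}.ncard →
      ∃ r' : V → V → Prop, (∀ a b, r' a b → G.Adj a b) ∧ (∀ a b, r' a b → ¬ r' b a) ∧
        {v | Relation.ReflTransGen r' u₀ v ∧ Relation.ReflTransGen r' v u₀} = Set.univ := by
    intro k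
    induction k with
    | zero =>
      intro r h1 h2 hcard
      refine ⟨r, h1, h2, ?_⟩
      refine Set.eq_of_subset_of_ncard_le (Set.subset_univ _) ?_ Set.finite_univ
      rwa [Set.ncard_univ, Nat.card_eq_fintype_card, ← Nat.zero_add
        {v | Relation.ReflTransGen r u₀ v ∧ Relation.ReflTransGen r v u₀}.ncard]
    | succ k ih =>
      intro r h1 h2 hcard
      by_cases hS : {v | Relation.ReflTransGen r u₀ v ∧ Relation.ReflTransGen r v u₀} = Set.univ
      · exact ⟨r, h1, h2, hS⟩
      · obtain ⟨r', h1', h2', hss⟩ := extend_step hconn hbridgeless u₀ h1 h2 hS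
        refine ih r' h1' h2' ?_
        have hlt := Set.ncard_lt_ncard hss (Set.toFinite _)
        omega
  obtain ⟨r, h1, h2, huniv⟩ := key (Fintype.card V) (fun _ _ => False)
    (fun _ _ h => h.elim) (fun _ _ h => h.elim) (by omega)
  refine ⟨r, h1, h2, fun u v => ?_⟩
  have hu : u ∈ {v | Relation.ReflTransGen r u₀ v ∧ Relation.ReflTransGen r v u₀} := by
    rw [huniv]; trivial
  have hv : v ∈ {v | Relation.ReflTransGen r u₀ v ∧ Relation.ReflTransGen r v u₀} := by
    rw [huniv]; trivial
  exact hu.2.trans hv.1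

lemma dir_proper {G : SimpleGraph V} {r : V → V → Prop}
    (col : G.Coloring (Fin 2)) (c : Sym2 V → Fin 2)
    (hc : ∀ s t, r s t → c s(s, t) = col t) {u v : V} (p : G.Walk u v) :
    DirW r p →
      IsProperWalk c p ∧ (∀ e ∈ p.edges.head?, c e ≠ col u) ∧
        (∀ e ∈ p.edges.getLast?, c e = col v) := by
  induction p with
  | nil => intro _; refine ⟨by simp [IsProperWalk, List.Chain'], by simp, by simp⟩
  | @cons u m v ha p ih =>
    intro h
    have hd : r u m := h ⟨(u, m), ha⟩ (by simp)
    have hp : DirW r p := fun d hdm => h d (by simp [hdm])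
    obtain ⟨ih1, ih2, ih3⟩ := ih hp
    refine ⟨?_, ?_, ?_⟩
    · rw [IsProperWalk, SimpleGraph.Walk.edges_cons, List.Chain', List.isChain_cons]
      exact ⟨fun e he => by rw [hc u m hd]; exact (ih2 e he).symm, ih1⟩
    · intro e he
      rw [SimpleGraph.Walk.edges_cons] at he
      simp only [List.head?_cons, Option.mem_some_iff] at he
      subst he
      rw [hc u m hd]
      exact (col.valid ha).symm
    · cases p with
      | nil =>
        intro e he
        simp only [SimpleGraph.Walk.edges_cons, SimpleGraph.Walk.edges_nil,
          List.getLast?_singleton, Option.mem_some_iff] at he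
        subst he
        exact hc u m hd
      | @cons m m' v' ha' p' =>
        intro e he
        rw [SimpleGraph.Walk.edges_cons, SimpleGraph.Walk.edges_cons,
          List.getLast?_cons_cons] at he
        exact ih3 e (by rw [SimpleGraph.Walk.edges_cons]; exact he)


end RobbinsProof

theorem stmt_10 [Fintype V] (G : SimpleGraph V) (hconn : G.Connected)
    (hbridgeless : ∀ e ∈ G.edgeSet, ¬ G.IsBridge e) (hbip : G.Colorable 2) :
    pc G ≤ 2 ∧ ∃ c : Sym2 V → Fin 2, HasStrongProp G c := by
  classical
  obtain ⟨r, hrAdj, hrAsym, hreach⟩ := robbins hconn hbridgeless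
  obtain ⟨col⟩ := hbip
  have hsym : ∀ s t : V, (if r s t then col t else if r t s then col s else 0)
      = (if r t s then col s else if r s t then col t else 0) := by
    intro s t
    by_cases h1 : r s t
    · rw [if_pos h1, if_neg (hrAsym _ _ h1), if_pos h1]
    · by_cases h2 : r t s
      · rw [if_neg h1, if_pos h2, if_pos h2]
      · rw [if_neg h1, if_neg h2, if_neg h2, if_neg h1]
  set c : Sym2 V → Fin 2 :=
    Sym2.lift ⟨fun s t => if r s t then col t else if r t s then col s else 0, hsym⟩ with hcdef
  have hc : ∀ s t, r s t → c s(s, t) = col t := by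
    intro s t h
    rw [hcdef, Sym2.lift_mk]
    exact if_pos h
  have mkpath : ∀ u v : V, ∃ p : G.Walk u v, p.IsPath ∧ DirW r p := by
    intro u v
    obtain ⟨w, hw⟩ := exists_dirWalk hrAdj (hreach u v)
    exact ⟨w.bypass, w.bypass_isPath, fun d hd => hw d (w.darts_bypass_subset hd)⟩
  have hpcc : IsProperConnColoring G c := by
    intro u v
    obtain ⟨p, hp1, hp2⟩ := mkpath u v
    exact ⟨p, hp1, (dir_proper col c hc p hp2).1⟩
  constructor
  · exact Nat.sInf_le ⟨c, hpcc⟩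
  · refine ⟨c, hpcc, ?_⟩
    intro u v huv
    obtain ⟨p₁, hp₁, hd₁⟩ := mkpath u v
    obtain ⟨q, hq, hdq⟩ := mkpath v u
    obtain ⟨prop₁, head₁, last₁⟩ := dir_proper col c hc p₁ hd₁
    obtain ⟨propq, headq, lastq⟩ := dir_proper col c hc q hdq
    have hne₁ : p₁.edges ≠ [] := by
      cases p₁ with
      | nil => exact absurd rfl huv
      | cons h p => simp [SimpleGraph.Walk.edges_cons]
    have hneq : q.edges ≠ [] := by
      cases q with
      | nil => exact absurd rfl huv
      | cons h p => simp [SimpleGraph.Walk.edges_cons]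
    obtain ⟨e₁, h1⟩ := Option.isSome_iff_exists.mp (List.isSome_head?.mpr hne₁)
    obtain ⟨f₁, hf₁⟩ := Option.isSome_iff_exists.mp (List.getLast?_isSome.mpr hne₁)
    obtain ⟨e₂, he₂⟩ := Option.isSome_iff_exists.mp (List.isSome_head?.mpr hneq)
    obtain ⟨f₂, hf₂⟩ := Option.isSome_iff_exists.mp (List.getLast?_isSome.mpr hneq)
    have hA1 : c e₁ ≠ col u := head₁ e₁ h1
    have hB1 : c f₁ = col v := last₁ f₁ hf₁
    have hA2 : c e₂ ≠ col v := headq e₂ he₂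
    have hB2 : c f₂ = col u := lastq f₂ hf₂
    refine ⟨p₁, q.reverse, hp₁, hq.reverse, prop₁, ?_, ?_, ?_⟩
    · rw [IsProperWalk, SimpleGraph.Walk.edges_reverse, List.Chain', List.isChain_reverse]
      exact List.IsChain.imp (fun a b h => h.symm) propq
    · rw [h1, SimpleGraph.Walk.edges_reverse, List.head?_reverse, hf₂]
      simp only [Option.map_some, ne_eq, Option.some.injEq]
      rw [hB2]
      exact hA1
    · rw [hf₁, SimpleGraph.Walk.edges_reverse, List.getLast?_reverse, he₂]
      simp only [Option.map_some, ne_eq, Option.some.injEq]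
      rw [hB1]
      exact fun h => hA2 h.symm
end

section
/- Let G be a graph on n vertices with δ(G) ≥ (n+2)/2. Then G is panconnected: between any pair of distinct vertices there exists a path of every length from 2 to n−1. -/
open SimpleGraph

variable {V : Type*}

namespace PanAux

/-- turn a chain list into a walk with given support -/
lemma exists_walk_support (G : SimpleGraph V) :
    ∀ (l : List V) (u v : V), List.Chain G.Adj u l →
    (u :: l).getLast (List.cons_ne_nil _ _) = v → ∃ p : G.Walk u v, p.support = u :: l := by
  intro l
  induction l with
  | nil =>
    intro u v _ hl
    simp only [List.getLast_singleton] at hl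
    subst hl
    exact ⟨Walk.nil, by simp⟩
  | cons a t ih =>
    intro u v hch hl
    unfold List.Chain at hch
    rw [List.isChain_cons_cons] at hch
    rw [List.getLast_cons (List.cons_ne_nil _ _)] at hl
    obtain ⟨p, hp⟩ := ih a v hch.2 hl
    exact ⟨Walk.cons hch.1 p, by simp [hp]⟩

lemma exists_path_of_list (G : SimpleGraph V) (l : List V) (u v : V)
    (hch : l.Chain' G.Adj) (hnd : l.Nodup)
    (hhd : l.head? = some u) (hlast : l.getLast? = some v) :
    ∃ p : G.Walk u v, p.IsPath ∧ p.length + 1 = l.length := by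
  cases l with
  | nil => simp at hhd
  | cons a t =>
    have ha : a = u := by simpa using hhd
    subst ha
    have hch' : List.Chain G.Adj a t := hch
    have hl : (a :: t).getLast (List.cons_ne_nil _ _) = v := by
      rw [List.getLast?_eq_getLast (List.cons_ne_nil _ _)] at hlast
      simpa using hlast
    obtain ⟨p, hp⟩ := exists_walk_support G t a v hch' hl
    refine ⟨p, ?_, ?_⟩
    · rw [Walk.isPath_def, hp]; exact hnd
    · have := p.length_support
      rw [hp] at this
      simpa using this.symm

/-- membership in a step-1 range' -/
lemma mem_range1 {s n m : ℕ} : m ∈ List.range' s n ↔ s ≤ m ∧ m < s + n := by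
  rw [List.mem_range']
  constructor
  · rintro ⟨i, hi, rfl⟩; omega
  · intro h; exact ⟨m - s, by omega, by omega⟩

lemma chain'_range1 {r : ℕ → ℕ → Prop} :
    ∀ (k a : ℕ), (∀ i, a ≤ i → i + 1 < a + k → r i (i+1)) → List.Chain' r (List.range' a k) := by
  intro k
  induction k with
  | zero => intro a _; exact List.IsChain.nil
  | succ k ih =>
    intro a h
    rw [List.range'_succ]
    rw [List.Chain', List.isChain_cons]
    constructor
    · intro y hy
      cases k with
      | zero => simp at hy
      | succ k' =>
        rw [List.range'_succ] at hy
        simp only [List.head?_cons, Option.mem_def, Option.some.injEq] at hy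
        subst hy
        exact h a le_rfl (by omega)
    · exact ih (a+1) (fun i h1 h2 => h i (by omega) (by omega))

lemma head?_range1 {a k : ℕ} (hk : 0 < k) : (List.range' a k).head? = some a := by
  cases k with
  | zero => omega
  | succ k => rw [List.range'_succ]; rfl

lemma getLast?_range1 {a k : ℕ} (hk : 0 < k) : (List.range' a k).getLast? = some (a + k - 1) := by
  cases k with
  | zero => omega
  | succ k =>
    rw [List.range'_concat]
    rw [List.getLast?_concat]
    simp

/-- the index list for three-segment paths : ascending [p,q], descending [r,s], ascending [t,w] -/
def idx3 (p q r s t w : ℕ) : List ℕ :=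
  List.range' p (q+1-p) ++ (List.range' r (s+1-r)).reverse ++ List.range' t (w+1-t)

lemma mem_idx3 {p q r s t w i : ℕ} (hpq : p ≤ q) (hrs : r ≤ s) (htw : t ≤ w) :
    i ∈ idx3 p q r s t w ↔ (p ≤ i ∧ i ≤ q) ∨ (r ≤ i ∧ i ≤ s) ∨ (t ≤ i ∧ i ≤ w) := by
  simp only [idx3, List.mem_append, List.mem_reverse, mem_range1]
  omega

lemma nodup_idx3 {p q r s t w : ℕ} (h1 : q < r) (hrs : r ≤ s) (h2 : s < t) :
    (idx3 p q r s t w).Nodup := by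
  have r1 : (List.range' p (q+1-p)).Nodup := List.nodup_range'
  have r2 : (List.range' r (s+1-r)).reverse.Nodup := by
    rw [List.nodup_reverse]; exact List.nodup_range'
  have r3 : (List.range' t (w+1-t)).Nodup := List.nodup_range'
  rw [idx3, List.nodup_append', List.nodup_append']
  refine ⟨⟨r1, r2, ?_⟩, r3, ?_⟩
  · intro i hi hj
    rw [mem_range1] at hi
    rw [List.mem_reverse, mem_range1] at hj
    omega
  · intro i hi hj
    rw [List.mem_append, List.mem_reverse, mem_range1, mem_range1] at hi
    rw [mem_range1] at hj
    omega

lemma length_idx3 {p q r s t w : ℕ} :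
    (idx3 p q r s t w).length = (q+1-p) + (s+1-r) + (w+1-t) := by
  simp [idx3]; omega

lemma head?_idx3 {p q r s t w : ℕ} (hpq : p ≤ q) :
    (idx3 p q r s t w).head? = some p := by
  rw [idx3, List.head?_append, List.head?_append, head?_range1 (by omega)]
  rfl

lemma getLast?_idx3 {p q r s t w : ℕ} (htw : t ≤ w) :
    (idx3 p q r s t w).getLast? = some w := by
  rw [idx3, List.getLast?_append, getLast?_range1 (by omega)]
  have hw : t + (w + 1 - t) - 1 = w := by omega
  rw [hw]
  rfl

lemma chain'_idx3 {R : ℕ → ℕ → Prop} {p q r s t w : ℕ}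
    (hpq : p ≤ q) (hrs : r ≤ s) (htw : t ≤ w)
    (h1 : ∀ i, p ≤ i → i < q → R i (i+1))
    (h2 : ∀ i, r ≤ i → i < s → R (i+1) i)
    (h3 : ∀ i, t ≤ i → i < w → R i (i+1))
    (hl1 : R q s) (hl2 : R r t) :
    List.Chain' R (idx3 p q r s t w) := by
  rw [idx3, List.Chain', List.isChain_append, List.isChain_append]
  refine ⟨⟨chain'_range1 _ _ (fun i hi hi' => h1 i hi (by omega)), ?_, ?_⟩, ?_, ?_⟩
  · rw [List.isChain_reverse]
    refine chain'_range1 _ _ (fun i hi hi' => ?_)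
    exact h2 i hi (by omega)
  · intro a ha b hb
    rw [getLast?_range1 (by omega)] at ha
    rw [List.head?_reverse, getLast?_range1 (by omega)] at hb
    simp only [Option.mem_def, Option.some.injEq] at ha hb
    have haq : a = q := by omega
    have hbs : b = s := by omega
    rw [haq, hbs]
    exact hl1
  · exact chain'_range1 _ _ (fun i hi hi' => h3 i hi (by omega))
  · intro a ha b hb
    rw [List.getLast?_append, List.getLast?_reverse, head?_range1 (by omega)] at ha
    rw [head?_range1 (by omega)] at hb
    have ha' : a = r := by
      have : (some r).or (List.range' p (q + 1 - p)).getLast? = some r := rfl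
      rw [this] at ha
      exact (by simpa using ha : r = a).symm
    have hb' : b = t := (by simpa using hb : t = b).symm
    rw [ha', hb']
    exact hl2



lemma three_seg (G : SimpleGraph V) (x : ℕ → V) {p q r s t w : ℕ}
    (hpq : p ≤ q) (hqr : q < r) (hrs : r ≤ s) (hst : s < t) (htw : t ≤ w)
    (hinj : ∀ i j, i ≤ w → j ≤ w → x i = x j → i = j)
    (h1 : ∀ i, p ≤ i → i < q → G.Adj (x i) (x (i+1)))
    (h2 : ∀ i, r ≤ i → i < s → G.Adj (x i) (x (i+1)))
    (h3 : ∀ i, t ≤ i → i < w → G.Adj (x i) (x (i+1)))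
    (hl1 : G.Adj (x q) (x s)) (hl2 : G.Adj (x r) (x t)) :
    ∃ pth : G.Walk (x p) (x w), pth.IsPath ∧ pth.length + 1 = (q+1-p) + (s+1-r) + (w+1-t) := by
  have hch : List.Chain' G.Adj ((idx3 p q r s t w).map x) := by
    rw [List.Chain', List.isChain_map]
    refine chain'_idx3 hpq hrs htw h1 (fun i hi hi' => (h2 i hi hi').symm) h3 hl1 hl2
  have hnd : ((idx3 p q r s t w).map x).Nodup := by
    refine List.Nodup.map_on ?_ (nodup_idx3 hqr hrs hst)
    intro i hi j hj hxy
    rw [mem_idx3 hpq hrs htw] at hi hj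
    exact hinj i j (by omega) (by omega) hxy
  have hhd : ((idx3 p q r s t w).map x).head? = some (x p) := by
    rw [List.head?_map, head?_idx3 hpq]; rfl
  have hlast : ((idx3 p q r s t w).map x).getLast? = some (x w) := by
    rw [List.getLast?_map, getLast?_idx3 htw]; rfl
  obtain ⟨pth, hp1, hp2⟩ := exists_path_of_list G _ _ _ hch hnd hhd hlast
  refine ⟨pth, hp1, ?_⟩
  rw [hp2, List.length_map, length_idx3]

lemma seg_z (G : SimpleGraph V) (x : ℕ → V) (z : V) {a b w : ℕ}
    (hab : a < b) (hbw : b ≤ w)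
    (hinj : ∀ i j, i ≤ w → j ≤ w → x i = x j → i = j)
    (hz : ∀ i, i ≤ w → z ≠ x i)
    (h1 : ∀ i, i < a → G.Adj (x i) (x (i+1)))
    (h3 : ∀ i, b ≤ i → i < w → G.Adj (x i) (x (i+1)))
    (hl1 : G.Adj (x a) z) (hl2 : G.Adj z (x b)) :
    ∃ pth : G.Walk (x 0) (x w), pth.IsPath ∧ pth.length + 1 = (a+1) + 1 + (w+1-b) := by
  set m1 : List V := (List.range' 0 (a+1)).map x with hm1
  set m3 : List V := (List.range' b (w+1-b)).map x with hm3
  set L : List V := (m1 ++ [z]) ++ m3 with hL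
  have hm1last : m1.getLast? = some (x a) := by
    rw [hm1, List.getLast?_map, getLast?_range1 (by omega)]
    simp
  have hm3head : m3.head? = some (x b) := by
    rw [hm3, List.head?_map, head?_range1 (by omega)]; rfl
  have hch : List.Chain' G.Adj L := by
    rw [hL, List.Chain', List.isChain_append, List.isChain_append]
    refine ⟨⟨?_, by simp, ?_⟩, ?_, ?_⟩
    · rw [hm1, List.isChain_map]
      exact chain'_range1 _ _ (fun i hi hi' => h1 i (by omega))
    · intro c hc d hd
      rw [hm1last] at hc
      simp only [List.head?_cons, Option.mem_def, Option.some.injEq] at hc hd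
      rw [← hc, ← hd]; exact hl1
    · rw [hm3, List.isChain_map]
      exact chain'_range1 _ _ (fun i hi hi' => h3 i hi (by omega))
    · intro c hc d hd
      rw [List.getLast?_concat] at hc
      rw [hm3head] at hd
      simp only [Option.mem_def, Option.some.injEq] at hc hd
      rw [← hc, ← hd]; exact hl2
  have hnd : L.Nodup := by
    rw [hL, List.nodup_append', List.nodup_append']
    refine ⟨⟨?_, by simp, ?_⟩, ?_, ?_⟩
    · refine List.Nodup.map_on ?_ (List.nodup_range')
      intro i hi j hj hxy
      rw [mem_range1] at hi hj
      exact hinj i j (by omega) (by omega) hxy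
    · intro c hc hc2
      simp only [List.mem_singleton] at hc2
      rw [hm1] at hc
      obtain ⟨i, hi, rfl⟩ := List.mem_map.mp hc
      rw [mem_range1] at hi
      exact hz i (by omega) (by rw [hc2])
    · refine List.Nodup.map_on ?_ (List.nodup_range')
      intro i hi j hj hxy
      rw [mem_range1] at hi hj
      exact hinj i j (by omega) (by omega) hxy
    · intro c hc hc3
      rw [hm3] at hc3
      obtain ⟨j, hj, hj2⟩ := List.mem_map.mp hc3
      rw [mem_range1] at hj
      rw [List.mem_append] at hc
      rcases hc with hc | hc
      · rw [hm1] at hc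
        obtain ⟨i, hi, rfl⟩ := List.mem_map.mp hc
        rw [mem_range1] at hi
        have := hinj j i (by omega) (by omega) hj2
        omega
      · simp only [List.mem_singleton] at hc
        subst hc
        exact hz j (by omega) hj2.symm
  have hhd : L.head? = some (x 0) := by
    have : m1.head? = some (x 0) := by
      rw [hm1, List.head?_map, head?_range1 (by omega)]; rfl
    rw [hL, List.head?_append, List.head?_append, this]; rfl
  have hlast : L.getLast? = some (x w) := by
    have : m3.getLast? = some (x w) := by
      rw [hm3, List.getLast?_map, getLast?_range1 (by omega)]
      simp only [Option.map_some]
      congr 2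
      omega
    rw [hL, List.getLast?_append, this]; rfl
  obtain ⟨pth, hp1, hp2⟩ := exists_path_of_list G _ _ _ hch hnd hhd hlast
  refine ⟨pth, hp1, ?_⟩
  rw [hp2, hL, hm1, hm3]
  simp only [List.length_append, List.length_map, List.length_range', List.length_singleton]

lemma walk_to_fun (G : SimpleGraph V) {u v : V} (p : G.Walk u v) (hp : p.IsPath)
    {m : ℕ} (hm : p.length = m) :
    ∃ x : ℕ → V, x 0 = u ∧ x m = v ∧ (∀ i, i < m → G.Adj (x i) (x (i+1))) ∧
      (∀ i j, i ≤ m → j ≤ m → x i = x j → i = j) ∧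
      (∀ y : V, (∃ i, i ≤ m ∧ x i = y) ↔ y ∈ p.support) := by
  set l : List V := p.support with hl
  have hlen : l.length = m + 1 := by rw [hl, Walk.length_support, hm]
  refine ⟨fun i => l.getD i v, ?_, ?_, ?_, ?_, ?_⟩
  · show p.support.getD 0 v = u
    rw [p.support_eq_cons]
    rfl
  · show l.getD m v = v
    have hw : m < l.length := by omega
    rw [List.getD_eq_getElem l v hw]
    have hrev : l.reverse = v :: p.reverse.support.tail := by
      rw [hl, ← Walk.support_reverse]
      exact p.reverse.support_eq_cons
    have : l.getLast? = some v := by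
      rw [← List.head?_reverse, hrev]
      rfl
    rw [List.getLast?_eq_getLast (l := l) (by intro hnil; rw [hnil] at hlen; simp at hlen)] at this
    have hLast := Option.some_injective _ this
    rw [← hLast]
    rw [List.getLast_eq_getElem]
    congr 1
    omega
  · intro i hi
    show G.Adj (l.getD i v) (l.getD (i+1) v)
    have h1 : i < l.length := by omega
    have h2 : i + 1 < l.length := by omega
    rw [List.getD_eq_getElem l v h1, List.getD_eq_getElem l v h2]
    have hch := p.isChain_adj_support
    rw [← hl] at hch
    rw [List.isChain_iff_getElem] at hch
    have := hch i (by omega)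
    simpa using this
  · intro i j hi hj hxy
    replace hxy : l.getD i v = l.getD j v := hxy
    have h1 : i < l.length := by omega
    have h2 : j < l.length := by omega
    rw [List.getD_eq_getElem l v h1, List.getD_eq_getElem l v h2] at hxy
    have hnd : l.Nodup := by rw [hl]; exact hp.support_nodup
    rw [List.nodup_iff_injective_get] at hnd
    have := hnd (a₁ := ⟨i, h1⟩) (a₂ := ⟨j, h2⟩) (by simpa using hxy)
    simpa using this
  · intro y
    constructor
    · rintro ⟨i, hi, rfl⟩
      show l.getD i v ∈ p.support
      have h1 : i < l.length := by omega
      rw [List.getD_eq_getElem l v h1]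
      exact List.getElem_mem h1
    · intro hy
      rw [List.mem_iff_get] at hy
      obtain ⟨⟨i, h1⟩, rfl⟩ := hy
      refine ⟨i, by omega, ?_⟩
      show l.getD i v = _
      rw [List.getD_eq_getElem l v h1]
      rfl


lemma card_filter_disj {s : Finset ℕ} {p q : ℕ → Prop} [DecidablePred p] [DecidablePred q]
    (h : ∀ i ∈ s, ¬(p i ∧ q i)) : (s.filter p).card + (s.filter q).card ≤ s.card := by
  rw [← Finset.card_union_of_disjoint]
  · exact Finset.card_le_card (Finset.union_subset (Finset.filter_subset _ _) (Finset.filter_subset _ _))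
  · rw [Finset.disjoint_left]
    intro i hi hj
    rw [Finset.mem_filter] at hi hj
    exact h i hi.1 ⟨hi.2, hj.2⟩

lemma deg_le_of_nbr_subset {G : SimpleGraph V} [Fintype V] [DecidableRel G.Adj] (v : V)
    (T : Finset V) (h : ∀ y, G.Adj v y → y ∈ T) : G.degree v ≤ T.card := by
  rw [← SimpleGraph.card_neighborFinset_eq_degree]
  refine Finset.card_le_card ?_
  intro y hy
  exact h y ((SimpleGraph.mem_neighborFinset _ _ _).mp hy)

lemma crossing (G : SimpleGraph V) [Fintype V] [DecidableRel G.Adj]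
    {N : ℕ} (hN : Fintype.card V = N + 1)
    (hsum : ∀ a b : V, Fintype.card V + 2 ≤ G.degree a + G.degree b)
    (x : ℕ → V)
    (hinj : ∀ i j, i ≤ N → j ≤ N → x i = x j → i = j)
    (hsurj : ∀ y : V, ∃ i, i ≤ N ∧ x i = y)
    (a : ℕ) (haN : a + 1 ≤ N)
    (hadj : ∀ j, j < N → j ≠ a → G.Adj (x j) (x (j+1)))
    (hnadj : ¬ G.Adj (x a) (x (a+1))) :
    ∃ pth : G.Walk (x 0) (x N), pth.IsPath ∧ pth.length = N := by
  classical
  by_cases hAB : ∃ i, 1 ≤ i ∧ i ≤ a ∧ G.Adj (x (i-1)) (x a) ∧ G.Adj (x i) (x (a+1))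
  · obtain ⟨i, hi1, hia, hA, hB⟩ := hAB
    obtain ⟨pth, h1, h2⟩ := three_seg G x (p := 0) (q := i-1) (r := i) (s := a) (t := a+1) (w := N)
      (by omega) (by omega) (by omega) (by omega) (by omega) hinj
      (fun j hj hj' => hadj j (by omega) (by omega))
      (fun j hj hj' => hadj j (by omega) (by omega))
      (fun j hj hj' => hadj j (by omega) (by omega))
      hA hB
    exact ⟨pth, h1, by omega⟩
  by_cases hCD : ∃ j, a+1 ≤ j ∧ j < N ∧ G.Adj (x a) (x j) ∧ G.Adj (x (a+1)) (x (j+1))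
  · obtain ⟨j, hj1, hjN, hC, hD⟩ := hCD
    obtain ⟨pth, h1, h2⟩ := three_seg G x (p := 0) (q := a) (r := a+1) (s := j) (t := j+1) (w := N)
      (by omega) (by omega) (by omega) (by omega) (by omega) hinj
      (fun k hk hk' => hadj k (by omega) (by omega))
      (fun k hk hk' => hadj k (by omega) (by omega))
      (fun k hk hk' => hadj k (by omega) (by omega))
      hC hD
    exact ⟨pth, h1, by omega⟩
  exfalso
  set A : Finset ℕ := (Finset.Icc 1 a).filter (fun i => G.Adj (x (i-1)) (x a)) with hA
  set B : Finset ℕ := (Finset.Icc 1 a).filter (fun i => G.Adj (x i) (x (a+1))) with hB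
  set C : Finset ℕ := (Finset.Ico (a+1) N).filter (fun j => G.Adj (x a) (x j)) with hC
  set D : Finset ℕ := (Finset.Ico (a+1) N).filter (fun j => G.Adj (x (a+1)) (x (j+1))) with hD
  have hABcard : A.card + B.card ≤ a := by
    have := card_filter_disj (s := Finset.Icc 1 a)
      (p := fun i => G.Adj (x (i-1)) (x a)) (q := fun i => G.Adj (x i) (x (a+1)))
      (fun i hi hpq => hAB ⟨i, (Finset.mem_Icc.mp hi).1, (Finset.mem_Icc.mp hi).2, hpq.1, hpq.2⟩)
    calc A.card + B.card ≤ (Finset.Icc 1 a).card := this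
    _ = a := by rw [Nat.card_Icc]; omega
  have hCDcard : C.card + D.card ≤ N - (a+1) := by
    have := card_filter_disj (s := Finset.Ico (a+1) N)
      (p := fun j => G.Adj (x a) (x j)) (q := fun j => G.Adj (x (a+1)) (x (j+1)))
      (fun j hj hpq => hCD ⟨j, (Finset.mem_Ico.mp hj).1, (Finset.mem_Ico.mp hj).2, hpq.1, hpq.2⟩)
    calc C.card + D.card ≤ (Finset.Ico (a+1) N).card := this
    _ = N - (a+1) := by rw [Nat.card_Ico]
  have hdegA : G.degree (x a) ≤ A.card + C.card + 1 := by
    have hsub : ∀ y, G.Adj (x a) y →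
        y ∈ (A.image (fun i => x (i-1)) ∪ C.image x) ∪ {x N} := by
      intro y hy
      obtain ⟨j, hjN, rfl⟩ := hsurj y
      have hja : j ≠ a := by rintro rfl; exact G.ne_of_adj hy rfl
      rcases Nat.lt_or_ge j a with hj | hj
      · apply Finset.mem_union_left
        apply Finset.mem_union_left
        refine Finset.mem_image.mpr ⟨j+1, ?_, by simp⟩
        rw [hA, Finset.mem_filter, Finset.mem_Icc]
        exact ⟨⟨by omega, by omega⟩, by simpa using hy.symm⟩
      · have hja1 : j ≠ a + 1 := by rintro rfl; exact hnadj hy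
        rcases Nat.lt_or_ge j N with hjN' | hjN'
        · apply Finset.mem_union_left
          apply Finset.mem_union_right
          refine Finset.mem_image.mpr ⟨j, ?_, rfl⟩
          rw [hC, Finset.mem_filter, Finset.mem_Ico]
          exact ⟨⟨by omega, hjN'⟩, hy⟩
        · have : j = N := by omega
          subst this
          exact Finset.mem_union_right _ (Finset.mem_singleton_self _)
    calc G.degree (x a) ≤ ((A.image (fun i => x (i-1)) ∪ C.image x) ∪ {x N}).card :=
          deg_le_of_nbr_subset _ _ hsub
    _ ≤ (A.image (fun i => x (i-1)) ∪ C.image x).card + 1 := by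
          refine le_trans (Finset.card_union_le _ _) ?_
          simp
    _ ≤ A.card + C.card + 1 := by
          have := Finset.card_union_le (A.image (fun i => x (i-1))) (C.image x)
          have h1 := Finset.card_image_le (s := A) (f := fun i => x (i-1))
          have h2 := Finset.card_image_le (s := C) (f := x)
          omega
  have hdegB : G.degree (x (a+1)) ≤ B.card + D.card + 1 := by
    have hsub : ∀ y, G.Adj (x (a+1)) y →
        y ∈ (B.image x ∪ D.image (fun j => x (j+1))) ∪ {x 0} := by
      intro y hy
      obtain ⟨j, hjN, rfl⟩ := hsurj y
      have hja1 : j ≠ a + 1 := by rintro rfl; exact G.ne_of_adj hy rfl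
      have hja : j ≠ a := by rintro rfl; exact hnadj hy.symm
      rcases Nat.eq_or_lt_of_le (Nat.zero_le j) with hj0 | hj0
      · rw [← hj0]
        exact Finset.mem_union_right _ (Finset.mem_singleton_self _)
      rcases Nat.lt_or_ge j (a+1) with hj | hj
      · apply Finset.mem_union_left
        apply Finset.mem_union_left
        refine Finset.mem_image.mpr ⟨j, ?_, rfl⟩
        rw [hB, Finset.mem_filter, Finset.mem_Icc]
        exact ⟨⟨by omega, by omega⟩, hy.symm⟩
      · apply Finset.mem_union_left
        apply Finset.mem_union_right
        refine Finset.mem_image.mpr ⟨j-1, ?_, by congr 1; omega⟩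
        rw [hD, Finset.mem_filter, Finset.mem_Ico]
        refine ⟨⟨by omega, by omega⟩, ?_⟩
        have : j - 1 + 1 = j := by omega
        rw [this]
        exact hy
    calc G.degree (x (a+1)) ≤ ((B.image x ∪ D.image (fun j => x (j+1))) ∪ {x 0}).card :=
          deg_le_of_nbr_subset _ _ hsub
    _ ≤ (B.image x ∪ D.image (fun j => x (j+1))).card + 1 := by
          refine le_trans (Finset.card_union_le _ _) ?_
          simp
    _ ≤ B.card + D.card + 1 := by
          have := Finset.card_union_le (B.image x) (D.image (fun j => x (j+1)))
          have h1 := Finset.card_image_le (s := B) (f := x)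
          have h2 := Finset.card_image_le (s := D) (f := fun j => x (j+1))
          omega
  have := hsum (x a) (x (a+1))
  omega


lemma one_seg (G : SimpleGraph V) (x : ℕ → V) {w : ℕ}
    (hinj : ∀ i j, i ≤ w → j ≤ w → x i = x j → i = j)
    (h : ∀ i, i < w → G.Adj (x i) (x (i+1))) :
    ∃ pth : G.Walk (x 0) (x w), pth.IsPath ∧ pth.length = w := by
  have hch : List.Chain' G.Adj ((List.range' 0 (w+1)).map x) := by
    rw [List.Chain', List.isChain_map]
    exact chain'_range1 _ _ (fun i hi hi' => h i (by omega))
  have hnd : ((List.range' 0 (w+1)).map x).Nodup := by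
    refine List.Nodup.map_on ?_ (List.nodup_range')
    intro i hi j hj hxy
    rw [mem_range1] at hi hj
    exact hinj i j (by omega) (by omega) hxy
  have hhd : ((List.range' 0 (w+1)).map x).head? = some (x 0) := by
    rw [List.head?_map, head?_range1 (by omega)]; rfl
  have hlast : ((List.range' 0 (w+1)).map x).getLast? = some (x w) := by
    rw [List.getLast?_map, getLast?_range1 (by omega)]
    simp
  obtain ⟨pth, h1, h2⟩ := exists_path_of_list G _ _ _ hch hnd hhd hlast
  refine ⟨pth, h1, ?_⟩
  rw [List.length_map, List.length_range'] at h2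
  omega

lemma ham_of_complete (G' : SimpleGraph V) [Fintype V] [DecidableEq V]
    (hc : ∀ x y : V, x ≠ y → G'.Adj x y)
    (u v : V) (huv : u ≠ v) : ∃ p : G'.Walk u v, p.IsPath ∧ p.length + 1 = Fintype.card V := by
  have hcard2 : 2 ≤ Fintype.card V := Fintype.one_lt_card_iff_nontrivial.mpr ⟨⟨u, v, huv⟩⟩
  set mid : List V := ((Finset.univ.erase u).erase v).toList with hmid
  have hvmem : v ∈ Finset.univ.erase u := Finset.mem_erase.mpr ⟨Ne.symm huv, Finset.mem_univ v⟩
  have hmidlen : mid.length = Fintype.card V - 2 := by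
    rw [hmid, Finset.length_toList, Finset.card_erase_of_mem hvmem,
      Finset.card_erase_of_mem (Finset.mem_univ u)]
    rfl
  have humid : u ∉ mid := by
    rw [hmid]
    intro h
    rw [Finset.mem_toList] at h
    exact (Finset.mem_erase.mp ((Finset.mem_erase.mp h).2)).1 rfl
  have hvmid : v ∉ mid := by
    rw [hmid]
    intro h
    rw [Finset.mem_toList] at h
    exact (Finset.mem_erase.mp h).1 rfl
  set l : List V := u :: (mid ++ [v]) with hl
  have hnd : l.Nodup := by
    rw [hl, List.nodup_cons, List.nodup_append']
    refine ⟨?_, Finset.nodup_toList _, by simp, ?_⟩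
    · rw [List.mem_append]
      rintro (h | h)
      · exact humid h
      · simp only [List.mem_singleton] at h
        exact huv h
    · intro c hc hc2
      simp only [List.mem_singleton] at hc2
      subst hc2
      exact hvmid hc
  have hch : List.Chain' G'.Adj l := by
    refine List.IsChain.imp ?_ (List.Pairwise.isChain hnd)
    intro a b hab
    exact hc a b hab
  have hhd : l.head? = some u := rfl
  have hlast : l.getLast? = some v := by
    rw [hl]
    have : u :: (mid ++ [v]) = (u :: mid) ++ [v] := by simp
    rw [this, List.getLast?_concat]
  obtain ⟨p, h1, h2⟩ := exists_path_of_list G' _ _ _ hch hnd hhd hlast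
  refine ⟨p, h1, ?_⟩
  rw [h2, hl]
  simp only [List.length_cons, List.length_append, List.length_singleton, List.length_nil, hmidlen]
  omega

lemma ham_aux [Fintype V] [DecidableEq V] (k : ℕ) :
    ∀ (G' : SimpleGraph V) (instA : DecidableRel G'.Adj),
      ((Finset.univ.filter (fun e : V × V => e.1 ≠ e.2 ∧ ¬ G'.Adj e.1 e.2)).card ≤ k) →
      (∀ a b : V, Fintype.card V + 2 ≤ G'.degree a + G'.degree b) →
      ∀ u v : V, u ≠ v → ∃ p : G'.Walk u v, p.IsPath ∧ p.length + 1 = Fintype.card V := by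
  induction k with
  | zero =>
    intro G' instA hcard hsum u v huv
    refine ham_of_complete G' ?_ u v huv
    intro x y hxy
    by_contra hn
    have : (x, y) ∈ Finset.univ.filter (fun e : V × V => e.1 ≠ e.2 ∧ ¬ G'.Adj e.1 e.2) := by
      rw [Finset.mem_filter]
      exact ⟨Finset.mem_univ _, hxy, hn⟩
    have := Finset.card_pos.mpr ⟨_, this⟩
    omega
  | succ k ih =>
    intro G' instA hcard hsum u v huv
    by_cases hcomp : ∀ x y : V, x ≠ y → G'.Adj x y
    · exact ham_of_complete G' hcomp u v huv
    push_neg at hcomp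
    obtain ⟨y₁, y₂, hy12, hnadj12⟩ := hcomp
    set G'' : SimpleGraph V := G' ⊔ SimpleGraph.fromEdgeSet {s(y₁, y₂)} with hG''
    have hadj_iff : ∀ a b : V, G''.Adj a b ↔ (G'.Adj a b ∨ (s(a,b) = s(y₁,y₂) ∧ a ≠ b)) := by
      intro a b
      rw [hG'', SimpleGraph.sup_adj, SimpleGraph.fromEdgeSet_adj]
      simp
    have instB : DecidableRel G''.Adj := fun a b =>
      decidable_of_iff _ (hadj_iff a b).symm
    have hmono : ∀ a b : V, G'.Adj a b → G''.Adj a b := by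
      intro a b h
      exact (hadj_iff a b).mpr (Or.inl h)
    have hcard'' : (Finset.univ.filter (fun e : V × V => e.1 ≠ e.2 ∧ ¬ G''.Adj e.1 e.2)).card ≤ k := by
      have hss : (Finset.univ.filter (fun e : V × V => e.1 ≠ e.2 ∧ ¬ G''.Adj e.1 e.2)) ⊂
          (Finset.univ.filter (fun e : V × V => e.1 ≠ e.2 ∧ ¬ G'.Adj e.1 e.2)) := by
        rw [Finset.ssubset_iff_of_subset]
        · refine ⟨(y₁, y₂), ?_, ?_⟩
          · rw [Finset.mem_filter]
            exact ⟨Finset.mem_univ _, hy12, hnadj12⟩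
          · rw [Finset.mem_filter]
            push_neg
            intro _ _
            simp only [not_not]
            exact (hadj_iff y₁ y₂).mpr (Or.inr ⟨rfl, hy12⟩)
        · intro e he
          rw [Finset.mem_filter] at he ⊢
          exact ⟨he.1, he.2.1, fun h => he.2.2 (hmono _ _ h)⟩
      have := Finset.card_lt_card hss
      omega
    have hsum'' : ∀ a b : V, Fintype.card V + 2 ≤ G''.degree a + G''.degree b := by
      intro a b
      have h1 : G'.degree a ≤ G''.degree a := by
        refine Finset.card_le_card ?_
        intro z hz
        rw [SimpleGraph.mem_neighborFinset] at hz ⊢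
        exact hmono _ _ hz
      have h2 : G'.degree b ≤ G''.degree b := by
        refine Finset.card_le_card ?_
        intro z hz
        rw [SimpleGraph.mem_neighborFinset] at hz ⊢
        exact hmono _ _ hz
      have := hsum a b
      omega
    obtain ⟨p'', hp''path, hp''len⟩ := ih G'' instB hcard'' hsum'' u v huv
    obtain ⟨x, hx0, hxm, hxadj, hxinj, hxmem⟩ := walk_to_fun G'' p'' hp''path (m := p''.length) rfl
    set m : ℕ := p''.length with hm
    have hNcard : Fintype.card V = m + 1 := hp''len.symm
    have hsurj : ∀ z : V, ∃ i, i ≤ m ∧ x i = z := by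
      intro z
      rw [hxmem z]
      have hnd : p''.support.Nodup := hp''path.support_nodup
      have : p''.support.toFinset = Finset.univ := by
        refine Finset.eq_univ_of_card _ ?_
        rw [List.toFinset_card_of_nodup hnd, Walk.length_support, hNcard]
      have : z ∈ p''.support.toFinset := by rw [this]; exact Finset.mem_univ z
      rwa [List.mem_toFinset] at this
    by_cases hbad : ∃ a, a < m ∧ ¬ G'.Adj (x a) (x (a+1))
    · obtain ⟨a, ham, hnadj⟩ := hbad
      have hpivot : s(x a, x (a+1)) = s(y₁, y₂) := by
        have := hxadj a ham
        rw [hadj_iff] at this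
        rcases this with h | h
        · exact absurd h hnadj
        · exact h.1
      have hadjG' : ∀ j, j < m → j ≠ a → G'.Adj (x j) (x (j+1)) := by
        intro j hj hja
        have := hxadj j hj
        rw [hadj_iff] at this
        rcases this with h | h
        · exact h
        · exfalso
          have hjj : s(x j, x (j+1)) = s(x a, x (a+1)) := by rw [h.1, hpivot]
          rw [Sym2.eq_iff] at hjj
          rcases hjj with ⟨h1, h2⟩ | ⟨h1, h2⟩
          · exact hja (hxinj j a (by omega) (by omega) h1)
          · have e1 := hxinj j (a+1) (by omega) (by omega) h1
            have e2 := hxinj (j+1) a (by omega) (by omega) h2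
            omega
      obtain ⟨pth, h1, h2⟩ := crossing G' hNcard hsum x hxinj hsurj a (by omega) hadjG'
        (by
          intro hadjaa
          exact hnadj hadjaa)
      rw [← hx0, ← hxm]
      exact ⟨pth, h1, by omega⟩
    · push_neg at hbad
      obtain ⟨pth, h1, h2⟩ := one_seg G' x hxinj hbad
      rw [← hx0, ← hxm]
      exact ⟨pth, h1, by omega⟩

lemma ham_conn (G : SimpleGraph V) [Fintype V] [DecidableRel G.Adj]
    (hsum : ∀ a b : V, Fintype.card V + 2 ≤ G.degree a + G.degree b)
    (u v : V) (huv : u ≠ v) : ∃ p : G.Walk u v, p.IsPath ∧ p.length + 1 = Fintype.card V := by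
  classical
  exact ham_aux _ G inferInstance le_rfl hsum u v huv


lemma step_down (G : SimpleGraph V) [Fintype V] [DecidableRel G.Adj]
    (hsum : ∀ a b : V, Fintype.card V + 2 ≤ G.degree a + G.degree b)
    (u v : V) (m : ℕ) (hm : 5 ≤ m)
    (hpath : ∃ p : G.Walk u v, p.IsPath ∧ p.length = m) :
    ∃ p : G.Walk u v, p.IsPath ∧ p.length = m - 1 := by
  classical
  by_contra hnone
  obtain ⟨p, hp, hpl⟩ := hpath
  obtain ⟨x, hx0, hxm, hxadj, hxinj, hxmem⟩ := walk_to_fun G p hp hpl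
  rw [← hx0, ← hxm] at hnone
  -- the on-path vertex set
  set Pfin : Finset V := (Finset.range (m+1)).image x with hPfin
  have hmemP : ∀ y : V, y ∈ Pfin ↔ ∃ j, j ≤ m ∧ x j = y := by
    intro y
    rw [hPfin, Finset.mem_image]
    constructor
    · rintro ⟨j, hj, rfl⟩
      exact ⟨j, by have := Finset.mem_range.mp hj; omega, rfl⟩
    · rintro ⟨j, hj, rfl⟩
      exact ⟨j, Finset.mem_range.mpr (by omega), rfl⟩
  have hPcard : Pfin.card = m + 1 := by
    rw [hPfin, Finset.card_image_of_injOn, Finset.card_range]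
    intro i hi j hj hxy
    simp only [Finset.coe_range, Set.mem_Iio] at hi hj
    exact hxinj i j (by omega) (by omega) hxy
  have hPle : m + 1 ≤ Fintype.card V := by
    rw [← hPcard]
    exact Finset.card_le_univ _
  -- moves
  have hne02 : ¬ G.Adj (x 0) (x 2) := by
    intro h
    obtain ⟨pth, h1, h2⟩ := three_seg G x (p := 0) (q := 0) (r := 2) (s := 2) (t := 3) (w := m)
      (by omega) (by omega) (by omega) (by omega) (by omega) hxinj
      (fun i hi hi' => by omega) (fun i hi hi' => by omega)
      (fun i hi hi' => hxadj i (by omega)) h (hxadj 2 (by omega))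
    exact hnone ⟨pth, h1, by omega⟩
  have hD1 : ∀ t, 2 ≤ t → t ≤ m - 1 → ¬(G.Adj (x 0) (x t) ∧ G.Adj (x 2) (x (t+1))) := by
    rintro t ht1 ht2 ⟨hA, hB⟩
    obtain ⟨pth, h1, h2⟩ := three_seg G x (p := 0) (q := 0) (r := 2) (s := t) (t := t+1) (w := m)
      (by omega) (by omega) (by omega) (by omega) (by omega) hxinj
      (fun i hi hi' => by omega) (fun i hi hi' => hxadj i (by omega))
      (fun i hi hi' => hxadj i (by omega)) hA hB
    exact hnone ⟨pth, h1, by omega⟩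
  have hD2 : ∀ t, 5 ≤ t → t ≤ m - 1 → ¬(G.Adj (x 3) (x t) ∧ G.Adj (x 5) (x (t+1))) := by
    rintro t ht1 ht2 ⟨hA, hB⟩
    obtain ⟨pth, h1, h2⟩ := three_seg G x (p := 0) (q := 3) (r := 5) (s := t) (t := t+1) (w := m)
      (by omega) (by omega) (by omega) (by omega) (by omega) hxinj
      (fun i hi hi' => hxadj i (by omega)) (fun i hi hi' => hxadj i (by omega))
      (fun i hi hi' => hxadj i (by omega)) hA hB
    exact hnone ⟨pth, h1, by omega⟩
  have hD3 : ∀ s, s ≤ 2 → ¬(G.Adj (x s) (x 3) ∧ G.Adj (x (s+1)) (x 5)) := by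
    rintro s hs ⟨hA, hB⟩
    obtain ⟨pth, h1, h2⟩ := three_seg G x (p := 0) (q := s) (r := s+1) (s := 3) (t := 5) (w := m)
      (by omega) (by omega) (by omega) (by omega) (by omega) hxinj
      (fun i hi hi' => hxadj i (by omega)) (fun i hi hi' => hxadj i (by omega))
      (fun i hi hi' => hxadj i (by omega)) hA hB
    exact hnone ⟨pth, h1, by omega⟩
  have hD4 : ∀ a (z : V), a + 3 ≤ m → z ∉ Pfin → ¬(G.Adj (x a) z ∧ G.Adj z (x (a+3))) := by
    rintro a z ha hz ⟨hA, hB⟩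
    obtain ⟨pth, h1, h2⟩ := seg_z G x z (a := a) (b := a+3) (w := m)
      (by omega) (by omega) hxinj
      (fun i hi heq => hz ((hmemP z).mpr ⟨i, hi, heq.symm⟩))
      (fun i hi => hxadj i (by omega)) (fun i hi hi' => hxadj i (by omega)) hA hB
    exact hnone ⟨pth, h1, by omega⟩
  -- index sets
  set A1 : Finset ℕ := (Finset.Ico 2 m).filter (fun t => G.Adj (x 0) (x t)) with hA1
  set B1 : Finset ℕ := (Finset.Ico 2 m).filter (fun t => G.Adj (x 2) (x (t+1))) with hB1
  set A4 : Finset ℕ := (Finset.Ico 5 m).filter (fun t => G.Adj (x 3) (x t)) with hA4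
  set B4 : Finset ℕ := (Finset.Ico 5 m).filter (fun t => G.Adj (x 5) (x (t+1))) with hB4
  set A4' : Finset ℕ := (Finset.range 3).filter (fun s => G.Adj (x s) (x 3)) with hA4'
  set B4' : Finset ℕ := (Finset.range 3).filter (fun s => G.Adj (x (s+1)) (x 5)) with hB4'
  have hc1 : A1.card + B1.card ≤ m - 2 := by
    have := card_filter_disj (s := Finset.Ico 2 m)
      (p := fun t => G.Adj (x 0) (x t)) (q := fun t => G.Adj (x 2) (x (t+1)))
      (fun t ht hpq => hD1 t (Finset.mem_Ico.mp ht).1 (by have := (Finset.mem_Ico.mp ht).2; omega) hpq)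
    rw [Nat.card_Ico] at this
    exact this
  have hc4 : A4.card + B4.card ≤ m - 5 := by
    have := card_filter_disj (s := Finset.Ico 5 m)
      (p := fun t => G.Adj (x 3) (x t)) (q := fun t => G.Adj (x 5) (x (t+1)))
      (fun t ht hpq => hD2 t (Finset.mem_Ico.mp ht).1 (by have := (Finset.mem_Ico.mp ht).2; omega) hpq)
    rw [Nat.card_Ico] at this
    exact this
  have hc4' : A4'.card + B4'.card ≤ 3 := by
    have := card_filter_disj (s := Finset.range 3)
      (p := fun s => G.Adj (x s) (x 3)) (q := fun s => G.Adj (x (s+1)) (x 5))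
      (fun s hs hpq => hD3 s (by have := Finset.mem_range.mp hs; omega) hpq)
    rw [Finset.card_range] at this
    exact this
  -- degrees decomposition
  have hdeg : ∀ a : ℕ, G.degree (x a) =
      (G.neighborFinset (x a) ∩ Pfin).card + (G.neighborFinset (x a) \ Pfin).card := by
    intro a
    rw [← SimpleGraph.card_neighborFinset_eq_degree]
    exact (Finset.card_inter_add_card_sdiff _ _).symm
  -- on-path bounds
  have hon0 : (G.neighborFinset (x 0) ∩ Pfin).card ≤ A1.card + 2 := by
    have hsub : G.neighborFinset (x 0) ∩ Pfin ⊆ A1.image x ∪ {x 1, x m} := by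
      intro y hy
      rw [Finset.mem_inter, SimpleGraph.mem_neighborFinset] at hy
      obtain ⟨j, hj, rfl⟩ := (hmemP y).mp hy.2
      have hj0 : j ≠ 0 := by rintro rfl; exact G.ne_of_adj hy.1 rfl
      rcases Nat.lt_or_ge j 2 with h | h
      · have : j = 1 := by omega
        subst this
        exact Finset.mem_union_right _ (by simp)
      rcases Nat.lt_or_ge j m with h' | h'
      · refine Finset.mem_union_left _ (Finset.mem_image.mpr ⟨j, ?_, rfl⟩)
        rw [hA1, Finset.mem_filter, Finset.mem_Ico]
        exact ⟨⟨h, h'⟩, hy.1⟩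
      · have : j = m := by omega
        subst this
        exact Finset.mem_union_right _ (by simp)
    calc (G.neighborFinset (x 0) ∩ Pfin).card ≤ (A1.image x ∪ {x 1, x m}).card :=
          Finset.card_le_card hsub
    _ ≤ (A1.image x).card + ({x 1, x m} : Finset V).card := Finset.card_union_le _ _
    _ ≤ A1.card + 2 := by
        have h1 := Finset.card_image_le (s := A1) (f := x)
        have h2 : ({x 1, x m} : Finset V).card ≤ 2 := le_trans (Finset.card_insert_le _ _) (by simp)
        omega
  have hon2 : (G.neighborFinset (x 2) ∩ Pfin).card ≤ B1.card + 1 := by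
    have hsub : G.neighborFinset (x 2) ∩ Pfin ⊆ B1.image (fun t => x (t+1)) ∪ {x 1} := by
      intro y hy
      rw [Finset.mem_inter, SimpleGraph.mem_neighborFinset] at hy
      obtain ⟨j, hj, rfl⟩ := (hmemP y).mp hy.2
      have hj2 : j ≠ 2 := by rintro rfl; exact G.ne_of_adj hy.1 rfl
      have hj0 : j ≠ 0 := by rintro rfl; exact hne02 hy.1.symm
      rcases Nat.lt_or_ge j 2 with h | h
      · have : j = 1 := by omega
        subst this
        exact Finset.mem_union_right _ (by simp)
      · refine Finset.mem_union_left _ (Finset.mem_image.mpr ⟨j-1, ?_, by congr 1; omega⟩)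
        rw [hB1, Finset.mem_filter, Finset.mem_Ico]
        have hj1 : j - 1 + 1 = j := by omega
        refine ⟨⟨by omega, by omega⟩, ?_⟩
        rw [hj1]
        exact hy.1
    calc (G.neighborFinset (x 2) ∩ Pfin).card ≤ (B1.image (fun t => x (t+1)) ∪ {x 1}).card :=
          Finset.card_le_card hsub
    _ ≤ (B1.image (fun t => x (t+1))).card + 1 := by
        refine le_trans (Finset.card_union_le _ _) ?_
        simp
    _ ≤ B1.card + 1 := by
        have := Finset.card_image_le (s := B1) (f := fun t => x (t+1))
        omega
  have hon3 : (G.neighborFinset (x 3) ∩ Pfin).card ≤ A4'.card + A4.card + 2 := by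
    have hsub : G.neighborFinset (x 3) ∩ Pfin ⊆ (A4'.image x ∪ A4.image x) ∪ {x 4, x m} := by
      intro y hy
      rw [Finset.mem_inter, SimpleGraph.mem_neighborFinset] at hy
      obtain ⟨j, hj, rfl⟩ := (hmemP y).mp hy.2
      have hj3 : j ≠ 3 := by rintro rfl; exact G.ne_of_adj hy.1 rfl
      rcases Nat.lt_or_ge j 3 with h | h
      · refine Finset.mem_union_left _ (Finset.mem_union_left _ (Finset.mem_image.mpr ⟨j, ?_, rfl⟩))
        rw [hA4', Finset.mem_filter, Finset.mem_range]
        exact ⟨h, hy.1.symm⟩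
      rcases Nat.eq_or_lt_of_le h with h' | h'
      · omega
      rcases Nat.lt_or_ge j 5 with h'' | h''
      · have : j = 4 := by omega
        subst this
        exact Finset.mem_union_right _ (by simp)
      rcases Nat.lt_or_ge j m with h''' | h'''
      · refine Finset.mem_union_left _ (Finset.mem_union_right _ (Finset.mem_image.mpr ⟨j, ?_, rfl⟩))
        rw [hA4, Finset.mem_filter, Finset.mem_Ico]
        exact ⟨⟨h'', h'''⟩, hy.1⟩
      · have : j = m := by omega
        subst this
        exact Finset.mem_union_right _ (by simp)
    calc (G.neighborFinset (x 3) ∩ Pfin).card ≤ ((A4'.image x ∪ A4.image x) ∪ {x 4, x m}).card :=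
          Finset.card_le_card hsub
    _ ≤ (A4'.image x ∪ A4.image x).card + ({x 4, x m} : Finset V).card := Finset.card_union_le _ _
    _ ≤ A4'.card + A4.card + 2 := by
        have h0 := Finset.card_union_le (A4'.image x) (A4.image x)
        have h1 := Finset.card_image_le (s := A4') (f := x)
        have h2 := Finset.card_image_le (s := A4) (f := x)
        have h3 : ({x 4, x m} : Finset V).card ≤ 2 := le_trans (Finset.card_insert_le _ _) (by simp)
        omega
  have hon5 : (G.neighborFinset (x 5) ∩ Pfin).card ≤ B4'.card + B4.card + 2 := by
    have hsub : G.neighborFinset (x 5) ∩ Pfin ⊆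
        (B4'.image (fun s => x (s+1)) ∪ B4.image (fun t => x (t+1))) ∪ {x 4, x 0} := by
      intro y hy
      rw [Finset.mem_inter, SimpleGraph.mem_neighborFinset] at hy
      obtain ⟨j, hj, rfl⟩ := (hmemP y).mp hy.2
      have hj5 : j ≠ 5 := by rintro rfl; exact G.ne_of_adj hy.1 rfl
      rcases Nat.eq_or_lt_of_le (Nat.zero_le j) with h0 | h0
      · rw [← h0]
        exact Finset.mem_union_right _ (by simp)
      rcases Nat.lt_or_ge j 4 with h | h
      · refine Finset.mem_union_left _ (Finset.mem_union_left _
          (Finset.mem_image.mpr ⟨j-1, ?_, by congr 1; omega⟩))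
        rw [hB4', Finset.mem_filter, Finset.mem_range]
        have hj1 : j - 1 + 1 = j := by omega
        refine ⟨by omega, ?_⟩
        rw [hj1]
        exact hy.1.symm
      rcases Nat.lt_or_ge j 5 with h' | h'
      · have : j = 4 := by omega
        subst this
        exact Finset.mem_union_right _ (by simp)
      · refine Finset.mem_union_left _ (Finset.mem_union_right _
          (Finset.mem_image.mpr ⟨j-1, ?_, by congr 1; omega⟩))
        rw [hB4, Finset.mem_filter, Finset.mem_Ico]
        have hj1 : j - 1 + 1 = j := by omega
        refine ⟨⟨by omega, by omega⟩, ?_⟩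
        rw [hj1]
        exact hy.1
    calc (G.neighborFinset (x 5) ∩ Pfin).card ≤
        ((B4'.image (fun s => x (s+1)) ∪ B4.image (fun t => x (t+1))) ∪ {x 4, x 0}).card :=
          Finset.card_le_card hsub
    _ ≤ (B4'.image (fun s => x (s+1)) ∪ B4.image (fun t => x (t+1))).card
          + ({x 4, x 0} : Finset V).card := Finset.card_union_le _ _
    _ ≤ B4'.card + B4.card + 2 := by
        have h0 := Finset.card_union_le (B4'.image (fun s => x (s+1))) (B4.image (fun t => x (t+1)))
        have h1 := Finset.card_image_le (s := B4') (f := fun s => x (s+1))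
        have h2 := Finset.card_image_le (s := B4) (f := fun t => x (t+1))
        have h3 : ({x 4, x 0} : Finset V).card ≤ 2 := le_trans (Finset.card_insert_le _ _) (by simp)
        omega
  -- off-path disjointness
  have hoff : ∀ a : ℕ, a + 3 ≤ m →
      (G.neighborFinset (x a) \ Pfin).card + (G.neighborFinset (x (a+3)) \ Pfin).card
        ≤ Fintype.card V - (m+1) := by
    intro a ha
    have hdisj : Disjoint (G.neighborFinset (x a) \ Pfin) (G.neighborFinset (x (a+3)) \ Pfin) := by
      rw [Finset.disjoint_left]
      intro z hz1 hz2
      rw [Finset.mem_sdiff, SimpleGraph.mem_neighborFinset] at hz1 hz2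
      exact hD4 a z ha hz1.2 ⟨hz1.1, hz2.1.symm⟩
    rw [← Finset.card_union_of_disjoint hdisj]
    have hsub : (G.neighborFinset (x a) \ Pfin) ∪ (G.neighborFinset (x (a+3)) \ Pfin)
        ⊆ Finset.univ \ Pfin := by
      intro z hz
      rw [Finset.mem_union, Finset.mem_sdiff, Finset.mem_sdiff] at hz
      rw [Finset.mem_sdiff]
      rcases hz with h | h
      · exact ⟨Finset.mem_univ _, h.2⟩
      · exact ⟨Finset.mem_univ _, h.2⟩
    calc ((G.neighborFinset (x a) \ Pfin) ∪ (G.neighborFinset (x (a+3)) \ Pfin)).card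
        ≤ (Finset.univ \ Pfin).card := Finset.card_le_card hsub
    _ = Fintype.card V - (m+1) := by
        rw [Finset.card_sdiff_of_subset (Finset.subset_univ _), Finset.card_univ, hPcard]
  have hoff03 : (G.neighborFinset (x 0) \ Pfin).card + (G.neighborFinset (x 3) \ Pfin).card
      ≤ Fintype.card V - (m+1) := hoff 0 (by omega)
  have hoff25 : (G.neighborFinset (x 2) \ Pfin).card + (G.neighborFinset (x 5) \ Pfin).card
      ≤ Fintype.card V - (m+1) := hoff 2 (by omega)
  have hs02 := hsum (x 0) (x 2)
  have hs35 := hsum (x 3) (x 5)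
  have hd0 := hdeg 0
  have hd2 := hdeg 2
  have hd3 := hdeg 3
  have hd5 := hdeg 5
  omega


lemma two_common (G : SimpleGraph V) [Fintype V] [DecidableEq V] [DecidableRel G.Adj]
    (hsum : ∀ a b : V, Fintype.card V + 2 ≤ G.degree a + G.degree b)
    (a b : V) : 2 ≤ (G.neighborFinset a ∩ G.neighborFinset b).card := by
  have h1 := Finset.card_inter_add_card_union (G.neighborFinset a) (G.neighborFinset b)
  have h2 : (G.neighborFinset a ∪ G.neighborFinset b).card ≤ Fintype.card V :=
    Finset.card_le_univ _
  have h3 := hsum a b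
  rw [← SimpleGraph.card_neighborFinset_eq_degree, ← SimpleGraph.card_neighborFinset_eq_degree] at h3
  omega

lemma base_two (G : SimpleGraph V) [Fintype V] [DecidableRel G.Adj]
    (hsum : ∀ a b : V, Fintype.card V + 2 ≤ G.degree a + G.degree b)
    (u v : V) (huv : u ≠ v) : ∃ p : G.Walk u v, p.IsPath ∧ p.length = 2 := by
  classical
  have h2 := two_common G hsum u v
  have hpos : 0 < (G.neighborFinset u ∩ G.neighborFinset v).card := by omega
  obtain ⟨w, hw⟩ := Finset.card_pos.mp hpos
  rw [Finset.mem_inter, SimpleGraph.mem_neighborFinset, SimpleGraph.mem_neighborFinset] at hw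
  have huw : G.Adj u w := hw.1
  have hwv : G.Adj w v := hw.2.symm
  have hch : List.Chain' G.Adj [u, w, v] := by
    rw [List.Chain', List.isChain_cons_cons, List.isChain_cons_cons]
    exact ⟨huw, hwv, by simp⟩
  have hnd : ([u, w, v] : List V).Nodup := by
    have n1 := G.ne_of_adj huw
    have n2 := G.ne_of_adj hwv
    simp [n1, n2, huv]
  obtain ⟨p, h1, hlen⟩ := exists_path_of_list G [u, w, v] u v hch hnd rfl rfl
  exact ⟨p, h1, by simp at hlen; omega⟩

lemma base_three (G : SimpleGraph V) [Fintype V] [DecidableRel G.Adj]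
    (hsum : ∀ a b : V, Fintype.card V + 2 ≤ G.degree a + G.degree b)
    (u v : V) (huv : u ≠ v) : ∃ p : G.Walk u v, p.IsPath ∧ p.length = 3 := by
  classical
  -- a : common neighbor of u and v
  have h2v := two_common G hsum u v
  have hpos : 0 < (G.neighborFinset u ∩ G.neighborFinset v).card := by omega
  obtain ⟨a, ha⟩ := Finset.card_pos.mp hpos
  rw [Finset.mem_inter, SimpleGraph.mem_neighborFinset, SimpleGraph.mem_neighborFinset] at ha
  have hua : G.Adj u a := ha.1
  have hav : G.Adj a v := ha.2.symm
  -- b : common neighbor of u and a distinct from v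
  have h2 := two_common G hsum u a
  have h1lt : 1 < (G.neighborFinset u ∩ G.neighborFinset a).card := by omega
  obtain ⟨b, hb, hbv⟩ := Finset.exists_mem_ne h1lt v
  rw [Finset.mem_inter, SimpleGraph.mem_neighborFinset, SimpleGraph.mem_neighborFinset] at hb
  have hub : G.Adj u b := hb.1
  have hba : G.Adj b a := hb.2.symm
  have hch : List.Chain' G.Adj [u, b, a, v] := by
    rw [List.Chain', List.isChain_cons_cons, List.isChain_cons_cons, List.isChain_cons_cons]
    exact ⟨hub, hba, hav, by simp⟩
  have hnd : ([u, b, a, v] : List V).Nodup := by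
    have n1 := G.ne_of_adj hub
    have n2 := G.ne_of_adj hua
    have n3 := G.ne_of_adj hba
    have n4 := G.ne_of_adj hav
    simp [n1, n2, n3, n4, huv, hbv]
  obtain ⟨p, h1, hlen⟩ := exists_path_of_list G [u, b, a, v] u v hch hnd rfl rfl
  exact ⟨p, h1, by simp at hlen; omega⟩
end PanAux


theorem stmt_13 [Fintype V] (G : SimpleGraph V) [DecidableRel G.Adj]
    (hδ : ((Fintype.card V : ℝ) + 2) / 2 ≤ G.minDegree) :
    ∀ u v : V, u ≠ v → ∀ ℓ : ℕ, 2 ≤ ℓ → ℓ ≤ Fintype.card V - 1 →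
      ∃ p : G.Walk u v, p.IsPath ∧ p.length = ℓ := by
  intro u v huv ℓ hℓ2 hℓn
  classical
  have hsum : ∀ a b : V, Fintype.card V + 2 ≤ G.degree a + G.degree b := by
    have hr : (Fintype.card V + 2 : ℝ) ≤ 2 * G.minDegree := by linarith
    have hn : Fintype.card V + 2 ≤ 2 * G.minDegree := by exact_mod_cast hr
    intro a b
    have ha := G.minDegree_le_degree a
    have hb := G.minDegree_le_degree b
    omega
  have hn4 : 4 ≤ Fintype.card V := by
    have h1 := hsum u u
    have h2 := G.degree_lt_card_verts u
    omega
  have key : ∀ k : ℕ, k + 5 ≤ Fintype.card V →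
      ∃ p : G.Walk u v, p.IsPath ∧ p.length = Fintype.card V - 1 - k := by
    intro k
    induction k with
    | zero =>
      intro _
      obtain ⟨p, h1, h2⟩ := PanAux.ham_conn G hsum u v huv
      exact ⟨p, h1, by omega⟩
    | succ k ih =>
      intro hk
      obtain ⟨p, h1, h2⟩ := PanAux.step_down G hsum u v (Fintype.card V - 1 - k) (by omega)
        (ih (by omega))
      exact ⟨p, h1, by omega⟩
  by_cases h4 : 4 ≤ ℓ
  · obtain ⟨p, h1, h2⟩ := key (Fintype.card V - 1 - ℓ) (by omega)
    exact ⟨p, h1, by omega⟩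
  · by_cases h3 : ℓ = 3
    · subst h3
      exact PanAux.base_three G hsum u v huv
    · have hl2 : ℓ = 2 := by omega
      subst hl2
      exact PanAux.base_two G hsum u v huv
end
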